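/- arXiv:1007.0673 — 11 statements merged into one kernel-verified Lean document; each statement's English description precedes it below -/
import Mathlib

section
/- Let Φ = (φ_n) and Ψ = (ψ_n) be Bessel sequences for a complex Hilbert space H with bounds B_Φ and B_Ψ, and let m : ℕ → ℂ be a bounded sequence. Then for every f ∈ H the family (m_n ⟨f, ψ_n⟩ φ_n)_{n∈ℕ} is unconditionally summable in H, and the map f ↦ ∑_n m_n ⟨f, ψ_n⟩ φ_n is a bounded linear operator from H to H. -/
open Finset in
/-- Key synthesis bound: for a Bessel sequence `φ` with bound `BΦ`, any finite sum
`∑ n in t, c n • φ n` has norm at most `√BΦ * √(∑ n in t, ‖c n‖²)`. -/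
lemma bessel_finset_bound
    {H : Type*} [NormedAddCommGroup H] [InnerProductSpace ℂ H]
    (φ : ℕ → H) (BΦ : ℝ)
    (hΦ : ∀ h : H, Summable (fun n => ‖(inner ℂ (φ n) h : ℂ)‖ ^ 2) ∧
      ∑' n, ‖(inner ℂ (φ n) h : ℂ)‖ ^ 2 ≤ BΦ * ‖h‖ ^ 2)
    (c : ℕ → ℂ) (t : Finset ℕ) :
    ‖∑ n ∈ t, c n • φ n‖ ≤ Real.sqrt BΦ * Real.sqrt (∑ n ∈ t, ‖c n‖ ^ 2) := by
  set h : H := ∑ n ∈ t, c n • φ n with hh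
  rcases eq_or_ne ‖h‖ 0 with h0 | h0
  · rw [h0]
    positivity
  have hinner : (inner ℂ h h : ℂ) = ∑ n ∈ t, (starRingEnd ℂ) (c n) * inner ℂ (φ n) h := by
    rw [hh, sum_inner]
    simp only [inner_smul_left]
  have hsq : ‖h‖ ^ 2 ≤ ∑ n ∈ t, ‖c n‖ * ‖(inner ℂ (φ n) h : ℂ)‖ := by
    have : ‖h‖ ^ 2 = ‖(inner ℂ h h : ℂ)‖ := by
      rw [@inner_self_eq_norm_sq_to_K ℂ]
      simp
    rw [this, hinner]
    refine (norm_sum_le _ _).trans (le_of_eq ?_)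
    congr 1; ext n; simp
  have hCS : ∑ n ∈ t, ‖c n‖ * ‖(inner ℂ (φ n) h : ℂ)‖ ≤
      Real.sqrt (∑ n ∈ t, ‖c n‖ ^ 2) * Real.sqrt (∑ n ∈ t, ‖(inner ℂ (φ n) h : ℂ)‖ ^ 2) :=
    Real.sum_mul_le_sqrt_mul_sqrt t _ _
  have hbess : ∑ n ∈ t, ‖(inner ℂ (φ n) h : ℂ)‖ ^ 2 ≤ BΦ * ‖h‖ ^ 2 :=
    le_trans (Summable.sum_le_tsum t (fun n _ => by positivity) (hΦ h).1) (hΦ h).2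
  have hBnn : 0 ≤ BΦ * ‖h‖ ^ 2 := le_trans (by positivity) hbess
  have h2 : ‖h‖ ^ 2 ≤ Real.sqrt (∑ n ∈ t, ‖c n‖ ^ 2) * (Real.sqrt BΦ * ‖h‖) := by
    calc ‖h‖ ^ 2 ≤ Real.sqrt (∑ n ∈ t, ‖c n‖ ^ 2) *
          Real.sqrt (∑ n ∈ t, ‖(inner ℂ (φ n) h : ℂ)‖ ^ 2) := hsq.trans hCS
      _ ≤ Real.sqrt (∑ n ∈ t, ‖c n‖ ^ 2) * Real.sqrt (BΦ * ‖h‖ ^ 2) := by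
          gcongr
      _ = Real.sqrt (∑ n ∈ t, ‖c n‖ ^ 2) * (Real.sqrt BΦ * ‖h‖) := by
          have hpos2 : 0 < ‖h‖ ^ 2 := by positivity
          have hBφ0 : 0 ≤ BΦ := by nlinarith
          rw [Real.sqrt_mul hBφ0, Real.sqrt_sq (norm_nonneg h)]
  have hpos : 0 < ‖h‖ := lt_of_le_of_ne (norm_nonneg h) (Ne.symm h0)
  have := (mul_le_mul_iff_of_pos_right hpos).mp (by
    calc ‖h‖ * ‖h‖ = ‖h‖ ^ 2 := by ring
      _ ≤ Real.sqrt (∑ n ∈ t, ‖c n‖ ^ 2) * (Real.sqrt BΦ * ‖h‖) := h2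
      _ = Real.sqrt BΦ * Real.sqrt (∑ n ∈ t, ‖c n‖ ^ 2) * ‖h‖ := by ring)
  linarith

/-- For Bessel sequences Φ, Ψ with bounds BΦ, BΨ and bounded symbol m,
the multiplier series is unconditionally summable for every f and defines a bounded
linear operator on H. (Here ⟨f, ψ_n⟩, linear in f, is Mathlib's `inner ℂ (ψ n) f`.) -/
theorem stmt_0
    {H : Type*} [NormedAddCommGroup H] [InnerProductSpace ℂ H] [CompleteSpace H]
    (φ ψ : ℕ → H) (m : ℕ → ℂ)
    (BΦ : ℝ) (hBΦ : 0 < BΦ)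
    (hΦ : ∀ h : H, Summable (fun n => ‖(inner ℂ (φ n) h : ℂ)‖ ^ 2) ∧
      ∑' n, ‖(inner ℂ (φ n) h : ℂ)‖ ^ 2 ≤ BΦ * ‖h‖ ^ 2)
    (BΨ : ℝ) (hBΨ : 0 < BΨ)
    (hΨ : ∀ h : H, Summable (fun n => ‖(inner ℂ (ψ n) h : ℂ)‖ ^ 2) ∧
      ∑' n, ‖(inner ℂ (ψ n) h : ℂ)‖ ^ 2 ≤ BΨ * ‖h‖ ^ 2)
    (b : ℝ) (hm : ∀ n, ‖m n‖ ≤ b) :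
    (∀ f : H, Summable (fun n => (m n * (inner ℂ (ψ n) f : ℂ)) • φ n)) ∧
    ∃ T : H →L[ℂ] H, ∀ f : H, T f = ∑' n, (m n * (inner ℂ (ψ n) f : ℂ)) • φ n := by
  have hb : 0 ≤ b := le_trans (norm_nonneg (m 0)) (hm 0)
  set c : H → ℕ → ℂ := fun f n => m n * inner ℂ (ψ n) f with hc
  -- summability of coefficient squares
  have hc2 : ∀ f : H, Summable (fun n => ‖c f n‖ ^ 2) := by
    intro f
    refine Summable.of_nonneg_of_le (fun n => by positivity)
      (fun n => ?_) ((hΨ f).1.mul_left (b ^ 2))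
    have : ‖c f n‖ ≤ b * ‖(inner ℂ (ψ n) f : ℂ)‖ := by
      rw [hc]; simp only
      rw [norm_mul]
      exact mul_le_mul_of_nonneg_right (hm n) (norm_nonneg _)
    calc ‖c f n‖ ^ 2 ≤ (b * ‖(inner ℂ (ψ n) f : ℂ)‖) ^ 2 := by
          exact pow_le_pow_left₀ (norm_nonneg _) this 2
      _ = b ^ 2 * ‖(inner ℂ (ψ n) f : ℂ)‖ ^ 2 := by ring
  have hc2bound : ∀ f : H, ∑' n, ‖c f n‖ ^ 2 ≤ b ^ 2 * BΨ * ‖f‖ ^ 2 := by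
    intro f
    have h1 : ∑' n, ‖c f n‖ ^ 2 ≤ ∑' n, b ^ 2 * ‖(inner ℂ (ψ n) f : ℂ)‖ ^ 2 := by
      refine Summable.tsum_le_tsum (fun n => ?_) (hc2 f) ((hΨ f).1.mul_left (b ^ 2))
      have : ‖c f n‖ ≤ b * ‖(inner ℂ (ψ n) f : ℂ)‖ := by
        rw [hc]; simp only
        rw [norm_mul]
        exact mul_le_mul_of_nonneg_right (hm n) (norm_nonneg _)
      calc ‖c f n‖ ^ 2 ≤ (b * ‖(inner ℂ (ψ n) f : ℂ)‖) ^ 2 :=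
            pow_le_pow_left₀ (norm_nonneg _) this 2
        _ = b ^ 2 * ‖(inner ℂ (ψ n) f : ℂ)‖ ^ 2 := by ring
    rw [tsum_mul_left] at h1
    calc ∑' n, ‖c f n‖ ^ 2 ≤ b ^ 2 * ∑' n, ‖(inner ℂ (ψ n) f : ℂ)‖ ^ 2 := h1
      _ ≤ b ^ 2 * (BΨ * ‖f‖ ^ 2) := by
          exact mul_le_mul_of_nonneg_left (hΨ f).2 (by positivity)
      _ = b ^ 2 * BΨ * ‖f‖ ^ 2 := by ring
  -- summability of the series
  have hsum : ∀ f : H, Summable (fun n => c f n • φ n) := by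
    intro f
    rw [summable_iff_vanishing_norm]
    intro ε hε
    have hδ : 0 < (ε / (Real.sqrt BΦ + 1)) ^ 2 := by positivity
    obtain ⟨s, hs⟩ := summable_iff_vanishing_norm.mp (hc2 f) _ hδ
    refine ⟨s, fun t ht => ?_⟩
    have h1 : ∑ n ∈ t, ‖c f n‖ ^ 2 < (ε / (Real.sqrt BΦ + 1)) ^ 2 := by
      have := hs t ht
      calc ∑ n ∈ t, ‖c f n‖ ^ 2 ≤ ‖∑ n ∈ t, ‖c f n‖ ^ 2‖ := le_abs_self _
        _ < _ := this
    calc ‖∑ n ∈ t, c f n • φ n‖ ≤ Real.sqrt BΦ * Real.sqrt (∑ n ∈ t, ‖c f n‖ ^ 2) :=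
          bessel_finset_bound φ BΦ hΦ (c f) t
      _ ≤ Real.sqrt BΦ * (ε / (Real.sqrt BΦ + 1)) := by
          gcongr
          calc Real.sqrt (∑ n ∈ t, ‖c f n‖ ^ 2) ≤
                Real.sqrt ((ε / (Real.sqrt BΦ + 1)) ^ 2) := Real.sqrt_le_sqrt h1.le
            _ = ε / (Real.sqrt BΦ + 1) := Real.sqrt_sq (by positivity)
      _ < ε := by
          rw [mul_div_assoc', div_lt_iff₀ (by positivity)]
          have h2 : (0:ℝ) ≤ Real.sqrt BΦ := Real.sqrt_nonneg _
          nlinarith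
  -- norm bound on the tsum
  have htsum_bound : ∀ f : H, ‖∑' n, c f n • φ n‖ ≤
      Real.sqrt BΦ * Real.sqrt (∑' n, ‖c f n‖ ^ 2) := by
    intro f
    have h1 : Filter.Tendsto (fun s : Finset ℕ => ‖∑ n ∈ s, c f n • φ n‖)
        Filter.atTop (nhds ‖∑' n, c f n • φ n‖) :=
      (continuous_norm.tendsto _).comp (hsum f).hasSum
    refine le_of_tendsto h1 (Filter.Eventually.of_forall fun s => ?_)
    calc ‖∑ n ∈ s, c f n • φ n‖ ≤ Real.sqrt BΦ * Real.sqrt (∑ n ∈ s, ‖c f n‖ ^ 2) :=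
          bessel_finset_bound φ BΦ hΦ (c f) s
      _ ≤ Real.sqrt BΦ * Real.sqrt (∑' n, ‖c f n‖ ^ 2) := by
          gcongr
          exact Summable.sum_le_tsum s (fun n _ => by positivity) (hc2 f)
  refine ⟨hsum, ?_⟩
  -- build the linear map
  let L : H →ₗ[ℂ] H :=
    { toFun := fun f => ∑' n, c f n • φ n
      map_add' := by
        intro f g
        have h1 : ∀ n, c (f + g) n • φ n = c f n • φ n + c g n • φ n := by
          intro n
          simp only [hc, inner_add_right, mul_add, add_smul]
        simp only [h1]
        exact Summable.tsum_add (hsum f) (hsum g)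
      map_smul' := by
        intro a f
        have h1 : ∀ n, c (a • f) n • φ n = a • (c f n • φ n) := by
          intro n
          simp only [hc, inner_smul_right, smul_smul]
          ring_nf
        simp only [h1, RingHom.id_apply]
        exact Summable.tsum_const_smul a (hsum f) }
  refine ⟨L.mkContinuous (Real.sqrt BΦ * (b * Real.sqrt BΨ)) (fun f => ?_), fun f => rfl⟩
  calc ‖L f‖ ≤ Real.sqrt BΦ * Real.sqrt (∑' n, ‖c f n‖ ^ 2) := htsum_bound f
    _ ≤ Real.sqrt BΦ * Real.sqrt (b ^ 2 * BΨ * ‖f‖ ^ 2) := by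
        gcongr
        exact hc2bound f
    _ = Real.sqrt BΦ * (b * Real.sqrt BΨ) * ‖f‖ := by
        rw [show b ^ 2 * BΨ * ‖f‖ ^ 2 = (b * ‖f‖) ^ 2 * BΨ by ring,
          Real.sqrt_mul (by positivity), Real.sqrt_sq (by positivity)]
        ring
end

section
/- Let m : ℕ → ℂ and let Φ = (φ_n), Ψ = (ψ_n) be sequences in a complex Hilbert space H. Suppose that for every f ∈ H the family (m_n ⟨f, ψ_n⟩ φ_n)_{n∈ℕ} is unconditionally summable, or that for every f ∈ H the family (m_n ⟨f, φ_n⟩ ψ_n)_{n∈ℕ} is unconditionally summable. If Φ is norm-bounded below (inf_n ‖φ_n‖ > 0), then the sequence mΨ = (m_n ψ_n) is a Bessel sequence for H, i.e. there is B > 0 with ∑_n |m_n|² |⟨h, ψ_n⟩|² ≤ B‖h‖² for every h ∈ H. -/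
open scoped ComplexConjugate

lemma aux_powerset_identity {E : Type*} [NormedAddCommGroup E] [InnerProductSpace ℂ E]
    (x : ℕ → E) (F : Finset ℕ) :
    ∑ σ ∈ F.powerset, ‖(∑ n ∈ σ, x n) - ∑ n ∈ F \ σ, x n‖ ^ 2
      = 2 ^ F.card * ∑ n ∈ F, ‖x n‖ ^ 2 := by
  classical
  induction F using Finset.induction with
  | empty => simp
  | insert _ _ ha ih =>
    rename_i a s
    rw [Finset.sum_powerset_insert ha, ← Finset.sum_add_distrib]
    have key : ∀ σ ∈ s.powerset,
        (‖(∑ n ∈ σ, x n) - ∑ n ∈ (insert a s) \ σ, x n‖ ^ 2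
          + ‖(∑ n ∈ insert a σ, x n) - ∑ n ∈ (insert a s) \ (insert a σ), x n‖ ^ 2)
        = 2 * ‖(∑ n ∈ σ, x n) - ∑ n ∈ s \ σ, x n‖ ^ 2 + 2 * ‖x a‖ ^ 2 := by
      intro σ hσ
      rw [Finset.mem_powerset] at hσ
      have haσ : a ∉ σ := fun h => ha (hσ h)
      have e1 : (insert a s) \ σ = insert a (s \ σ) := by
        ext b; by_cases hb : b = a <;> simp [hb, haσ, ha]
      have e2 : (insert a s) \ (insert a σ) = s \ σ := by
        ext b; by_cases hb : b = a <;> simp [hb, ha]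
      have ha' : a ∉ s \ σ := fun h => ha (Finset.mem_sdiff.1 h).1
      rw [e1, e2, Finset.sum_insert ha', Finset.sum_insert haσ]
      set y := (∑ n ∈ σ, x n) - ∑ n ∈ s \ σ, x n with hy
      have eq1 : (∑ n ∈ σ, x n) - (x a + ∑ n ∈ s \ σ, x n) = y - x a := by
        rw [hy]; abel
      have eq2 : (x a + ∑ n ∈ σ, x n) - ∑ n ∈ s \ σ, x n = y + x a := by
        rw [hy]; abel
      rw [eq1, eq2]
      have hp := parallelogram_law_with_norm ℂ y (x a)
      nlinarith [hp]
    rw [Finset.sum_congr rfl key, Finset.sum_add_distrib, ← Finset.mul_sum, ih,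
      Finset.sum_const, Finset.card_powerset, Finset.sum_insert ha,
      Finset.card_insert_of_notMem ha]
    ring

/-- Orlicz-type estimate: if all finite partial sums are bounded by `C`, then the sum of
squared norms over any finite set is at most `4 C ^ 2`. -/
lemma aux_square_sum_bound {E : Type*} [NormedAddCommGroup E] [InnerProductSpace ℂ E]
    (x : ℕ → E) (C : ℝ) (hC : ∀ G : Finset ℕ, ‖∑ n ∈ G, x n‖ ≤ C) (F : Finset ℕ) :
    ∑ n ∈ F, ‖x n‖ ^ 2 ≤ 4 * C ^ 2 := by
  have hC0 : 0 ≤ C := le_trans (norm_nonneg _) (hC ∅)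
  have hterm : ∀ σ ∈ F.powerset, ‖(∑ n ∈ σ, x n) - ∑ n ∈ F \ σ, x n‖ ^ 2 ≤ 4 * C ^ 2 := by
    intro σ _
    have h1 : ‖(∑ n ∈ σ, x n) - ∑ n ∈ F \ σ, x n‖ ≤ 2 * C := by
      calc ‖(∑ n ∈ σ, x n) - ∑ n ∈ F \ σ, x n‖
          ≤ ‖∑ n ∈ σ, x n‖ + ‖∑ n ∈ F \ σ, x n‖ := norm_sub_le _ _
        _ ≤ 2 * C := by have := hC σ; have := hC (F \ σ); linarith
    nlinarith [norm_nonneg ((∑ n ∈ σ, x n) - ∑ n ∈ F \ σ, x n)]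
  have hsum := Finset.sum_le_sum hterm
  rw [aux_powerset_identity x F, Finset.sum_const, Finset.card_powerset] at hsum
  have h2 : (0:ℝ) < 2 ^ F.card := by positivity
  have hsum' : (2:ℝ) ^ F.card * ∑ n ∈ F, ‖x n‖ ^ 2 ≤ 2 ^ F.card * (4 * C ^ 2) := by
    calc (2:ℝ) ^ F.card * ∑ n ∈ F, ‖x n‖ ^ 2 ≤ (2 ^ F.card : ℕ) • (4 * C ^ 2) := hsum
      _ = 2 ^ F.card * (4 * C ^ 2) := by rw [nsmul_eq_mul]; push_cast; ring
  exact le_of_mul_le_mul_left hsum' h2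

/-- Uniform boundedness of the partial-sum operators of a pointwise summable series of
continuous linear maps. -/
lemma aux_uniform_bound {H : Type*} [NormedAddCommGroup H] [InnerProductSpace ℂ H]
    [CompleteSpace H] (g : ℕ → H →L[ℂ] H) (hs : ∀ f : H, Summable fun n => g n f) :
    ∃ K : ℝ, 0 ≤ K ∧ ∀ G : Finset ℕ, ‖∑ n ∈ G, g n‖ ≤ K := by
  have hpt : ∀ f : H, ∃ C, ∀ G : Finset ℕ, ‖(∑ n ∈ G, g n) f‖ ≤ C := by
    intro f
    obtain ⟨F₀, hF₀⟩ := (hs f).vanishing (e := Metric.ball 0 1) (Metric.ball_mem_nhds 0 one_pos)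
    refine ⟨(∑ n ∈ F₀, ‖g n f‖) + 1, fun G => ?_⟩
    have hsplit : ∑ n ∈ G, g n f = (∑ n ∈ G ∩ F₀, g n f) + ∑ n ∈ G \ F₀, g n f :=
      (Finset.sum_inter_add_sum_sdiff G F₀ _).symm
    have h1 : ‖∑ n ∈ G ∩ F₀, g n f‖ ≤ ∑ n ∈ F₀, ‖g n f‖ :=
      le_trans (norm_sum_le _ _) (Finset.sum_le_sum_of_subset_of_nonneg
        Finset.inter_subset_right (fun i _ _ => norm_nonneg _))
    have h2 : ‖∑ n ∈ G \ F₀, g n f‖ ≤ 1 := by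
      have h2' : ‖∑ n ∈ G \ F₀, g n f‖ < 1 := by
        simpa [Metric.mem_ball, dist_eq_norm] using hF₀ (G \ F₀) Finset.sdiff_disjoint
      exact h2'.le
    rw [ContinuousLinearMap.sum_apply, hsplit]
    calc ‖(∑ n ∈ G ∩ F₀, g n f) + ∑ n ∈ G \ F₀, g n f‖
        ≤ ‖∑ n ∈ G ∩ F₀, g n f‖ + ‖∑ n ∈ G \ F₀, g n f‖ := norm_add_le _ _
      _ ≤ (∑ n ∈ F₀, ‖g n f‖) + 1 := add_le_add h1 h2
  obtain ⟨K, hK⟩ := banach_steinhaus (g := fun G : Finset ℕ => ∑ n ∈ G, g n) hpt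
  exact ⟨max K 0, le_max_right _ _, fun G => le_trans (hK G) (le_max_left _ _)⟩

/-- If M_{m,Φ,Ψ} or M_{m,Ψ,Φ} is unconditionally convergent on H and Φ is
norm-bounded below, then mΨ is a Bessel sequence for H. -/
theorem stmt_1
    {H : Type*} [NormedAddCommGroup H] [InnerProductSpace ℂ H] [CompleteSpace H]
    (φ ψ : ℕ → H) (m : ℕ → ℂ)
    (hconv : (∀ f : H, Summable (fun n => (m n * (inner ℂ (ψ n) f : ℂ)) • φ n)) ∨
             (∀ f : H, Summable (fun n => (m n * (inner ℂ (φ n) f : ℂ)) • ψ n)))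
    (hNBB : ∃ a : ℝ, 0 < a ∧ ∀ n, a ≤ ‖φ n‖) :
    ∃ B : ℝ, 0 < B ∧ ∀ h : H,
      Summable (fun n => ‖m n‖ ^ 2 * ‖(inner ℂ (ψ n) h : ℂ)‖ ^ 2) ∧
      ∑' n, ‖m n‖ ^ 2 * ‖(inner ℂ (ψ n) h : ℂ)‖ ^ 2 ≤ B * ‖h‖ ^ 2 := by
  classical
  obtain ⟨a, ha, haφ⟩ := hNBB
  -- Step 1: a uniform finite-set bound.
  have main : ∃ K : ℝ, 0 ≤ K ∧ ∀ (h : H) (F : Finset ℕ),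
      ∑ n ∈ F, ‖m n‖ ^ 2 * ‖(inner ℂ (ψ n) h : ℂ)‖ ^ 2 ≤ K * ‖h‖ ^ 2 := by
    rcases hconv with hc | hc
    · set g : ℕ → H →L[ℂ] H :=
        fun n => m n • ((innerSL ℂ (ψ n)).smulRight (φ n)) with hg
      have hgapp : ∀ n (f : H), g n f = (m n * (inner ℂ (ψ n) f : ℂ)) • φ n := by
        intro n f
        simp [hg, ContinuousLinearMap.smulRight_apply, smul_smul]
      obtain ⟨K, hK0, hK⟩ := aux_uniform_bound g (by
        intro f
        have := hc f
        convert this using 1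
        funext n; exact hgapp n f)
      refine ⟨4 * K ^ 2 / a ^ 2, by positivity, fun h F => ?_⟩
      have hCbd : ∀ G : Finset ℕ, ‖∑ n ∈ G, g n h‖ ≤ K * ‖h‖ := by
        intro G
        rw [← ContinuousLinearMap.sum_apply]
        exact le_trans ((∑ n ∈ G, g n).le_opNorm h)
          (mul_le_mul_of_nonneg_right (hK G) (norm_nonneg _))
      have hsq := aux_square_sum_bound (fun n => g n h) (K * ‖h‖) hCbd F
      have hptle : ∀ n ∈ F, a ^ 2 * (‖m n‖ ^ 2 * ‖(inner ℂ (ψ n) h : ℂ)‖ ^ 2) ≤ ‖g n h‖ ^ 2 := by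
        intro n _
        rw [hgapp n h, norm_smul, norm_mul]
        have h1 : a ^ 2 ≤ ‖φ n‖ ^ 2 := by nlinarith [haφ n, ha.le, norm_nonneg (φ n)]
        calc a ^ 2 * (‖m n‖ ^ 2 * ‖(inner ℂ (ψ n) h : ℂ)‖ ^ 2)
            = (‖m n‖ * ‖(inner ℂ (ψ n) h : ℂ)‖) ^ 2 * a ^ 2 := by ring
          _ ≤ (‖m n‖ * ‖(inner ℂ (ψ n) h : ℂ)‖) ^ 2 * ‖φ n‖ ^ 2 :=
              mul_le_mul_of_nonneg_left h1 (sq_nonneg _)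
          _ = (‖m n‖ * ‖(inner ℂ (ψ n) h : ℂ)‖ * ‖φ n‖) ^ 2 := by ring
      have := Finset.sum_le_sum hptle
      rw [← Finset.mul_sum] at this
      have : a ^ 2 * ∑ n ∈ F, ‖m n‖ ^ 2 * ‖(inner ℂ (ψ n) h : ℂ)‖ ^ 2 ≤ 4 * (K * ‖h‖) ^ 2 :=
        le_trans this hsq
      rw [div_mul_eq_mul_div, le_div_iff₀ (by positivity : (0:ℝ) < a ^ 2)]
      nlinarith [this]
    · set g : ℕ → H →L[ℂ] H :=
        fun n => m n • ((innerSL ℂ (φ n)).smulRight (ψ n)) with hg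
      have hgapp : ∀ n (f : H), g n f = (m n * (inner ℂ (φ n) f : ℂ)) • ψ n := by
        intro n f
        simp [hg, ContinuousLinearMap.smulRight_apply, smul_smul]
      obtain ⟨K, hK0, hK⟩ := aux_uniform_bound g (by
        intro f
        have := hc f
        convert this using 1
        funext n; exact hgapp n f)
      -- the adjoint of g n
      set g' : ℕ → H →L[ℂ] H :=
        fun n => (conj (m n)) • ((innerSL ℂ (ψ n)).smulRight (φ n)) with hg'
      have hg'app : ∀ n (h : H), g' n h = (conj (m n) * (inner ℂ (ψ n) h : ℂ)) • φ n := by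
        intro n h
        simp [hg', ContinuousLinearMap.smulRight_apply, smul_smul]
      have hadj : ∀ n, g' n = ContinuousLinearMap.adjoint (g n) := by
        intro n
        rw [ContinuousLinearMap.eq_adjoint_iff]
        intro u v
        rw [hg'app n u, hgapp n v, inner_smul_left, inner_smul_right, map_mul,
          Complex.conj_conj, inner_conj_symm]
        ring
      refine ⟨4 * K ^ 2 / a ^ 2, by positivity, fun h F => ?_⟩
      have hCbd : ∀ G : Finset ℕ, ‖∑ n ∈ G, g' n h‖ ≤ K * ‖h‖ := by
        intro G
        have hsum : (∑ n ∈ G, g' n) = ContinuousLinearMap.adjoint (∑ n ∈ G, g n) := by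
          rw [map_sum]
          exact Finset.sum_congr rfl fun n _ => hadj n
        have hnorm : ‖∑ n ∈ G, g' n‖ = ‖∑ n ∈ G, g n‖ := by
          rw [hsum]
          exact LinearIsometryEquiv.norm_map _ _
        rw [← ContinuousLinearMap.sum_apply]
        refine le_trans ((∑ n ∈ G, g' n).le_opNorm h) ?_
        rw [hnorm]
        exact mul_le_mul_of_nonneg_right (hK G) (norm_nonneg _)
      have hsq := aux_square_sum_bound (fun n => g' n h) (K * ‖h‖) hCbd F
      have hptle : ∀ n ∈ F, a ^ 2 * (‖m n‖ ^ 2 * ‖(inner ℂ (ψ n) h : ℂ)‖ ^ 2) ≤ ‖g' n h‖ ^ 2 := by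
        intro n _
        rw [hg'app n h, norm_smul, norm_mul]
        have hconjm : ‖(conj (m n) : ℂ)‖ = ‖m n‖ := RCLike.norm_conj _
        rw [hconjm]
        have h1 : a ^ 2 ≤ ‖φ n‖ ^ 2 := by nlinarith [haφ n, ha.le, norm_nonneg (φ n)]
        calc a ^ 2 * (‖m n‖ ^ 2 * ‖(inner ℂ (ψ n) h : ℂ)‖ ^ 2)
            = (‖m n‖ * ‖(inner ℂ (ψ n) h : ℂ)‖) ^ 2 * a ^ 2 := by ring
          _ ≤ (‖m n‖ * ‖(inner ℂ (ψ n) h : ℂ)‖) ^ 2 * ‖φ n‖ ^ 2 :=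
              mul_le_mul_of_nonneg_left h1 (sq_nonneg _)
          _ = (‖m n‖ * ‖(inner ℂ (ψ n) h : ℂ)‖ * ‖φ n‖) ^ 2 := by ring
      have := Finset.sum_le_sum hptle
      rw [← Finset.mul_sum] at this
      have : a ^ 2 * ∑ n ∈ F, ‖m n‖ ^ 2 * ‖(inner ℂ (ψ n) h : ℂ)‖ ^ 2 ≤ 4 * (K * ‖h‖) ^ 2 :=
        le_trans this hsq
      rw [div_mul_eq_mul_div, le_div_iff₀ (by positivity : (0:ℝ) < a ^ 2)]
      nlinarith [this]
  obtain ⟨K, hK0, hK⟩ := main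
  refine ⟨K + 1, by positivity, fun h => ?_⟩
  have hsummable : Summable (fun n => ‖m n‖ ^ 2 * ‖(inner ℂ (ψ n) h : ℂ)‖ ^ 2) := by
    refine summable_of_sum_le (fun n => by positivity) (fun F => hK h F)
  refine ⟨hsummable, ?_⟩
  have h1 : ∑' n, ‖m n‖ ^ 2 * ‖(inner ℂ (ψ n) h : ℂ)‖ ^ 2 ≤ K * ‖h‖ ^ 2 :=
    Summable.tsum_le_of_sum_le hsummable (fun F => hK h F)
  nlinarith [sq_nonneg ‖h‖]
end

section
/- Let m : ℕ → ℂ and let Φ = (φ_n), Ψ = (ψ_n) be sequences in a complex Hilbert space H. Suppose that for every f ∈ H the family (m_n ⟨f, ψ_n⟩ φ_n)_{n∈ℕ} is unconditionally summable, or that for every f ∈ H the family (m_n ⟨f, φ_n⟩ ψ_n)_{n∈ℕ} is unconditionally summable. If the sequence mΦ = (m_n φ_n) is norm-bounded below (inf_n ‖m_n φ_n‖ > 0), then Ψ is a Bessel sequence for H, i.e. there is B > 0 with ∑_n |⟨h, ψ_n⟩|² ≤ B‖h‖² for every h ∈ H. -/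
section Helpers

open scoped ComplexConjugate

variable {H : Type*} [NormedAddCommGroup H] [InnerProductSpace ℂ H]

lemma sign_sq_sum (y : ℕ → H) (F : Finset ℕ) :
    ∀ D : ℝ, (∀ ε : ℕ → ℂ, (∀ n, ε n = 1 ∨ ε n = -1) →
      ‖∑ n ∈ F, ε n • y n‖ ≤ D) →
    ∑ n ∈ F, ‖y n‖ ^ 2 ≤ D ^ 2 := by
  induction F using Finset.induction_on with
  | empty =>
      intro D hD
      have h0 := hD (fun _ => 1) (fun _ => Or.inl rfl)
      simp only [Finset.sum_empty, norm_zero] at h0 ⊢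
      positivity
  | @insert k F hk ih =>
      intro D hD
      have key : ∀ ε : ℕ → ℂ, (∀ n, ε n = 1 ∨ ε n = -1) →
          ‖y k + ∑ n ∈ F, ε n • y n‖ ≤ D ∧ ‖y k - ∑ n ∈ F, ε n • y n‖ ≤ D := by
        intro ε hε
        have hsum : ∀ c : ℂ, ∑ n ∈ F, (Function.update ε k c) n • y n = ∑ n ∈ F, ε n • y n := by
          intro c
          refine Finset.sum_congr rfl fun n hn => ?_
          rw [Function.update_of_ne (fun h => hk (by rw [← h]; exact hn)) c ε]
        constructor
        · have := hD (Function.update ε k 1) (fun n => by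
            rcases eq_or_ne n k with h | h
            · subst h; left; simp
            · rw [Function.update_of_ne h]; exact hε n)
          rwa [Finset.sum_insert hk, hsum, Function.update_self, one_smul] at this
        · have := hD (Function.update ε k (-1)) (fun n => by
            rcases eq_or_ne n k with h | h
            · subst h; right; simp
            · rw [Function.update_of_ne h]; exact hε n)
          rw [Finset.sum_insert hk, hsum, Function.update_self, neg_one_smul] at this
          rwa [neg_add_eq_sub, ← norm_neg, neg_sub] at this
      have hS : ∀ ε : ℕ → ℂ, (∀ n, ε n = 1 ∨ ε n = -1) →
          ‖∑ n ∈ F, ε n • y n‖ ^ 2 ≤ D ^ 2 - ‖y k‖ ^ 2 := by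
        intro ε hε
        obtain ⟨h1, h2⟩ := key ε hε
        have hp := parallelogram_law_with_norm ℂ (y k) (∑ n ∈ F, ε n • y n)
        nlinarith [norm_nonneg (y k + ∑ n ∈ F, ε n • y n), norm_nonneg (y k - ∑ n ∈ F, ε n • y n)]
      have h1 : ∀ ε : ℕ → ℂ, (∀ n, ε n = 1 ∨ ε n = -1) →
          ‖∑ n ∈ F, ε n • y n‖ ≤ Real.sqrt (D ^ 2 - ‖y k‖ ^ 2) := by
        intro ε hε
        have := hS ε hε
        have h0 := norm_nonneg (∑ n ∈ F, ε n • y n)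
        nlinarith [Real.sq_sqrt (show (0:ℝ) ≤ D ^ 2 - ‖y k‖ ^ 2 by nlinarith [hS (fun _ => 1) (fun _ => Or.inl rfl), norm_nonneg (∑ n ∈ F, (1:ℂ) • y n)]),
          Real.sqrt_nonneg (D ^ 2 - ‖y k‖ ^ 2)]
      have := ih _ h1
      rw [Finset.sum_insert hk]
      have hnn : (0:ℝ) ≤ D ^ 2 - ‖y k‖ ^ 2 := by
        nlinarith [hS (fun _ => 1) (fun _ => Or.inl rfl), norm_nonneg (∑ n ∈ F, (1:ℂ) • y n)]
      rw [Real.sq_sqrt hnn] at this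
      linarith

lemma bdd_partial {x : ℕ → H} (hx : Summable x) :
    ∃ R : ℝ, ∀ F : Finset ℕ, ‖∑ n ∈ F, x n‖ ≤ R := by
  obtain ⟨s, hs⟩ := hx
  have h1 : ∀ᶠ F in Filter.atTop, dist (∑ n ∈ F, x n) s < 1 :=
    Metric.tendsto_nhds.mp hs 1 one_pos
  obtain ⟨G, hG⟩ := Filter.eventually_atTop.mp h1
  refine ⟨‖s‖ + 1 + ∑ n ∈ G, ‖x n‖, fun F => ?_⟩
  have hsplit : ∑ n ∈ F ∪ G, x n = ∑ n ∈ F, x n + ∑ n ∈ G \ F, x n := by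
    rw [← Finset.sum_union Finset.disjoint_sdiff, Finset.union_sdiff_self_eq_union]
  have h2 : ‖∑ n ∈ F ∪ G, x n‖ ≤ ‖s‖ + 1 := by
    have := hG (F ∪ G) Finset.subset_union_right
    rw [dist_eq_norm] at this
    have := norm_sub_norm_le (∑ n ∈ F ∪ G, x n) s
    linarith
  have h3 : ‖∑ n ∈ G \ F, x n‖ ≤ ∑ n ∈ G, ‖x n‖ :=
    (norm_sum_le _ _).trans (Finset.sum_le_sum_of_subset_of_nonneg (Finset.sdiff_subset)
      (fun n _ _ => norm_nonneg _))
  have : ∑ n ∈ F, x n = ∑ n ∈ F ∪ G, x n - ∑ n ∈ G \ F, x n := by rw [hsplit]; abel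
  rw [this]
  calc ‖∑ n ∈ F ∪ G, x n - ∑ n ∈ G \ F, x n‖ ≤ ‖∑ n ∈ F ∪ G, x n‖ + ‖∑ n ∈ G \ F, x n‖ :=
        norm_sub_le _ _
  _ ≤ ‖s‖ + 1 + ∑ n ∈ G, ‖x n‖ := by linarith

lemma bdd_signed {x : ℕ → H} (hx : Summable x) :
    ∃ R : ℝ, ∀ (F : Finset ℕ) (ε : ℕ → ℂ), (∀ n, ε n = 1 ∨ ε n = -1) →
      ‖∑ n ∈ F, ε n • x n‖ ≤ R := by
  obtain ⟨R, hR⟩ := bdd_partial hx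
  refine ⟨2 * R, fun F ε hε => ?_⟩
  have hsplit : ∑ n ∈ F, ε n • x n
      = ∑ n ∈ F.filter (fun n => ε n = 1), x n - ∑ n ∈ F.filter (fun n => ¬ ε n = 1), x n := by
    have e1 : ∑ n ∈ F.filter (fun n => ε n = 1), ε n • x n
        = ∑ n ∈ F.filter (fun n => ε n = 1), x n :=
      Finset.sum_congr rfl fun n hn => by rw [(Finset.mem_filter.mp hn).2, one_smul]
    have e2 : ∑ n ∈ F.filter (fun n => ¬ ε n = 1), ε n • x n
        = -∑ n ∈ F.filter (fun n => ¬ ε n = 1), x n := by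
      rw [← Finset.sum_neg_distrib]
      refine Finset.sum_congr rfl fun n hn => ?_
      have h2 := (Finset.mem_filter.mp hn).2
      rcases hε n with h | h
      · exact absurd h h2
      · rw [h, neg_one_smul]
    rw [← Finset.sum_filter_add_sum_filter_not F (fun n => ε n = 1) (fun n => ε n • x n), e1, e2,
      sub_eq_add_neg]
  rw [hsplit]
  calc _ ≤ ‖∑ n ∈ F.filter (fun n => ε n = 1), x n‖ + ‖∑ n ∈ F.filter (fun n => ¬ ε n = 1), x n‖ := norm_sub_le _ _
  _ ≤ 2 * R := by have := hR (F.filter (fun n => ε n = 1)); have := hR (F.filter (fun n => ¬ ε n = 1)); linarith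

lemma op_bound [CompleteSpace H] (u v : ℕ → H) (m : ℕ → ℂ)
    (hs : ∀ f : H, Summable fun n => (m n * (inner ℂ (u n) f : ℂ)) • v n) :
    ∃ C : ℝ, 0 ≤ C ∧ ∀ (F : Finset ℕ) (ε : ℕ → ℂ), (∀ n, ε n = 1 ∨ ε n = -1) →
      ∀ f : H, ‖∑ n ∈ F, ε n • ((m n * (inner ℂ (u n) f : ℂ)) • v n)‖ ≤ C * ‖f‖ := by
  set ι := Finset ℕ × {ε : ℕ → ℂ // ∀ n, ε n = 1 ∨ ε n = -1} with hι
  set g : ι → H →L[ℂ] H := fun p =>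
    ∑ n ∈ p.1, ((p.2.1 n * m n) • innerSL ℂ (u n)).smulRight (v n) with hg
  have happ : ∀ (p : ι) (f : H),
      g p f = ∑ n ∈ p.1, p.2.1 n • ((m n * (inner ℂ (u n) f : ℂ)) • v n) := by
    intro p f
    rw [hg]
    simp only [ContinuousLinearMap.sum_apply, ContinuousLinearMap.smulRight_apply,
      ContinuousLinearMap.smul_apply, innerSL_apply_apply, smul_eq_mul, smul_smul]
    refine Finset.sum_congr rfl fun n _ => ?_
    congr 1
    ring
  have hpt : ∀ f : H, ∃ C, ∀ p : ι, ‖g p f‖ ≤ C := by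
    intro f
    obtain ⟨R, hR⟩ := bdd_signed (hs f)
    exact ⟨R, fun p => by rw [happ]; exact hR p.1 p.2.1 p.2.2⟩
  obtain ⟨C', hC'⟩ := banach_steinhaus hpt
  refine ⟨max C' 0, le_max_right _ _, fun F ε hε f => ?_⟩
  rw [← happ (F, ⟨ε, hε⟩) f]
  calc ‖g (F, ⟨ε, hε⟩) f‖ ≤ ‖g (F, ⟨ε, hε⟩)‖ * ‖f‖ := (g _).le_opNorm f
  _ ≤ max C' 0 * ‖f‖ :=
      mul_le_mul_of_nonneg_right ((hC' _).trans (le_max_left _ _)) (norm_nonneg f)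

theorem stmt_2'
    {H : Type*} [NormedAddCommGroup H] [InnerProductSpace ℂ H] [CompleteSpace H]
    (φ ψ : ℕ → H) (m : ℕ → ℂ)
    (hconv : (∀ f : H, Summable (fun n => (m n * (inner ℂ (ψ n) f : ℂ)) • φ n)) ∨
             (∀ f : H, Summable (fun n => (m n * (inner ℂ (φ n) f : ℂ)) • ψ n)))
    (hNBB : ∃ a : ℝ, 0 < a ∧ ∀ n, a ≤ ‖m n • φ n‖) :
    ∃ B : ℝ, 0 < B ∧ ∀ h : H,
      Summable (fun n => ‖(inner ℂ (ψ n) h : ℂ)‖ ^ 2) ∧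
      ∑' n, ‖(inner ℂ (ψ n) h : ℂ)‖ ^ 2 ≤ B * ‖h‖ ^ 2 := by
  obtain ⟨a, ha, haN⟩ := hNBB
  suffices key : ∃ C : ℝ, 0 ≤ C ∧ ∀ (h : H) (F : Finset ℕ),
      ∑ n ∈ F, ‖(inner ℂ (ψ n) h : ℂ)‖ ^ 2 ≤ C * ‖h‖ ^ 2 by
    obtain ⟨C, hC0, hC⟩ := key
    refine ⟨C + 1, by linarith, fun h => ?_⟩
    have hsum : Summable (fun n => ‖(inner ℂ (ψ n) h : ℂ)‖ ^ 2) :=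
      summable_of_sum_le (fun n => by positivity) (fun F => hC h F)
    refine ⟨hsum, ?_⟩
    have := Summable.tsum_le_of_sum_le hsum (fun F => hC h F)
    nlinarith [sq_nonneg ‖h‖]
  rcases hconv with h1 | h2
  · obtain ⟨C, hC0, hCb⟩ := op_bound ψ φ m h1
    refine ⟨C ^ 2 / a ^ 2, by positivity, fun h F => ?_⟩
    set y : ℕ → H := fun n => (m n * (inner ℂ (ψ n) h : ℂ)) • φ n with hy
    have hsg : ∑ n ∈ F, ‖y n‖ ^ 2 ≤ (C * ‖h‖) ^ 2 :=
      sign_sq_sum y F (C * ‖h‖) (fun ε hε => hCb F ε hε h)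
    have hterm : ∀ n, a ^ 2 * ‖(inner ℂ (ψ n) h : ℂ)‖ ^ 2 ≤ ‖y n‖ ^ 2 := by
      intro n
      have e : ‖y n‖ = ‖(inner ℂ (ψ n) h : ℂ)‖ * ‖m n • φ n‖ := by
        rw [hy]; simp [norm_smul]; ring
      rw [e]
      have hb := haN n
      nlinarith [norm_nonneg ((inner ℂ (ψ n) h : ℂ)), mul_self_le_mul_self ha.le hb,
        sq_nonneg ‖(inner ℂ (ψ n) h : ℂ)‖]
    have hsum2 : a ^ 2 * ∑ n ∈ F, ‖(inner ℂ (ψ n) h : ℂ)‖ ^ 2 ≤ (C * ‖h‖) ^ 2 := by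
      rw [Finset.mul_sum]
      exact (Finset.sum_le_sum fun n _ => hterm n).trans hsg
    rw [div_mul_eq_mul_div, le_div_iff₀ (by positivity)]
    nlinarith [hsum2]
  · obtain ⟨C, hC0, hCb⟩ := op_bound φ ψ m h2
    refine ⟨C ^ 2 / a ^ 2, by positivity, fun h F => ?_⟩
    set y : ℕ → H := fun n => ((starRingEnd ℂ) (m n) * (inner ℂ (ψ n) h : ℂ)) • φ n with hy
    have hDy : ∀ ε : ℕ → ℂ, (∀ n, ε n = 1 ∨ ε n = -1) →
        ‖∑ n ∈ F, ε n • y n‖ ≤ C * ‖h‖ := by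
      intro ε hε
      set w : H := ∑ n ∈ F, ε n • y n with hw
      have hconjε : ∀ n, (starRingEnd ℂ) (ε n) = ε n := by
        intro n; rcases hε n with h' | h' <;> simp [h']
      have hid : ∀ f : H, (inner ℂ f w : ℂ)
          = inner ℂ (∑ n ∈ F, ε n • ((m n * (inner ℂ (φ n) f : ℂ)) • ψ n)) h := by
        intro f
        rw [hw, inner_sum, sum_inner]
        refine Finset.sum_congr rfl fun n _ => ?_
        rw [hy, inner_smul_right, inner_smul_right, inner_smul_left, inner_smul_left,
          map_mul, inner_conj_symm, hconjε n]
        ring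
      have h2' : ‖w‖ ^ 2 = ‖(inner ℂ w w : ℂ)‖ := by
        rw [inner_self_eq_norm_sq_to_K]
        simp [pow_two_nonneg]
      have h3 : ‖(inner ℂ w w : ℂ)‖ ≤ (C * ‖w‖) * ‖h‖ := by
        rw [hid w]
        exact (norm_inner_le_norm _ _).trans
          (mul_le_mul_of_nonneg_right (hCb F ε hε w) (norm_nonneg h))
      rcases eq_or_lt_of_le (norm_nonneg w) with h0 | h0
      · rw [← h0]; positivity
      · have : ‖w‖ * ‖w‖ ≤ (C * ‖h‖) * ‖w‖ := by nlinarith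
        exact le_of_mul_le_mul_right this h0
    have hsg : ∑ n ∈ F, ‖y n‖ ^ 2 ≤ (C * ‖h‖) ^ 2 :=
      sign_sq_sum y F (C * ‖h‖) hDy
    have hterm : ∀ n, a ^ 2 * ‖(inner ℂ (ψ n) h : ℂ)‖ ^ 2 ≤ ‖y n‖ ^ 2 := by
      intro n
      have e : ‖y n‖ = ‖(inner ℂ (ψ n) h : ℂ)‖ * ‖m n • φ n‖ := by
        rw [hy]; simp [norm_smul]; ring
      rw [e]
      have hb := haN n
      nlinarith [norm_nonneg ((inner ℂ (ψ n) h : ℂ)), mul_self_le_mul_self ha.le hb,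
        sq_nonneg ‖(inner ℂ (ψ n) h : ℂ)‖]
    have hsum2 : a ^ 2 * ∑ n ∈ F, ‖(inner ℂ (ψ n) h : ℂ)‖ ^ 2 ≤ (C * ‖h‖) ^ 2 := by
      rw [Finset.mul_sum]
      exact (Finset.sum_le_sum fun n _ => hterm n).trans hsg
    rw [div_mul_eq_mul_div, le_div_iff₀ (by positivity)]
    nlinarith [hsum2]

end Helpers


/-- If M_{m,Φ,Ψ} or M_{m,Ψ,Φ} is unconditionally convergent on H and mΦ is
norm-bounded below, then Ψ is a Bessel sequence for H. -/
theorem stmt_2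
    {H : Type*} [NormedAddCommGroup H] [InnerProductSpace ℂ H] [CompleteSpace H]
    (φ ψ : ℕ → H) (m : ℕ → ℂ)
    (hconv : (∀ f : H, Summable (fun n => (m n * (inner ℂ (ψ n) f : ℂ)) • φ n)) ∨
             (∀ f : H, Summable (fun n => (m n * (inner ℂ (φ n) f : ℂ)) • ψ n)))
    (hNBB : ∃ a : ℝ, 0 < a ∧ ∀ n, a ≤ ‖m n • φ n‖) :
    ∃ B : ℝ, 0 < B ∧ ∀ h : H,
      Summable (fun n => ‖(inner ℂ (ψ n) h : ℂ)‖ ^ 2) ∧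
      ∑' n, ‖(inner ℂ (ψ n) h : ℂ)‖ ^ 2 ≤ B * ‖h‖ ^ 2 := by
  exact stmt_2' φ ψ m hconv hNBB
end

section
/- Let m : ℕ → ℂ and let Φ = (φ_n), Ψ = (ψ_n) be sequences in a complex Hilbert space H. Suppose that for every f ∈ H the family (m_n ⟨f, ψ_n⟩ φ_n)_{n∈ℕ} is unconditionally summable, or that for every f ∈ H the family (m_n ⟨f, φ_n⟩ ψ_n)_{n∈ℕ} is unconditionally summable. If both Φ and Ψ are norm-bounded below (inf_n ‖φ_n‖ > 0 and inf_n ‖ψ_n‖ > 0), then m is bounded: sup_n |m_n| < ∞. -/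
lemma stmt_3_aux
    {H : Type*} [NormedAddCommGroup H] [InnerProductSpace ℂ H] [CompleteSpace H]
    (φ ψ : ℕ → H) (m : ℕ → ℂ)
    (h : ∀ f : H, Summable (fun n => (m n * (inner ℂ (ψ n) f : ℂ)) • φ n))
    (hφ : ∃ a : ℝ, 0 < a ∧ ∀ n, a ≤ ‖φ n‖)
    (hψ : ∃ a : ℝ, 0 < a ∧ ∀ n, a ≤ ‖ψ n‖) :
    ∃ b : ℝ, ∀ n, ‖m n‖ ≤ b := by
  obtain ⟨a, ha, haφ⟩ := hφ
  obtain ⟨c, hc, hcψ⟩ := hψ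
  set T : ℕ → H →L[ℂ] H := fun n => ((m n) • innerSL ℂ (ψ n)).smulRight (φ n) with hT
  have hTapp : ∀ n f, T n f = (m n * (inner ℂ (ψ n) f : ℂ)) • φ n := by
    intro n f
    simp [hT, ContinuousLinearMap.smulRight_apply, smul_eq_mul]
  have hptwise : ∀ f : H, ∃ C : ℝ, ∀ n, ‖T n f‖ ≤ C := by
    intro f
    have h0 : Filter.Tendsto (fun n => ‖T n f‖) Filter.atTop (nhds ‖(0:H)‖) := by
      have := (h f).tendsto_atTop_zero
      have := this.norm
      simpa [hTapp] using this
    obtain ⟨C, hC⟩ := h0.bddAbove_range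
    exact ⟨C, fun n => hC ⟨n, rfl⟩⟩
  obtain ⟨C, hC⟩ := banach_steinhaus hptwise
  refine ⟨C / (a * c), fun n => ?_⟩
  have h1 : ‖T n (ψ n)‖ ≤ C * ‖ψ n‖ :=
    le_trans ((T n).le_opNorm (ψ n)) (by
      have := hC n
      have hn : (0:ℝ) ≤ ‖ψ n‖ := norm_nonneg _
      nlinarith)
  have h2 : ‖T n (ψ n)‖ = ‖m n‖ * ‖ψ n‖ ^ 2 * ‖φ n‖ := by
    rw [hTapp, norm_smul, norm_mul, @inner_self_eq_norm_sq_to_K ℂ]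
    simp [norm_pow]
  rw [h2] at h1
  have hψn : c ≤ ‖ψ n‖ := hcψ n
  have hφn : a ≤ ‖φ n‖ := haφ n
  have hmn : (0:ℝ) ≤ ‖m n‖ := norm_nonneg _
  have hψpos : 0 < ‖ψ n‖ := lt_of_lt_of_le hc hψn
  have h3 : ‖m n‖ * ‖ψ n‖ * ‖φ n‖ ≤ C := by
    refine le_of_mul_le_mul_right ?_ hψpos
    nlinarith [h1]
  have h4 : ‖m n‖ * (a * c) ≤ ‖m n‖ * (‖ψ n‖ * ‖φ n‖) := by
    refine mul_le_mul_of_nonneg_left ?_ hmn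
    nlinarith [mul_le_mul hφn hψn hc.le (le_trans ha.le hφn)]
  rw [le_div_iff₀ (by positivity)]
  nlinarith [h3, h4]

/-- If M_{m,Φ,Ψ} or M_{m,Ψ,Φ} is unconditionally convergent on H and both Φ
and Ψ are norm-bounded below, then m is bounded. -/
theorem stmt_3
    {H : Type*} [NormedAddCommGroup H] [InnerProductSpace ℂ H] [CompleteSpace H]
    (φ ψ : ℕ → H) (m : ℕ → ℂ)
    (hconv : (∀ f : H, Summable (fun n => (m n * (inner ℂ (ψ n) f : ℂ)) • φ n)) ∨
             (∀ f : H, Summable (fun n => (m n * (inner ℂ (φ n) f : ℂ)) • ψ n)))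
    (hφ : ∃ a : ℝ, 0 < a ∧ ∀ n, a ≤ ‖φ n‖)
    (hψ : ∃ a : ℝ, 0 < a ∧ ∀ n, a ≤ ‖ψ n‖) :
    ∃ b : ℝ, ∀ n, ‖m n‖ ≤ b := by
  rcases hconv with h | h
  · exact stmt_3_aux φ ψ m h hφ hψ
  · exact stmt_3_aux ψ φ m h hψ hφ
end

section
/- Let Φ = (φ_n) be a Riesz basis for a complex Hilbert space H, let Ψ = (ψ_n) be a sequence in H and m : ℕ → ℂ. Suppose that the multiplier M_{m,Φ,Ψ} or the multiplier M_{m,Ψ,Φ} is well defined on H, i.e. for every f ∈ H the partial sums ∑_{n<N} m_n ⟨f, ψ_n⟩ φ_n (respectively ∑_{n<N} m_n ⟨f, φ_n⟩ ψ_n) converge in H as N → ∞. If Ψ is norm-bounded below (inf_n ‖ψ_n‖ > 0), then m is bounded: sup_n |m_n| < ∞. -/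
set_option synthInstance.maxHeartbeats 400000


open Filter

/-- A sequence is a Riesz basis for H with some bounds A, B > 0. -/
def IsRieszBasis {H : Type*} [NormedAddCommGroup H] [InnerProductSpace ℂ H] (φ : ℕ → H) : Prop :=
  Dense (Submodule.span ℂ (Set.range φ) : Set H) ∧
  ∃ A B : ℝ, 0 < A ∧ 0 < B ∧ ∀ c : ℕ → ℂ, Summable (fun n => ‖c n‖ ^ 2) →
    Summable (fun n => c n • φ n) ∧
    A * ∑' n, ‖c n‖ ^ 2 ≤ ‖∑' n, c n • φ n‖ ^ 2 ∧
    ‖∑' n, c n • φ n‖ ^ 2 ≤ B * ∑' n, ‖c n‖ ^ 2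

/-- Terms of a convergent series tend to 0 (partial-sum form). -/
lemma term_tendsto_zero {H : Type*} [NormedAddCommGroup H]
    (u : ℕ → H) (g : H)
    (h : Tendsto (fun N => ∑ n ∈ Finset.range N, u n) atTop (nhds g)) :
    Tendsto u atTop (nhds 0) := by
  have h2 : Tendsto (fun N => ∑ n ∈ Finset.range (N + 1), u n) atTop (nhds g) :=
    h.comp (tendsto_add_atTop_nat 1)
  have := h2.sub h
  simpa [Finset.sum_range_succ] using this

/-- Key lemma via Banach–Steinhaus. -/
lemma key {H : Type*} [NormedAddCommGroup H] [InnerProductSpace ℂ H] [CompleteSpace H]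
    (v : ℕ → H) (c : ℕ → ℂ) (a : ℝ) (ha : 0 < a) (hv : ∀ n, a ≤ ‖v n‖)
    (hpb : ∀ f : H, ∃ C : ℝ, ∀ n, ‖c n * (inner ℂ (v n) f : ℂ)‖ ≤ C) :
    ∃ b : ℝ, ∀ n, ‖c n‖ ≤ b := by
  have h := banach_steinhaus (g := fun n => c n • innerSL ℂ (v n)) (by
    intro f
    obtain ⟨C, hC⟩ := hpb f
    exact ⟨C, fun n => by simpa [norm_smul] using hC n⟩)
  obtain ⟨C', hC'⟩ := h
  refine ⟨C' / a, fun n => ?_⟩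
  have hn : ‖(fun n => c n • innerSL ℂ (v n)) n‖ = ‖c n‖ * ‖v n‖ := by
    simp only []
    rw [norm_smul (c n) (innerSL ℂ (v n)), innerSL_apply_norm]
  have h1 : ‖c n‖ * a ≤ C' := by
    calc ‖c n‖ * a ≤ ‖c n‖ * ‖v n‖ := by
          exact mul_le_mul_of_nonneg_left (hv n) (norm_nonneg _)
      _ ≤ C' := by rw [← hn]; exact hC' n
  rw [le_div_iff₀ ha]
  exact h1

/-- If Φ is a Riesz basis, M_{m,Φ,Ψ} or M_{m,Ψ,Φ} is well defined on H, and Ψ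
is norm-bounded below, then m is bounded. -/
theorem stmt_5
    {H : Type*} [NormedAddCommGroup H] [InnerProductSpace ℂ H] [CompleteSpace H]
    (φ ψ : ℕ → H) (m : ℕ → ℂ)
    (hΦ : IsRieszBasis φ)
    (hwd : (∀ f : H, ∃ g : H, Tendsto
              (fun N => ∑ n ∈ Finset.range N, (m n * (inner ℂ (ψ n) f : ℂ)) • φ n)
              atTop (nhds g)) ∨
           (∀ f : H, ∃ g : H, Tendsto
              (fun N => ∑ n ∈ Finset.range N, (m n * (inner ℂ (φ n) f : ℂ)) • ψ n)
              atTop (nhds g)))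
    (hNBB : ∃ a : ℝ, 0 < a ∧ ∀ n, a ≤ ‖ψ n‖) :
    ∃ b : ℝ, ∀ n, ‖m n‖ ≤ b := by
  obtain ⟨a, ha, haψ⟩ := hNBB
  obtain ⟨-, A, B, hA, hB, hRiesz⟩ := hΦ
  -- lower bound on ‖φ n‖
  have hφlb : ∀ n, Real.sqrt A ≤ ‖φ n‖ := by
    intro n
    set c : ℕ → ℂ := fun k => if k = n then 1 else 0 with hc
    have hsum : Summable (fun k => ‖c k‖ ^ 2) := by
      apply summable_of_ne_finset_zero (s := {n})
      intro k hk
      simp only [Finset.mem_singleton] at hk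
      simp [hc, hk]
    obtain ⟨_, hlow, -⟩ := hRiesz c hsum
    have t1 : (∑' k, ‖c k‖ ^ 2) = 1 := by
      rw [tsum_eq_single n]
      · simp [hc]
      · intro k hk; simp [hc, hk]
    have t2 : (∑' k, c k • φ k) = φ n := by
      rw [tsum_eq_single n]
      · simp [hc]
      · intro k hk; simp [hc, hk]
    rw [t1, t2, mul_one] at hlow
    calc Real.sqrt A ≤ Real.sqrt (‖φ n‖ ^ 2) := Real.sqrt_le_sqrt hlow
      _ = ‖φ n‖ := by rw [Real.sqrt_sq (norm_nonneg _)]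
  have hsA : 0 < Real.sqrt A := Real.sqrt_pos.mpr hA
  rcases hwd with h | h
  · -- M_{m,Φ,Ψ}: apply key with v = ψ
    apply key ψ m a ha haψ
    intro f
    obtain ⟨g, hg⟩ := h f
    have h0 := term_tendsto_zero _ _ hg
    have hb : ∃ C : ℝ, ∀ n, ‖(m n * (inner ℂ (ψ n) f : ℂ)) • φ n‖ ≤ C := by
      have := h0.norm
      obtain ⟨C, hC⟩ := (this.bddAbove_range).imp (fun C hC n => hC (Set.mem_range_self n))
      exact ⟨C, hC⟩
    obtain ⟨C, hC⟩ := hb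
    refine ⟨C / Real.sqrt A, fun n => ?_⟩
    rw [le_div_iff₀ hsA]
    calc ‖m n * (inner ℂ (ψ n) f : ℂ)‖ * Real.sqrt A
        ≤ ‖m n * (inner ℂ (ψ n) f : ℂ)‖ * ‖φ n‖ :=
          mul_le_mul_of_nonneg_left (hφlb n) (norm_nonneg _)
      _ = ‖(m n * (inner ℂ (ψ n) f : ℂ)) • φ n‖ := (norm_smul _ _).symm
      _ ≤ C := hC n
  · -- M_{m,Ψ,Φ}: apply key with v = φ
    apply key φ m (Real.sqrt A) hsA hφlb
    intro f
    obtain ⟨g, hg⟩ := h f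
    have h0 := term_tendsto_zero _ _ hg
    have hb : ∃ C : ℝ, ∀ n, ‖(m n * (inner ℂ (φ n) f : ℂ)) • ψ n‖ ≤ C := by
      have := h0.norm
      obtain ⟨C, hC⟩ := (this.bddAbove_range).imp (fun C hC n => hC (Set.mem_range_self n))
      exact ⟨C, hC⟩
    obtain ⟨C, hC⟩ := hb
    refine ⟨C / a, fun n => ?_⟩
    rw [le_div_iff₀ ha]
    calc ‖m n * (inner ℂ (φ n) f : ℂ)‖ * a
        ≤ ‖m n * (inner ℂ (φ n) f : ℂ)‖ * ‖ψ n‖ :=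
          mul_le_mul_of_nonneg_left (haψ n) (norm_nonneg _)
      _ = ‖(m n * (inner ℂ (φ n) f : ℂ)) • ψ n‖ := (norm_smul _ _).symm
      _ ≤ C := hC n
end

section
/- Let Φ = (φ_n) and Ψ = (ψ_n) be Bessel sequences for a complex Hilbert space H and let m : ℕ → ℂ be bounded, so that M_{m,Φ,Ψ} f = ∑_n m_n ⟨f, ψ_n⟩ φ_n defines a bounded operator on H. If M_{m,Φ,Ψ} is invertible on H (a bounded linear bijection of H onto H), then Φ and Ψ are frames for H: there exist constants A_Φ, A_Ψ > 0 with A_Φ‖h‖² ≤ ∑_n |⟨h, φ_n⟩|² and A_Ψ‖h‖² ≤ ∑_n |⟨h, ψ_n⟩|² for every h ∈ H. -/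
open scoped BigOperators

-- Cauchy–Schwarz for tsums of nonnegative reals
private lemma tsum_CS (a c : ℕ → ℝ) (ha : ∀ n, 0 ≤ a n) (hc : ∀ n, 0 ≤ c n)
    (hA : Summable (fun n => a n ^ 2)) (hC : Summable (fun n => c n ^ 2)) :
    ∑' n, a n * c n ≤ Real.sqrt (∑' n, a n ^ 2) * Real.sqrt (∑' n, c n ^ 2) := by
  have hsum : Summable (fun n => a n * c n) := by
    apply Summable.of_nonneg_of_le (fun n => mul_nonneg (ha n) (hc n))
      (fun n => ?_) ((hA.add hC).div_const 2)
    have h2 : 0 ≤ (a n - c n) ^ 2 := sq_nonneg _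
    nlinarith
  refine Summable.tsum_le_of_sum_le hsum (fun s => ?_)
  calc ∑ n ∈ s, a n * c n
      ≤ Real.sqrt (∑ n ∈ s, a n ^ 2) * Real.sqrt (∑ n ∈ s, c n ^ 2) :=
        Real.sum_mul_le_sqrt_mul_sqrt s a c
    _ ≤ Real.sqrt (∑' n, a n ^ 2) * Real.sqrt (∑' n, c n ^ 2) := by
        apply mul_le_mul (Real.sqrt_le_sqrt (Summable.sum_le_tsum s (fun n _ => sq_nonneg _) hA))
          (Real.sqrt_le_sqrt (Summable.sum_le_tsum s (fun n _ => sq_nonneg _) hC))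
          (Real.sqrt_nonneg _) (Real.sqrt_nonneg _)

-- finite synthesis bound for a Bessel sequence
private lemma synth_finset {H : Type*} [NormedAddCommGroup H] [InnerProductSpace ℂ H]
    (φ : ℕ → H) (B : ℝ) (hB : 0 ≤ B)
    (hΦ : ∀ h : H, Summable (fun n => ‖(inner ℂ (φ n) h : ℂ)‖ ^ 2) ∧
      ∑' n, ‖(inner ℂ (φ n) h : ℂ)‖ ^ 2 ≤ B * ‖h‖ ^ 2)
    (c : ℕ → ℂ) (t : Finset ℕ) :
    ‖∑ n ∈ t, c n • φ n‖ ≤ Real.sqrt B * Real.sqrt (∑ n ∈ t, ‖c n‖ ^ 2) := by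
  set v : H := ∑ n ∈ t, c n • φ n with hv
  rcases eq_or_ne v 0 with h0 | h0
  · rw [h0, norm_zero]
    positivity
  have hvpos : 0 < ‖v‖ := norm_pos_iff.mpr h0
  have key : ‖v‖ ^ 2 ≤ Real.sqrt (∑ n ∈ t, ‖c n‖ ^ 2) * (Real.sqrt B * ‖v‖) := by
    have h1 : (inner ℂ v v : ℂ) = ∑ n ∈ t, (starRingEnd ℂ) (c n) * (inner ℂ (φ n) v : ℂ) := by
      rw [hv, sum_inner]
      exact Finset.sum_congr rfl (fun n _ => inner_smul_left _ _ _)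
    have h2 : ‖v‖ ^ 2 = ‖(inner ℂ v v : ℂ)‖ := by
      rw [inner_self_eq_norm_sq_to_K (𝕜 := ℂ)]
      simp [sq_abs]
    rw [h2, h1]
    calc ‖∑ n ∈ t, (starRingEnd ℂ) (c n) * (inner ℂ (φ n) v : ℂ)‖
        ≤ ∑ n ∈ t, ‖c n‖ * ‖(inner ℂ (φ n) v : ℂ)‖ := by
          refine (norm_sum_le _ _).trans (le_of_eq (Finset.sum_congr rfl fun n _ => ?_))
          rw [norm_mul, RCLike.norm_conj]
      _ ≤ Real.sqrt (∑ n ∈ t, ‖c n‖ ^ 2) * Real.sqrt (∑ n ∈ t, ‖(inner ℂ (φ n) v : ℂ)‖ ^ 2) :=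
          Real.sum_mul_le_sqrt_mul_sqrt t _ _
      _ ≤ Real.sqrt (∑ n ∈ t, ‖c n‖ ^ 2) * (Real.sqrt B * ‖v‖) := by
          refine mul_le_mul_of_nonneg_left ?_ (Real.sqrt_nonneg _)
          have h3 : ∑ n ∈ t, ‖(inner ℂ (φ n) v : ℂ)‖ ^ 2 ≤ B * ‖v‖ ^ 2 :=
            (Summable.sum_le_tsum t (fun n _ => sq_nonneg _) (hΦ v).1).trans (hΦ v).2
          calc Real.sqrt (∑ n ∈ t, ‖(inner ℂ (φ n) v : ℂ)‖ ^ 2)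
              ≤ Real.sqrt (B * ‖v‖ ^ 2) := Real.sqrt_le_sqrt h3
            _ = Real.sqrt B * ‖v‖ := by
                rw [Real.sqrt_mul hB, Real.sqrt_sq (norm_nonneg v)]
  nlinarith [Real.sqrt_nonneg (∑ n ∈ t, ‖c n‖ ^ 2), Real.sqrt_nonneg B]

-- summability of the synthesis series
private lemma synth_summable {H : Type*} [NormedAddCommGroup H] [InnerProductSpace ℂ H]
    [CompleteSpace H] (φ : ℕ → H) (B : ℝ) (hB : 0 ≤ B)
    (hΦ : ∀ h : H, Summable (fun n => ‖(inner ℂ (φ n) h : ℂ)‖ ^ 2) ∧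
      ∑' n, ‖(inner ℂ (φ n) h : ℂ)‖ ^ 2 ≤ B * ‖h‖ ^ 2)
    (c : ℕ → ℂ) (hc : Summable (fun n => ‖c n‖ ^ 2)) :
    Summable (fun n => c n • φ n) := by
  rw [summable_iff_vanishing_norm]
  intro ε hε
  set δ : ℝ := (ε / (Real.sqrt B + 1)) ^ 2 with hδ
  have hB1 : 0 < Real.sqrt B + 1 := by positivity
  have hδpos : 0 < δ := by positivity
  obtain ⟨s, hs⟩ := summable_iff_vanishing_norm.mp hc δ hδpos
  refine ⟨s, fun t ht => ?_⟩
  have h1 : ∑ n ∈ t, ‖c n‖ ^ 2 < δ := by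
    have := hs t ht
    calc ∑ n ∈ t, ‖c n‖ ^ 2 ≤ ‖∑ n ∈ t, ‖c n‖ ^ 2‖ := le_abs_self _
      _ < δ := this
  calc ‖∑ n ∈ t, c n • φ n‖ ≤ Real.sqrt B * Real.sqrt (∑ n ∈ t, ‖c n‖ ^ 2) :=
        synth_finset φ B hB hΦ c t
    _ ≤ Real.sqrt B * Real.sqrt δ := by
        exact mul_le_mul_of_nonneg_left (Real.sqrt_le_sqrt h1.le) (Real.sqrt_nonneg _)
    _ = Real.sqrt B * (ε / (Real.sqrt B + 1)) := by
        rw [hδ, Real.sqrt_sq (by positivity)]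
    _ < ε := by
        rw [mul_div_assoc' , div_lt_iff₀ hB1]
        nlinarith [Real.sqrt_nonneg B]

/-- If Φ, Ψ are Bessel sequences, m is bounded, and the (bounded) multiplier
M_{m,Φ,Ψ} is invertible on H (a bounded linear bijection of H onto H), then Φ and Ψ are
frames for H. -/
theorem stmt_6
    {H : Type*} [NormedAddCommGroup H] [InnerProductSpace ℂ H] [CompleteSpace H]
    (φ ψ : ℕ → H) (m : ℕ → ℂ)
    (BΦ : ℝ) (hBΦ : 0 < BΦ)
    (hΦ : ∀ h : H, Summable (fun n => ‖(inner ℂ (φ n) h : ℂ)‖ ^ 2) ∧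
      ∑' n, ‖(inner ℂ (φ n) h : ℂ)‖ ^ 2 ≤ BΦ * ‖h‖ ^ 2)
    (BΨ : ℝ) (hBΨ : 0 < BΨ)
    (hΨ : ∀ h : H, Summable (fun n => ‖(inner ℂ (ψ n) h : ℂ)‖ ^ 2) ∧
      ∑' n, ‖(inner ℂ (ψ n) h : ℂ)‖ ^ 2 ≤ BΨ * ‖h‖ ^ 2)
    (b : ℝ) (hm : ∀ n, ‖m n‖ ≤ b)
    (T : H →L[ℂ] H)
    (hT : ∀ f : H, T f = ∑' n, (m n * (inner ℂ (ψ n) f : ℂ)) • φ n)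
    (hbij : Function.Bijective T) :
    (∃ A : ℝ, 0 < A ∧ ∀ h : H, A * ‖h‖ ^ 2 ≤ ∑' n, ‖(inner ℂ (φ n) h : ℂ)‖ ^ 2) ∧
    (∃ A : ℝ, 0 < A ∧ ∀ h : H, A * ‖h‖ ^ 2 ≤ ∑' n, ‖(inner ℂ (ψ n) h : ℂ)‖ ^ 2) := by
  have hb0 : 0 ≤ b := (norm_nonneg (m 0)).trans (hm 0)
  -- coefficient sequence and its ℓ² bound
  set c : H → ℕ → ℂ := fun f n => m n * (inner ℂ (ψ n) f : ℂ) with hcdef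
  have hc2 : ∀ f : H, Summable (fun n => ‖c f n‖ ^ 2) := by
    intro f
    apply Summable.of_nonneg_of_le (fun n => sq_nonneg _) (fun n => ?_)
      (((hΨ f).1).mul_left (b ^ 2))
    have : ‖c f n‖ = ‖m n‖ * ‖(inner ℂ (ψ n) f : ℂ)‖ := norm_mul _ _
    rw [this, mul_pow]
    apply mul_le_mul_of_nonneg_right _ (sq_nonneg _)
    exact pow_le_pow_left₀ (norm_nonneg _) (hm n) 2
  have hc2le : ∀ f : H, ∑' n, ‖c f n‖ ^ 2 ≤ b ^ 2 * (∑' n, ‖(inner ℂ (ψ n) f : ℂ)‖ ^ 2) := by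
    intro f
    rw [← tsum_mul_left]
    apply Summable.tsum_le_tsum _ (hc2 f) (((hΨ f).1).mul_left (b ^ 2))
    intro n
    have : ‖c f n‖ = ‖m n‖ * ‖(inner ℂ (ψ n) f : ℂ)‖ := norm_mul _ _
    rw [this, mul_pow]
    exact mul_le_mul_of_nonneg_right (pow_le_pow_left₀ (norm_nonneg _) (hm n) 2) (sq_nonneg _)
  have hsumm : ∀ f : H, Summable (fun n => c f n • φ n) := fun f =>
    synth_summable φ BΦ hBΦ.le hΦ (c f) (hc2 f)
  -- Key estimate
  have key : ∀ f h : H, ‖(inner ℂ h (T f) : ℂ)‖ ≤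
      b * Real.sqrt (∑' n, ‖(inner ℂ (ψ n) f : ℂ)‖ ^ 2) *
        Real.sqrt (∑' n, ‖(inner ℂ (φ n) h : ℂ)‖ ^ 2) := by
    intro f h
    have h1 : (inner ℂ h (T f) : ℂ) = ∑' n, c f n * (inner ℂ h (φ n) : ℂ) := by
      rw [hT f]
      rw [show (inner ℂ h (∑' n, c f n • φ n) : ℂ) = ∑' n, (inner ℂ h (c f n • φ n) : ℂ) from
        ContinuousLinearMap.map_tsum (innerSL ℂ h) (hsumm f)]
      exact tsum_congr fun n => inner_smul_right _ _ _
    have hnorms : Summable (fun n => ‖c f n * (inner ℂ h (φ n) : ℂ)‖) := by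
      apply Summable.of_nonneg_of_le (fun n => norm_nonneg _) (fun n => ?_)
        (((hc2 f).add (hΦ h).1).div_const 2)
      rw [norm_mul]
      have e1 : ‖(inner ℂ h (φ n) : ℂ)‖ = ‖(inner ℂ (φ n) h : ℂ)‖ := norm_inner_symm _ _
      rw [e1]
      nlinarith [sq_nonneg (‖c f n‖ - ‖(inner ℂ (φ n) h : ℂ)‖)]
    calc ‖(inner ℂ h (T f) : ℂ)‖ ≤ ∑' n, ‖c f n * (inner ℂ h (φ n) : ℂ)‖ := by
          rw [h1]; exact norm_tsum_le_tsum_norm hnorms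
      _ = ∑' n, ‖c f n‖ * ‖(inner ℂ (φ n) h : ℂ)‖ := by
          congr 1; funext n; rw [norm_mul, norm_inner_symm]
      _ ≤ Real.sqrt (∑' n, ‖c f n‖ ^ 2) * Real.sqrt (∑' n, ‖(inner ℂ (φ n) h : ℂ)‖ ^ 2) :=
          tsum_CS _ _ (fun n => norm_nonneg _) (fun n => norm_nonneg _) (hc2 f) (hΦ h).1
      _ ≤ (b * Real.sqrt (∑' n, ‖(inner ℂ (ψ n) f : ℂ)‖ ^ 2)) *
            Real.sqrt (∑' n, ‖(inner ℂ (φ n) h : ℂ)‖ ^ 2) := by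
          refine mul_le_mul_of_nonneg_right ?_ (Real.sqrt_nonneg _)
          calc Real.sqrt (∑' n, ‖c f n‖ ^ 2)
              ≤ Real.sqrt (b ^ 2 * (∑' n, ‖(inner ℂ (ψ n) f : ℂ)‖ ^ 2)) :=
                Real.sqrt_le_sqrt (hc2le f)
            _ = b * Real.sqrt (∑' n, ‖(inner ℂ (ψ n) f : ℂ)‖ ^ 2) := by
                rw [Real.sqrt_mul (sq_nonneg b), Real.sqrt_sq hb0]
      _ = b * Real.sqrt (∑' n, ‖(inner ℂ (ψ n) f : ℂ)‖ ^ 2) *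
            Real.sqrt (∑' n, ‖(inner ℂ (φ n) h : ℂ)‖ ^ 2) := by ring
  -- inverse operator
  set e : H ≃L[ℂ] H := ContinuousLinearEquiv.ofBijective T
    (LinearMap.ker_eq_bot_of_injective (f := (T : H →ₗ[ℂ] H)) hbij.1) (LinearMap.range_eq_top.mpr hbij.2) with he
  set C : ℝ := ‖(e.symm : H →L[ℂ] H)‖ with hC
  have hC0 : 0 ≤ C := norm_nonneg _
  have hCf : ∀ h : H, ‖e.symm h‖ ≤ C * ‖h‖ := fun h =>
    ContinuousLinearMap.le_opNorm (e.symm : H →L[ℂ] H) h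
  have heT : ∀ x : H, e x = T x := fun x => rfl
  -- nonnegativity of the frame sums
  have SΦ0 : ∀ h : H, 0 ≤ ∑' n, ‖(inner ℂ (φ n) h : ℂ)‖ ^ 2 :=
    fun h => tsum_nonneg (fun n => sq_nonneg _)
  have SΨ0 : ∀ h : H, 0 ≤ ∑' n, ‖(inner ℂ (ψ n) h : ℂ)‖ ^ 2 :=
    fun h => tsum_nonneg (fun n => sq_nonneg _)
  have sqrtΨ : ∀ f : H, Real.sqrt (∑' n, ‖(inner ℂ (ψ n) f : ℂ)‖ ^ 2) ≤ Real.sqrt BΨ * ‖f‖ := by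
    intro f
    calc Real.sqrt (∑' n, ‖(inner ℂ (ψ n) f : ℂ)‖ ^ 2) ≤ Real.sqrt (BΨ * ‖f‖ ^ 2) :=
          Real.sqrt_le_sqrt (hΨ f).2
      _ = Real.sqrt BΨ * ‖f‖ := by
          rw [Real.sqrt_mul hBΨ.le, Real.sqrt_sq (norm_nonneg f)]
  have sqrtΦ : ∀ h : H, Real.sqrt (∑' n, ‖(inner ℂ (φ n) h : ℂ)‖ ^ 2) ≤ Real.sqrt BΦ * ‖h‖ := by
    intro h
    calc Real.sqrt (∑' n, ‖(inner ℂ (φ n) h : ℂ)‖ ^ 2) ≤ Real.sqrt (BΦ * ‖h‖ ^ 2) :=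
          Real.sqrt_le_sqrt (hΦ h).2
      _ = Real.sqrt BΦ * ‖h‖ := by
          rw [Real.sqrt_mul hBΦ.le, Real.sqrt_sq (norm_nonneg h)]
  have hinner_self : ∀ h : H, ‖(inner ℂ h h : ℂ)‖ = ‖h‖ ^ 2 := by
    intro h
    rw [inner_self_eq_norm_sq_to_K (𝕜 := ℂ)]
    simp [sq_abs]
  constructor
  · -- lower bound for φ
    set D : ℝ := (b + 1) * Real.sqrt BΨ * (C + 1) with hD
    have hDpos : 0 < D := by positivity
    refine ⟨(D ^ 2)⁻¹, by positivity, fun h => ?_⟩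
    have hlin : ‖h‖ ≤ D * Real.sqrt (∑' n, ‖(inner ℂ (φ n) h : ℂ)‖ ^ 2) := by
      rcases eq_or_ne h 0 with rfl | hne
      · simpa using mul_nonneg hDpos.le (Real.sqrt_nonneg _)
      have hpos : 0 < ‖h‖ := norm_pos_iff.mpr hne
      set f : H := e.symm h with hf
      have hTf : T f = h := by
        rw [hf, ← heT]
        exact e.apply_symm_apply h
      have h1 : ‖h‖ ^ 2 ≤ b * Real.sqrt (∑' n, ‖(inner ℂ (ψ n) f : ℂ)‖ ^ 2) *
          Real.sqrt (∑' n, ‖(inner ℂ (φ n) h : ℂ)‖ ^ 2) := by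
        have := key f h
        rw [hTf, hinner_self h] at this
        exact this
      have h2 : b * Real.sqrt (∑' n, ‖(inner ℂ (ψ n) f : ℂ)‖ ^ 2) ≤ D * ‖h‖ := by
        calc b * Real.sqrt (∑' n, ‖(inner ℂ (ψ n) f : ℂ)‖ ^ 2)
            ≤ b * (Real.sqrt BΨ * ‖f‖) :=
              mul_le_mul_of_nonneg_left (sqrtΨ f) hb0
          _ ≤ b * (Real.sqrt BΨ * (C * ‖h‖)) := by
              refine mul_le_mul_of_nonneg_left
                (mul_le_mul_of_nonneg_left ?_ (Real.sqrt_nonneg _)) hb0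
              exact hCf h
          _ ≤ D * ‖h‖ := by
              rw [hD]
              nlinarith [mul_nonneg (Real.sqrt_nonneg BΨ) (norm_nonneg h), hb0, hC0,
                mul_nonneg hb0 (mul_nonneg (Real.sqrt_nonneg BΨ) (norm_nonneg h)),
                mul_nonneg hC0 (mul_nonneg (Real.sqrt_nonneg BΨ) (norm_nonneg h))]
      have h3 : ‖h‖ ^ 2 ≤ D * ‖h‖ * Real.sqrt (∑' n, ‖(inner ℂ (φ n) h : ℂ)‖ ^ 2) :=
        h1.trans (mul_le_mul_of_nonneg_right h2 (Real.sqrt_nonneg _))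
      rw [sq] at h3
      have h4 : ‖h‖ * ‖h‖ ≤ D * Real.sqrt (∑' n, ‖(inner ℂ (φ n) h : ℂ)‖ ^ 2) * ‖h‖ :=
        h3.trans_eq (mul_right_comm _ _ _)
      exact (mul_le_mul_iff_of_pos_right hpos).mp h4
    have hsq : ‖h‖ ^ 2 ≤ D ^ 2 * (∑' n, ‖(inner ℂ (φ n) h : ℂ)‖ ^ 2) := by
      have := mul_le_mul hlin hlin (norm_nonneg h)
        (mul_nonneg hDpos.le (Real.sqrt_nonneg _))
      calc ‖h‖ ^ 2 = ‖h‖ * ‖h‖ := sq ‖h‖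
        _ ≤ (D * Real.sqrt (∑' n, ‖(inner ℂ (φ n) h : ℂ)‖ ^ 2)) *
              (D * Real.sqrt (∑' n, ‖(inner ℂ (φ n) h : ℂ)‖ ^ 2)) := this
        _ = D ^ 2 * Real.sqrt (∑' n, ‖(inner ℂ (φ n) h : ℂ)‖ ^ 2) ^ 2 := by ring
        _ = D ^ 2 * (∑' n, ‖(inner ℂ (φ n) h : ℂ)‖ ^ 2) := by
            rw [Real.sq_sqrt (SΦ0 h)]
    rw [inv_mul_le_iff₀ (by positivity)]
    exact hsq
  · -- lower bound for ψ
    set D : ℝ := (C + 1) * ((b + 1) * Real.sqrt BΦ) with hD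
    have hDpos : 0 < D := by positivity
    refine ⟨(D ^ 2)⁻¹, by positivity, fun g => ?_⟩
    have hlin : ‖g‖ ≤ D * Real.sqrt (∑' n, ‖(inner ℂ (ψ n) g : ℂ)‖ ^ 2) := by
      set u : H := T g with hu
      have hgu : g = e.symm u := by
        rw [hu, ← heT]
        exact (e.symm_apply_apply g).symm
      have hTu : ‖u‖ ≤ b * Real.sqrt BΦ * Real.sqrt (∑' n, ‖(inner ℂ (ψ n) g : ℂ)‖ ^ 2) := by
        rcases eq_or_ne u 0 with h0 | h0
        · rw [h0, norm_zero]
          positivity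
        have hupos : 0 < ‖u‖ := norm_pos_iff.mpr h0
        have h1 : ‖u‖ ^ 2 ≤ b * Real.sqrt (∑' n, ‖(inner ℂ (ψ n) g : ℂ)‖ ^ 2) *
            Real.sqrt (∑' n, ‖(inner ℂ (φ n) u : ℂ)‖ ^ 2) := by
          have := key g u
          rw [← hu, hinner_self u] at this
          exact this
        have h2 : ‖u‖ ^ 2 ≤ b * Real.sqrt (∑' n, ‖(inner ℂ (ψ n) g : ℂ)‖ ^ 2) *
            (Real.sqrt BΦ * ‖u‖) := by
          refine h1.trans (mul_le_mul_of_nonneg_left (sqrtΦ u)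
            (mul_nonneg hb0 (Real.sqrt_nonneg _)))
        rw [sq] at h2
        have h3 : ‖u‖ * ‖u‖ ≤
            b * Real.sqrt BΦ * Real.sqrt (∑' n, ‖(inner ℂ (ψ n) g : ℂ)‖ ^ 2) * ‖u‖ :=
          h2.trans_eq (by ring)
        exact (mul_le_mul_iff_of_pos_right hupos).mp h3
      calc ‖g‖ = ‖e.symm u‖ := by rw [← hgu]
        _ ≤ C * ‖u‖ := hCf u
        _ ≤ C * (b * Real.sqrt BΦ * Real.sqrt (∑' n, ‖(inner ℂ (ψ n) g : ℂ)‖ ^ 2)) :=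
            mul_le_mul_of_nonneg_left hTu hC0
        _ ≤ D * Real.sqrt (∑' n, ‖(inner ℂ (ψ n) g : ℂ)‖ ^ 2) := by
            rw [hD]
            nlinarith [mul_nonneg (Real.sqrt_nonneg BΦ)
                (Real.sqrt_nonneg (∑' n, ‖(inner ℂ (ψ n) g : ℂ)‖ ^ 2)), hb0, hC0,
              mul_nonneg hb0 (mul_nonneg (Real.sqrt_nonneg BΦ)
                (Real.sqrt_nonneg (∑' n, ‖(inner ℂ (ψ n) g : ℂ)‖ ^ 2))),
              mul_nonneg hC0 (mul_nonneg (Real.sqrt_nonneg BΦ)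
                (Real.sqrt_nonneg (∑' n, ‖(inner ℂ (ψ n) g : ℂ)‖ ^ 2)))]
    have hsq : ‖g‖ ^ 2 ≤ D ^ 2 * (∑' n, ‖(inner ℂ (ψ n) g : ℂ)‖ ^ 2) := by
      have := mul_le_mul hlin hlin (norm_nonneg g)
        (mul_nonneg hDpos.le (Real.sqrt_nonneg _))
      calc ‖g‖ ^ 2 = ‖g‖ * ‖g‖ := sq ‖g‖
        _ ≤ (D * Real.sqrt (∑' n, ‖(inner ℂ (ψ n) g : ℂ)‖ ^ 2)) *
              (D * Real.sqrt (∑' n, ‖(inner ℂ (ψ n) g : ℂ)‖ ^ 2)) := this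
        _ = D ^ 2 * Real.sqrt (∑' n, ‖(inner ℂ (ψ n) g : ℂ)‖ ^ 2) ^ 2 := by ring
        _ = D ^ 2 * (∑' n, ‖(inner ℂ (ψ n) g : ℂ)‖ ^ 2) := by
            rw [Real.sq_sqrt (SΨ0 g)]
    rw [inv_mul_le_iff₀ (by positivity)]
    exact hsq
end

section
/- Let Φ = (φ_n) and Ψ = (ψ_n) be Riesz bases for a complex Hilbert space H and let m : ℕ → ℂ be semi-normalized (0 < inf_n |m_n| ≤ sup_n |m_n| < ∞). Then for every f ∈ H the family (m_n ⟨f, ψ_n⟩ φ_n)_{n∈ℕ} is unconditionally summable, and the operator M_{m,Φ,Ψ} : f ↦ ∑_n m_n ⟨f, ψ_n⟩ φ_n is invertible on H, i.e. a bounded linear bijection of H onto H. -/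
noncomputable section RieszAux

open scoped ENNReal ComplexConjugate

abbrev ℓ2 : Type := lp (fun _ : ℕ => ℂ) 2

lemma two_toReal : (2 : ℝ≥0∞).toReal = 2 := by norm_num

lemma memℓ2_iff {c : ℕ → ℂ} : Memℓp c 2 ↔ Summable (fun n => ‖c n‖ ^ 2) := by
  rw [memℓp_gen_iff (by norm_num : 0 < (2:ℝ≥0∞).toReal)]
  have : ∀ n, ‖c n‖ ^ (2:ℝ≥0∞).toReal = ‖c n‖ ^ 2 := fun n => by
    rw [two_toReal, ← Real.rpow_natCast]; norm_num
  simp only [this]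

lemma ℓ2_summable_sq (c : ℓ2) : Summable (fun n => ‖c n‖ ^ 2) :=
  memℓ2_iff.mp (lp.memℓp c)

lemma ℓ2_norm_sq (c : ℓ2) : ‖c‖ ^ 2 = ∑' n, ‖c n‖ ^ 2 := by
  have h := lp.norm_rpow_eq_tsum (by norm_num : 0 < (2:ℝ≥0∞).toReal) c
  rw [two_toReal] at h
  calc ‖c‖ ^ 2 = ‖c‖ ^ (2:ℝ) := by rw [← Real.rpow_natCast]; norm_num
  _ = ∑' n, ‖c n‖ ^ (2:ℝ) := h
  _ = ∑' n, ‖c n‖ ^ 2 := by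
      congr 1; funext n; rw [← Real.rpow_natCast]; norm_num

end RieszAux

noncomputable section RieszAux2

open scoped ENNReal
open ContinuousLinearMap

variable {H : Type*} [NormedAddCommGroup H] [InnerProductSpace ℂ H] [CompleteSpace H]

/-- The synthesis operator of a sequence satisfying the upper Riesz condition, as a
continuous linear map `ℓ² → H`. -/
def rieszSynth (φ : ℕ → H) (B : ℝ) (hB : 0 ≤ B)
    (hs : ∀ c : ℕ → ℂ, Summable (fun n => ‖c n‖ ^ 2) → Summable (fun n => c n • φ n))
    (hub : ∀ c : ℕ → ℂ, Summable (fun n => ‖c n‖ ^ 2) →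
      ‖∑' n, c n • φ n‖ ^ 2 ≤ B * ∑' n, ‖c n‖ ^ 2) :
    ℓ2 →L[ℂ] H := by
  refine LinearMap.mkContinuous
    { toFun := fun c => ∑' n, (c : ℕ → ℂ) n • φ n
      map_add' := fun c d => by
        have hc := hs c (ℓ2_summable_sq c)
        have hd := hs d (ℓ2_summable_sq d)
        calc ∑' n, ((c + d) : ℕ → ℂ) n • φ n
            = ∑' n, ((c : ℕ → ℂ) n • φ n + (d : ℕ → ℂ) n • φ n) := by
              apply tsum_congr; intro n
              simp [Pi.add_apply, add_smul]
          _ = (∑' n, (c : ℕ → ℂ) n • φ n) + ∑' n, (d : ℕ → ℂ) n • φ n := Summable.tsum_add hc hd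
      map_smul' := fun a c => by
        calc ∑' n, ((a • c) : ℕ → ℂ) n • φ n
            = ∑' n, a • ((c : ℕ → ℂ) n • φ n) := by
              apply tsum_congr; intro n
              simp [Pi.smul_apply, smul_smul]
          _ = a • ∑' n, (c : ℕ → ℂ) n • φ n := tsum_const_smul'' a }
    (Real.sqrt B) ?_
  intro c
  have h1 := hub c (ℓ2_summable_sq c)
  have h2 : ‖∑' n, (c : ℕ → ℂ) n • φ n‖ ^ 2 ≤ (Real.sqrt B * ‖c‖) ^ 2 := by
    rw [mul_pow, Real.sq_sqrt hB, ℓ2_norm_sq]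
    exact h1
  exact (pow_le_pow_iff_left₀ (norm_nonneg _) (by positivity) two_ne_zero).mp h2

lemma rieszSynth_apply (φ : ℕ → H) (B : ℝ) (hB : 0 ≤ B) (hs) (hub) (c : ℓ2) :
    rieszSynth φ B hB hs hub c = ∑' n, (c : ℕ → ℂ) n • φ n := rfl

lemma rieszSynth_single (φ : ℕ → H) (B : ℝ) (hB : 0 ≤ B) (hs) (hub) (n : ℕ) :
    rieszSynth φ B hB hs hub (lp.single 2 n (1 : ℂ)) = φ n := by
  rw [rieszSynth_apply, tsum_eq_single n]
  · rw [lp.single_apply_self, one_smul]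
  · intro k hk
    rw [lp.single_apply_ne 2 n _ hk, zero_smul]

lemma rieszSynth_bijective (φ : ℕ → H)
    (hd : Dense (Submodule.span ℂ (Set.range φ) : Set H))
    (A B : ℝ) (hA : 0 < A) (hB : 0 ≤ B) (hs) (hub)
    (hlb : ∀ c : ℕ → ℂ, Summable (fun n => ‖c n‖ ^ 2) →
      A * ∑' n, ‖c n‖ ^ 2 ≤ ‖∑' n, c n • φ n‖ ^ 2) :
    Function.Bijective (rieszSynth φ B hB hs hub) := by
  set U := rieszSynth φ B hB hs hub with hU
  rw [ContinuousLinearMap.bijective_iff_dense_range_and_antilipschitz]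
  constructor
  · have hle : Submodule.span ℂ (Set.range φ) ≤ U.range := by
      rw [Submodule.span_le]
      rintro _ ⟨n, rfl⟩
      exact ⟨lp.single 2 n 1, rieszSynth_single φ B hB hs hub n⟩
    rw [eq_top_iff]
    calc (⊤ : Submodule ℂ H)
        = (Submodule.span ℂ (Set.range φ)).topologicalClosure :=
          (Submodule.dense_iff_topologicalClosure_eq_top.mp hd).symm
      _ ≤ U.range.topologicalClosure := Submodule.topologicalClosure_mono hle
  · refine ⟨⟨(Real.sqrt A)⁻¹, by positivity⟩, U.antilipschitz_of_bound fun c => ?_⟩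
    have h1 := hlb c (ℓ2_summable_sq c)
    have h2 : ‖c‖ ^ 2 ≤ ((Real.sqrt A)⁻¹ * ‖U c‖) ^ 2 := by
      rw [mul_pow, ← Real.sqrt_inv, Real.sq_sqrt (by positivity)]
      rw [← ℓ2_norm_sq] at h1
      calc ‖c‖ ^ 2 = A⁻¹ * (A * ‖c‖ ^ 2) := by field_simp
        _ ≤ A⁻¹ * ‖U c‖ ^ 2 := by
            exact mul_le_mul_of_nonneg_left h1 (by positivity)
    exact (pow_le_pow_iff_left₀ (norm_nonneg _) (mul_nonneg (NNReal.coe_nonneg _) (norm_nonneg _)) two_ne_zero).mp h2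

lemma diag_memℓ2 (m : ℕ → ℂ) (b : ℝ) (hb : ∀ n, ‖m n‖ ≤ b) (c : ℓ2) :
    Memℓp (fun n => m n * (c : ℕ → ℂ) n) 2 := by
  rw [memℓ2_iff]
  refine Summable.of_nonneg_of_le (fun n => by positivity) (fun n => ?_)
    ((ℓ2_summable_sq c).mul_left (b ^ 2))
  have hb0 : 0 ≤ b := le_trans (norm_nonneg _) (hb 0)
  rw [norm_mul, mul_pow]
  exact mul_le_mul_of_nonneg_right (pow_le_pow_left₀ (norm_nonneg _) (hb n) 2) (by positivity)

/-- The diagonal multiplication operator on ℓ². -/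
def diagCLM (m : ℕ → ℂ) (b : ℝ) (hb : ∀ n, ‖m n‖ ≤ b) : ℓ2 →L[ℂ] ℓ2 := by
  refine LinearMap.mkContinuous
    { toFun := fun c => (⟨fun n => m n * (c : ℕ → ℂ) n, diag_memℓ2 m b hb c⟩ : ℓ2)
      map_add' := fun c d => by
        ext n
        simp only [lp.coeFn_add, Pi.add_apply]
        exact mul_add _ _ _
      map_smul' := fun a c => by
        ext n
        simp only [lp.coeFn_smul, Pi.smul_apply, RingHom.id_apply, smul_eq_mul]
        ring } b ?_
  intro c
  have hb0 : 0 ≤ b := le_trans (norm_nonneg _) (hb 0)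
  set Dc : ℓ2 := ⟨fun n => m n * (c : ℕ → ℂ) n, diag_memℓ2 m b hb c⟩ with hDc
  have h2 : ‖Dc‖ ^ 2 ≤ (b * ‖c‖) ^ 2 := by
    rw [ℓ2_norm_sq, mul_pow, ℓ2_norm_sq, ← tsum_mul_left]
    refine Summable.tsum_le_tsum (fun n => ?_) (ℓ2_summable_sq Dc) ((ℓ2_summable_sq c).mul_left _)
    show ‖m n * (c : ℕ → ℂ) n‖ ^ 2 ≤ b ^ 2 * ‖(c : ℕ → ℂ) n‖ ^ 2
    rw [norm_mul, mul_pow]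
    exact mul_le_mul_of_nonneg_right (pow_le_pow_left₀ (norm_nonneg _) (hb n) 2) (by positivity)
  exact (pow_le_pow_iff_left₀ (norm_nonneg _) (by positivity) two_ne_zero).mp h2

lemma diagCLM_apply (m : ℕ → ℂ) (b : ℝ) (hb : ∀ n, ‖m n‖ ≤ b) (c : ℓ2) (n : ℕ) :
    (diagCLM m b hb c : ℕ → ℂ) n = m n * (c : ℕ → ℂ) n := rfl

end RieszAux2

/-- If Φ, Ψ are Riesz bases and m is semi-normalized, then M_{m,Φ,Ψ} is
unconditionally convergent on H and invertible on H. -/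
theorem stmt_7
    {H : Type*} [NormedAddCommGroup H] [InnerProductSpace ℂ H] [CompleteSpace H]
    (φ ψ : ℕ → H) (m : ℕ → ℂ)
    (hΦ : IsRieszBasis φ) (hΨ : IsRieszBasis ψ)
    (hm : ∃ a b : ℝ, 0 < a ∧ (∀ n, a ≤ ‖m n‖) ∧ (∀ n, ‖m n‖ ≤ b)) :
    (∀ f : H, Summable (fun n => (m n * (inner ℂ (ψ n) f : ℂ)) • φ n)) ∧
    ∃ T : H →L[ℂ] H,
      (∀ f : H, T f = ∑' n, (m n * (inner ℂ (ψ n) f : ℂ)) • φ n) ∧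
      Function.Bijective T := by
  classical
  obtain ⟨a, b, ha, hma, hmb⟩ := hm
  obtain ⟨hdφ, A₁, B₁, hA₁, hB₁, hφ⟩ := hΦ
  obtain ⟨hdψ, A₂, B₂, hA₂, hB₂, hψ⟩ := hΨ
  -- synthesis operators
  set Uφ : ℓ2 →L[ℂ] H :=
    rieszSynth φ B₁ hB₁.le (fun c hc => (hφ c hc).1) (fun c hc => (hφ c hc).2.2) with hUφdef
  set Uψ : ℓ2 →L[ℂ] H :=
    rieszSynth ψ B₂ hB₂.le (fun c hc => (hψ c hc).1) (fun c hc => (hψ c hc).2.2) with hUψdef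
  have hUφbij : Function.Bijective Uφ :=
    rieszSynth_bijective φ hdφ A₁ B₁ hA₁ hB₁.le _ _ (fun c hc => (hφ c hc).2.1)
  have hUψbij : Function.Bijective Uψ :=
    rieszSynth_bijective ψ hdψ A₂ B₂ hA₂ hB₂.le _ _ (fun c hc => (hψ c hc).2.1)
  -- the analysis operator of ψ, as the adjoint of its synthesis operator
  set V : H →L[ℂ] ℓ2 := ContinuousLinearMap.adjoint Uψ with hVdef
  have hVapp : ∀ (f : H) (n : ℕ), (V f : ℕ → ℂ) n = (inner ℂ (ψ n) f : ℂ) := by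
    intro f n
    have h1 : (inner ℂ (lp.single 2 n (1 : ℂ)) (V f) : ℂ) = (V f : ℕ → ℂ) n := by
      rw [lp.inner_single_left]
      simp [RCLike.inner_apply]
    have h2 : (inner ℂ (lp.single 2 n (1 : ℂ)) (V f) : ℂ)
        = (inner ℂ (Uψ (lp.single 2 n (1 : ℂ))) f : ℂ) :=
      ContinuousLinearMap.adjoint_inner_right Uψ _ _
    rw [← h1, h2, hUψdef, rieszSynth_single]
  have hVbij : Function.Bijective V := by
    set e := ContinuousLinearEquiv.ofBijective Uψ
      (LinearMap.ker_eq_bot.mpr hUψbij.injective)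
      (LinearMap.range_eq_top.mpr hUψbij.surjective) with hedef
    have hecoe : ⇑e = ⇑Uψ := ContinuousLinearEquiv.coeFn_ofBijective _ _ _
    set W : ℓ2 →L[ℂ] H := ContinuousLinearMap.adjoint (e.symm : H →L[ℂ] ℓ2) with hWdef
    have h1 : Uψ ∘L (e.symm : H →L[ℂ] ℓ2) = ContinuousLinearMap.id ℂ H := by
      ext x
      simp only [ContinuousLinearMap.coe_comp', Function.comp_apply,
        ContinuousLinearMap.coe_id', id_eq, ContinuousLinearEquiv.coe_coe]
      rw [← hecoe]
      exact e.apply_symm_apply x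
    have h2 : (e.symm : H →L[ℂ] ℓ2) ∘L Uψ = ContinuousLinearMap.id ℂ ℓ2 := by
      ext c
      simp only [ContinuousLinearMap.coe_comp', Function.comp_apply,
        ContinuousLinearMap.coe_id', id_eq, ContinuousLinearEquiv.coe_coe]
      rw [← hecoe]
      exact congrFun (congrArg _ (e.symm_apply_apply c)) _
    have hWV : W ∘L V = ContinuousLinearMap.id ℂ H := by
      rw [hWdef, hVdef, ← ContinuousLinearMap.adjoint_comp, h1,
        ContinuousLinearMap.adjoint_id]
    have hVW : V ∘L W = ContinuousLinearMap.id ℂ ℓ2 := by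
      rw [hWdef, hVdef, ← ContinuousLinearMap.adjoint_comp, h2,
        ContinuousLinearMap.adjoint_id]
    refine ⟨Function.LeftInverse.injective (g := W) ?_,
      Function.RightInverse.surjective (g := W) ?_⟩
    · intro x
      exact DFunLike.congr_fun hWV x
    · intro x
      exact DFunLike.congr_fun hVW x
  -- the diagonal operator
  have hb0 : 0 < b := lt_of_lt_of_le ha (le_trans (hma 0) (hmb 0))
  set D : ℓ2 →L[ℂ] ℓ2 := diagCLM m b hmb with hDdef
  have hm0 : ∀ n, m n ≠ 0 := fun n => by
    intro h
    have := hma n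
    rw [h, norm_zero] at this
    exact absurd (lt_of_lt_of_le ha this) (lt_irrefl 0)
  have hinv : ∀ n, ‖(m n)⁻¹‖ ≤ a⁻¹ := fun n => by
    rw [norm_inv]
    exact inv_anti₀ ha (hma n)
  set D' : ℓ2 →L[ℂ] ℓ2 := diagCLM (fun n => (m n)⁻¹) a⁻¹ hinv with hD'def
  have hDbij : Function.Bijective D := by
    have hl : ∀ c : ℓ2, D' (D c) = c := by
      intro c
      ext n
      show (m n)⁻¹ * (m n * (c : ℕ → ℂ) n) = (c : ℕ → ℂ) n
      rw [← mul_assoc, inv_mul_cancel₀ (hm0 n), one_mul]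
    have hr : ∀ c : ℓ2, D (D' c) = c := by
      intro c
      ext n
      show m n * ((m n)⁻¹ * (c : ℕ → ℂ) n) = (c : ℕ → ℂ) n
      rw [← mul_assoc, mul_inv_cancel₀ (hm0 n), one_mul]
    exact ⟨Function.LeftInverse.injective hl, Function.RightInverse.surjective hr⟩
  -- the key pointwise identity
  have hkey : ∀ (f : H) (n : ℕ),
      (m n * (inner ℂ (ψ n) f : ℂ)) • φ n = ((D (V f)) : ℕ → ℂ) n • φ n := by
    intro f n
    rw [diagCLM_apply, hVapp]
  constructor
  · intro f
    have hsum := (hφ ((D (V f)) : ℕ → ℂ) (ℓ2_summable_sq _)).1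
    exact hsum.congr fun n => (hkey f n).symm
  · refine ⟨Uφ ∘L (D ∘L V), fun f => ?_, ?_⟩
    · show Uφ (D (V f)) = _
      rw [hUφdef, rieszSynth_apply]
      exact tsum_congr fun n => (hkey f n).symm
    · simp only [ContinuousLinearMap.coe_comp']
      exact hUφbij.comp (hDbij.comp hVbij)
end

section
/- Let Φ = (φ_n) be a Riesz basis for a complex Hilbert space H, let Ψ = (ψ_n) be a sequence in H and m : ℕ → ℂ, and assume the multiplier M_{m,Φ,Ψ} is well defined on H (for every f ∈ H the partial sums ∑_{n<N} m_n ⟨f, ψ_n⟩ φ_n converge in H). Then the operator M_{m,Φ,Ψ} : f ↦ ∑_n m_n ⟨f, ψ_n⟩ φ_n is invertible on H (a bounded linear bijection of H onto H) if and only if the sequence mΨ = (m_n ψ_n) is a Riesz basis for H. -/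
open Filter

noncomputable section AuxRiesz

open Topology

local notation "K2" => lp (fun _ : ℕ => ℂ) (2 : ENNReal)

private lemma rpow_two' (x : ℝ) : x ^ (2 : ENNReal).toReal = x ^ 2 := by
  rw [show ((2 : ENNReal).toReal) = ((2 : ℕ) : ℝ) by norm_num, Real.rpow_natCast]

private lemma memK2 {c : ℕ → ℂ} (hc : Summable fun n => ‖c n‖ ^ 2) : Memℓp c 2 :=
  memℓp_gen (by simp only [rpow_two']; exact hc)

private lemma summable_sq_K2 (f : K2) : Summable fun n => ‖f n‖ ^ 2 := by
  have := (memℓp_gen_iff (p := 2) (by norm_num)).1 (lp.memℓp f)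
  simp only [rpow_two'] at this
  exact this

private lemma norm_sq_K2 (f : K2) : ‖f‖ ^ 2 = ∑' n, ‖f n‖ ^ 2 := by
  have := lp.norm_rpow_eq_tsum (p := 2) (by norm_num) f
  simp only [rpow_two'] at this
  exact this

variable {H : Type*} [NormedAddCommGroup H] [InnerProductSpace ℂ H] [CompleteSpace H]

private lemma W_single {x : ℕ → H} {W : K2 →L[ℂ] H}
    (hW : ∀ c : K2, HasSum (fun n => c n • x n) (W c)) (n : ℕ) :
    W (lp.single 2 n (1 : ℂ)) = x n := by
  refine (hW _).unique ?_
  have h : (fun k => ((lp.single 2 n (1 : ℂ) : K2) : ∀ _ : ℕ, ℂ) k • x k)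
      = fun k => if k = n then x n else 0 := by
    funext k
    by_cases hk : k = n
    · subst hk; rw [lp.single_apply_self]; simp
    · rw [lp.single_apply_ne _ _ _ hk]; simp [hk]
  rw [h]
  exact hasSum_ite_eq n (x n)

private lemma riesz_synthesis {x : ℕ → H} (hx : IsRieszBasis x) :
    ∃ W : K2 →L[ℂ] H, (∀ c : K2, HasSum (fun n => c n • x n) (W c)) ∧ Function.Bijective W := by
  obtain ⟨hd, A, B, hA, hB, hbd⟩ := hx
  have hsummable : ∀ c : K2, Summable fun n => c n • x n :=
    fun c => (hbd c (summable_sq_K2 c)).1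
  let Wl : K2 →ₗ[ℂ] H :=
    { toFun := fun c => ∑' n, c n • x n
      map_add' := fun c d => by
        rw [← Summable.tsum_add (hsummable c) (hsummable d)]
        exact tsum_congr fun n => by
          simp [lp.coeFn_add, add_smul]
      map_smul' := fun a c => by
        simp only [RingHom.id_apply]
        rw [← Summable.tsum_const_smul a (hsummable c)]
        exact tsum_congr fun n => by
          simp [lp.coeFn_smul, smul_smul] }
  have hWb : ∀ c : K2, ‖Wl c‖ ≤ Real.sqrt B * ‖c‖ := by
    intro c
    have h1 := (hbd c (summable_sq_K2 c)).2.2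
    have h2 : ‖Wl c‖ ^ 2 ≤ (Real.sqrt B * ‖c‖) ^ 2 := by
      rw [mul_pow, Real.sq_sqrt hB.le, norm_sq_K2]
      exact h1
    have := Real.sqrt_le_sqrt h2
    rwa [Real.sqrt_sq (norm_nonneg _), Real.sqrt_sq (by positivity)] at this
  let W : K2 →L[ℂ] H := Wl.mkContinuous (Real.sqrt B) hWb
  have hWc : ∀ c : K2, W c = ∑' n, c n • x n := fun c => rfl
  have hWhs : ∀ c : K2, HasSum (fun n => c n • x n) (W c) :=
    fun c => (hsummable c).hasSum
  have hlow : ∀ c : K2, ‖c‖ ≤ (Real.sqrt A)⁻¹ * ‖W c‖ := by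
    intro c
    have h1 := (hbd c (summable_sq_K2 c)).2.1
    rw [← hWc c] at h1
    have h2 : ‖c‖ ^ 2 ≤ ((Real.sqrt A)⁻¹ * ‖W c‖) ^ 2 := by
      rw [mul_pow, inv_pow, Real.sq_sqrt hA.le, norm_sq_K2]
      rw [inv_mul_eq_div, le_div_iff₀ hA]
      nlinarith [h1]
    have := Real.sqrt_le_sqrt h2
    rwa [Real.sqrt_sq (norm_nonneg _), Real.sqrt_sq (by positivity)] at this
  have hanti : AntilipschitzWith (Real.toNNReal (Real.sqrt A)⁻¹) W :=
    W.antilipschitz_of_bound (fun c => by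
      rw [Real.coe_toNNReal _ (by positivity)]; exact hlow c)
  have hspan : (Submodule.span ℂ (Set.range x) : Set H) ⊆ Set.range W := by
    intro y hy
    have hle : Submodule.span ℂ (Set.range x) ≤ LinearMap.range (W : K2 →ₗ[ℂ] H) := by
      rw [Submodule.span_le]
      rintro - ⟨n, rfl⟩
      exact LinearMap.mem_range.mpr ⟨lp.single 2 n 1, W_single hWhs n⟩
    exact hle hy
  have hWs : Function.Surjective W := by
    intro h
    have h1 : h ∈ closure (Submodule.span ℂ (Set.range x) : Set H) := hd h
    have h2 : closure (Submodule.span ℂ (Set.range x) : Set H) ⊆ Set.range W :=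
      (hanti.isClosed_range W.uniformContinuous).closure_subset_iff.mpr hspan
    exact h2 h1
  exact ⟨W, hWhs, hanti.injective, hWs⟩

private lemma riesz_of_synthesis {x : ℕ → H} {W : K2 →L[ℂ] H}
    (hW : ∀ c : K2, HasSum (fun n => c n • x n) (W c)) (hbij : Function.Bijective W) :
    IsRieszBasis x := by
  have hker : LinearMap.ker (W : K2 →ₗ[ℂ] H) = ⊥ :=
    LinearMap.ker_eq_bot'.mpr fun v hv => hbij.1 (by rw [map_zero]; exact hv)
  have hrange : LinearMap.range (W : K2 →ₗ[ℂ] H) = ⊤ := LinearMap.range_eq_top.mpr hbij.2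
  let E := ContinuousLinearEquiv.ofBijective W hker hrange
  have hE : ∀ c : K2, E.symm (W c) = c :=
    fun c => ContinuousLinearEquiv.ofBijective_symm_apply_apply W hker hrange c
  constructor
  · intro h
    obtain ⟨c, rfl⟩ := hbij.2 h
    refine mem_closure_of_tendsto (hW c).tendsto_sum_nat (Eventually.of_forall fun N => ?_)
    exact Submodule.sum_mem _ fun n _ =>
      Submodule.smul_mem _ _ (Submodule.subset_span ⟨n, rfl⟩)
  · refine ⟨((‖(E.symm : H →L[ℂ] K2)‖ + 1) ^ 2)⁻¹, (‖W‖ + 1) ^ 2, by positivity, by positivity,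
      fun c hc => ?_⟩
    set cl : K2 := ⟨c, memK2 hc⟩ with hcldef
    have hs : HasSum (fun n => c n • x n) (W cl) := hW cl
    have h1 : ∑' n, ‖c n‖ ^ 2 = ‖cl‖ ^ 2 := by
      rw [norm_sq_K2 cl]
    refine ⟨hs.summable, ?_, ?_⟩
    · rw [hs.tsum_eq, h1]
      have h3 : ‖cl‖ ≤ (‖(E.symm : H →L[ℂ] K2)‖ + 1) * ‖W cl‖ := by
        calc ‖cl‖ = ‖(E.symm : H →L[ℂ] K2) (W cl)‖ := by
              rw [ContinuousLinearEquiv.coe_coe, hE cl]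
        _ ≤ ‖(E.symm : H →L[ℂ] K2)‖ * ‖W cl‖ := (E.symm : H →L[ℂ] K2).le_opNorm _
        _ ≤ (‖(E.symm : H →L[ℂ] K2)‖ + 1) * ‖W cl‖ := by
            nlinarith [norm_nonneg (W cl)]
      rw [inv_mul_le_iff₀ (by positivity)]
      nlinarith [norm_nonneg cl, norm_nonneg (W cl),
        norm_nonneg (E.symm : H →L[ℂ] K2)]
    · rw [hs.tsum_eq, h1]
      have h3 : ‖W cl‖ ≤ (‖W‖ + 1) * ‖cl‖ := by
        calc ‖W cl‖ ≤ ‖W‖ * ‖cl‖ := W.le_opNorm _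
        _ ≤ (‖W‖ + 1) * ‖cl‖ := by nlinarith [norm_nonneg cl]
      nlinarith [norm_nonneg cl, norm_nonneg (W cl), norm_nonneg W]

private lemma adjoint_bijective' {E F : Type*} [NormedAddCommGroup E] [InnerProductSpace ℂ E]
    [CompleteSpace E] [NormedAddCommGroup F] [InnerProductSpace ℂ F] [CompleteSpace F]
    {A : E →L[ℂ] F} (h : Function.Bijective A) :
    Function.Bijective (ContinuousLinearMap.adjoint A) := by
  have hker : LinearMap.ker (A : E →ₗ[ℂ] F) = ⊥ :=
    LinearMap.ker_eq_bot'.mpr fun v hv => h.1 (by rw [map_zero]; exact hv)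
  have hrange : LinearMap.range (A : E →ₗ[ℂ] F) = ⊤ := LinearMap.range_eq_top.mpr h.2
  let e := ContinuousLinearEquiv.ofBijective A hker hrange
  have hSA : ((e.symm : F →L[ℂ] E) ∘L A) = ContinuousLinearMap.id ℂ E := by
    ext v
    exact ContinuousLinearEquiv.ofBijective_symm_apply_apply A hker hrange v
  have hcomp : ContinuousLinearMap.adjoint A ∘L
      ContinuousLinearMap.adjoint (e.symm : F →L[ℂ] E) = ContinuousLinearMap.id ℂ E := by
    rw [← ContinuousLinearMap.adjoint_comp, hSA, ContinuousLinearMap.adjoint_id]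
  constructor
  · intro u v huv
    refine ext_inner_left ℂ fun w => ?_
    obtain ⟨z, rfl⟩ := h.2 w
    rw [← ContinuousLinearMap.adjoint_inner_right, huv,
      ContinuousLinearMap.adjoint_inner_right]
  · intro u
    refine ⟨ContinuousLinearMap.adjoint (e.symm : F →L[ℂ] E) u, ?_⟩
    rw [← ContinuousLinearMap.comp_apply, hcomp, ContinuousLinearMap.id_apply]

private lemma riesz_scale {ψ : ℕ → H} {a b : ℕ → ℂ} (hab : ∀ n, ‖a n‖ = ‖b n‖)
    (h : IsRieszBasis fun n => a n • ψ n) : IsRieszBasis fun n => b n • ψ n := by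
  classical
  obtain ⟨hd, A, B, hA, hB, hbd⟩ := h
  constructor
  · have hsub : Submodule.span ℂ (Set.range fun n => a n • ψ n) ≤
        Submodule.span ℂ (Set.range fun n => b n • ψ n) := by
      rw [Submodule.span_le]
      rintro - ⟨n, rfl⟩
      beta_reduce
      by_cases hbn : b n = 0
      · have han : a n = 0 := by
          have := hab n; rw [hbn] at this; simpa using this
        simpa [han] using (Submodule.span ℂ (Set.range fun n => b n • ψ n)).zero_mem
      · have heq : a n • ψ n = (a n / b n) • (b n • ψ n) := by
          rw [smul_smul, div_mul_cancel₀ _ hbn]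
        rw [heq]
        exact Submodule.smul_mem _ _ (Submodule.subset_span ⟨n, rfl⟩)
    exact hd.mono (SetLike.coe_subset_coe.mpr hsub)
  · refine ⟨A, B, hA, hB, fun c hc => ?_⟩
    show Summable (fun n => c n • (b n • ψ n)) ∧
      A * ∑' n, ‖c n‖ ^ 2 ≤ ‖∑' n, c n • (b n • ψ n)‖ ^ 2 ∧
      ‖∑' n, c n • (b n • ψ n)‖ ^ 2 ≤ B * ∑' n, ‖c n‖ ^ 2
    set c' : ℕ → ℂ := fun n => if a n = 0 then c n else c n * b n / a n with hc'def
    have hnorm : ∀ n, ‖c' n‖ = ‖c n‖ := by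
      intro n
      by_cases ha : a n = 0
      · simp [hc'def, ha]
      · simp only [hc'def, if_neg ha]
        rw [norm_div, norm_mul, ← hab n, mul_div_assoc,
          div_self (norm_ne_zero_iff.2 ha), mul_one]
    have hsc' : Summable fun n => ‖c' n‖ ^ 2 :=
      (summable_congr fun n => by rw [hnorm]).2 hc
    obtain ⟨hs, hl, hu⟩ := hbd c' hsc'
    have hterm : (fun n => c' n • (a n • ψ n)) = fun n => c n • (b n • ψ n) := by
      funext n
      by_cases ha : a n = 0
      · have hbn : b n = 0 := by
          have := hab n; rw [ha] at this; simpa using this.symm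
        simp [ha, hbn]
      · simp only [hc'def, if_neg ha, smul_smul]
        rw [div_mul_cancel₀ _ ha]
    have htsum : ∑' n, ‖c' n‖ ^ 2 = ∑' n, ‖c n‖ ^ 2 := tsum_congr fun n => by rw [hnorm]
    have hs' : Summable (fun n => c n • (b n • ψ n)) := hterm ▸ hs
    have hl' : A * ∑' n, ‖c n‖ ^ 2 ≤ ‖∑' n, c n • (b n • ψ n)‖ ^ 2 := by
      rw [← htsum, ← hterm]; exact hl
    have hu' : ‖∑' n, c n • (b n • ψ n)‖ ^ 2 ≤ B * ∑' n, ‖c n‖ ^ 2 := by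
      rw [← htsum, ← hterm]; exact hu
    exact ⟨hs', hl', hu'⟩

private lemma riesz_lower_finset {x : ℕ → H} (hx : IsRieszBasis x) :
    ∃ A : ℝ, 0 < A ∧ ∀ (c : ℕ → ℂ) (s : Finset ℕ),
      A * ∑ n ∈ s, ‖c n‖ ^ 2 ≤ ‖∑ n ∈ s, c n • x n‖ ^ 2 := by
  classical
  obtain ⟨-, A, B, hA, -, hbd⟩ := hx
  refine ⟨A, hA, fun c s => ?_⟩
  set c' : ℕ → ℂ := fun n => if n ∈ s then c n else 0 with hc'def
  have hzero : ∀ n ∉ s, ‖c' n‖ ^ 2 = 0 := fun n hn => by simp [hc'def, hn]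
  have hsm : Summable fun n => ‖c' n‖ ^ 2 := summable_of_ne_finset_zero hzero
  obtain ⟨-, hlow, -⟩ := hbd c' hsm
  have e1 : ∑' n, ‖c' n‖ ^ 2 = ∑ n ∈ s, ‖c n‖ ^ 2 := by
    rw [tsum_eq_sum hzero]
    exact Finset.sum_congr rfl fun n hn => by simp [hc'def, hn]
  have hz2 : ∀ n ∉ s, c' n • x n = 0 := fun n hn => by simp [hc'def, hn]
  have e2 : ∑' n, c' n • x n = ∑ n ∈ s, c n • x n := by
    rw [tsum_eq_sum hz2]
    exact Finset.sum_congr rfl fun n hn => by simp [hc'def, hn]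
  rw [e1, e2] at hlow
  exact hlow

end AuxRiesz

/-- If Φ is a Riesz basis and M_{m,Φ,Ψ} is well defined on H, then M_{m,Φ,Ψ}
is invertible on H (a bounded linear bijection of H onto H) iff mΨ is a Riesz basis. -/
theorem stmt_8
    {H : Type*} [NormedAddCommGroup H] [InnerProductSpace ℂ H] [CompleteSpace H]
    (φ ψ : ℕ → H) (m : ℕ → ℂ)
    (hΦ : IsRieszBasis φ)
    (hwd : ∀ f : H, ∃ g : H, Tendsto
      (fun N => ∑ n ∈ Finset.range N, (m n * (inner ℂ (ψ n) f : ℂ)) • φ n)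
      atTop (nhds g)) :
    (∃ T : H →L[ℂ] H,
      (∀ f : H, Tendsto
        (fun N => ∑ n ∈ Finset.range N, (m n * (inner ℂ (ψ n) f : ℂ)) • φ n)
        atTop (nhds (T f))) ∧
      Function.Bijective T) ↔
    IsRieszBasis (fun n => m n • ψ n) := by
  obtain ⟨Wφ, hWφ, hbφ⟩ := riesz_synthesis hΦ
  constructor
  · rintro ⟨T, hT, hbT⟩
    obtain ⟨A, hA, hfin⟩ := riesz_lower_finset hΦ
    -- coefficients are square-summable
    have hsum : ∀ f : H, Summable fun n => ‖m n * (inner ℂ (ψ n) f : ℂ)‖ ^ 2 := by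
      intro f
      have htd := (hT f).norm
      obtain ⟨C, hC⟩ := htd.bddAbove_range
      refine summable_of_sum_range_le (c := C ^ 2 / A) (fun n => by positivity) fun N => ?_
      have h1 := hfin (fun n => m n * (inner ℂ (ψ n) f : ℂ)) (Finset.range N)
      have h2 : ‖∑ n ∈ Finset.range N, (m n * (inner ℂ (ψ n) f : ℂ)) • φ n‖ ≤ C :=
        hC ⟨N, rfl⟩
      have h0 : (0 : ℝ) ≤ ‖∑ n ∈ Finset.range N, (m n * (inner ℂ (ψ n) f : ℂ)) • φ n‖ :=
        norm_nonneg _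
      rw [le_div_iff₀ hA]
      nlinarith
    have hker : LinearMap.ker (Wφ : lp (fun _ : ℕ => ℂ) 2 →ₗ[ℂ] H) = ⊥ :=
      LinearMap.ker_eq_bot'.mpr fun v hv => hbφ.1 (by rw [map_zero]; exact hv)
    have hrange : LinearMap.range (Wφ : lp (fun _ : ℕ => ℂ) 2 →ₗ[ℂ] H) = ⊤ := LinearMap.range_eq_top.mpr hbφ.2
    let Eφ := ContinuousLinearEquiv.ofBijective Wφ hker hrange
    let U : H →L[ℂ] lp (fun _ : ℕ => ℂ) 2 := (Eφ.symm : H →L[ℂ] lp (fun _ : ℕ => ℂ) 2) ∘L T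
    have hWE : ∀ v : lp (fun _ : ℕ => ℂ) 2, Wφ v = Eφ v := fun v =>
      (congrFun (ContinuousLinearEquiv.coeFn_ofBijective Wφ hker hrange) v).symm
    have hUf : ∀ f : H, Wφ (U f) = T f := by
      intro f
      show Wφ ((Eφ.symm : H →L[ℂ] lp (fun _ : ℕ => ℂ) 2) (T f)) = T f
      rw [ContinuousLinearEquiv.coe_coe, hWE, Eφ.apply_symm_apply]
    have hUcoord : ∀ (f : H) (n : ℕ), (U f : ∀ _ : ℕ, ℂ) n = m n * (inner ℂ (ψ n) f : ℂ) := by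
      intro f n
      set cl : lp (fun _ : ℕ => ℂ) 2 := ⟨fun k => m k * (inner ℂ (ψ k) f : ℂ), memK2 (hsum f)⟩
        with hcldef
      have h1 : HasSum (fun k => (m k * (inner ℂ (ψ k) f : ℂ)) • φ k) (Wφ cl) := hWφ cl
      have h3 : Wφ cl = T f := tendsto_nhds_unique h1.tendsto_sum_nat (hT f)
      have h4 : U f = cl := hbφ.1 (by rw [hUf f, h3])
      rw [h4]
    have hUbij : Function.Bijective U := by
      have h5 : ⇑U = ⇑(Eφ.symm) ∘ ⇑T := by
        funext f
        simp [U]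
      rw [h5]
      exact Eφ.symm.bijective.comp hbT
    let Wξ : lp (fun _ : ℕ => ℂ) 2 →L[ℂ] H := ContinuousLinearMap.adjoint U
    have hbξ : Function.Bijective Wξ := adjoint_bijective' hUbij
    have hWξsingle : ∀ (n : ℕ) (a : ℂ),
        Wξ (lp.single 2 n a) = a • ((starRingEnd ℂ) (m n) • ψ n) := by
      intro n a
      refine ext_inner_right ℂ fun f => ?_
      rw [ContinuousLinearMap.adjoint_inner_left, lp.inner_single_left, hUcoord f n]
      simp only [inner_smul_left, RCLike.inner_apply, starRingEnd_self_apply]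
      ring
    have hWξ : ∀ c : lp (fun _ : ℕ => ℂ) 2,
        HasSum (fun n => (c : ∀ _ : ℕ, ℂ) n • ((starRingEnd ℂ) (m n) • ψ n)) (Wξ c) := by
      intro c
      have h6 : HasSum (fun n => lp.single 2 n ((c : ∀ _ : ℕ, ℂ) n)) c :=
        lp.hasSum_single ENNReal.ofNat_ne_top c
      have h7 := h6.mapL Wξ
      have h8 : (fun n => Wξ (lp.single 2 n ((c : ∀ _ : ℕ, ℂ) n)))
          = fun n => (c : ∀ _ : ℕ, ℂ) n • ((starRingEnd ℂ) (m n) • ψ n) :=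
        funext fun n => hWξsingle n _
      rw [h8] at h7
      exact h7
    have hξR : IsRieszBasis (fun n => (starRingEnd ℂ) (m n) • ψ n) :=
      riesz_of_synthesis hWξ hbξ
    exact riesz_scale (fun n => by simp) hξR
  · intro hmψ
    have hξ : IsRieszBasis (fun n => (starRingEnd ℂ) (m n) • ψ n) :=
      riesz_scale (fun n => by simp) hmψ
    obtain ⟨Wξ, hWξ, hbξ⟩ := riesz_synthesis hξ
    let U : H →L[ℂ] lp (fun _ : ℕ => ℂ) 2 := ContinuousLinearMap.adjoint Wξ
    have hU : ∀ (f : H) (n : ℕ), (U f : ∀ _ : ℕ, ℂ) n = m n * (inner ℂ (ψ n) f : ℂ) := by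
      intro f n
      calc (U f : ∀ _ : ℕ, ℂ) n
          = (inner ℂ (lp.single 2 n (1 : ℂ) : lp (fun _ : ℕ => ℂ) 2) (U f) : ℂ) := by
            rw [lp.inner_single_left]
            simp
        _ = (inner ℂ (Wξ (lp.single 2 n (1 : ℂ))) f : ℂ) :=
            ContinuousLinearMap.adjoint_inner_right Wξ _ _
        _ = m n * (inner ℂ (ψ n) f : ℂ) := by
            rw [W_single hWξ n]
            simp [inner_smul_left]
            ring
    refine ⟨Wφ ∘L U, fun f => ?_, ?_⟩
    · have h := (hWφ (U f)).tendsto_sum_nat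
      have heq : ∀ N, ∑ n ∈ Finset.range N, (U f : ∀ _ : ℕ, ℂ) n • φ n
          = ∑ n ∈ Finset.range N, (m n * (inner ℂ (ψ n) f : ℂ)) • φ n :=
        fun N => Finset.sum_congr rfl fun n _ => by rw [hU f n]
      have h2 : (Wφ ∘L U) f = Wφ (U f) := rfl
      rw [h2]
      exact h.congr heq
    · have h5 : ⇑(Wφ ∘L U) = ⇑Wφ ∘ ⇑U := by funext v; simp
      rw [h5]
      exact hbφ.comp (adjoint_bijective' hbξ)
end

section
/- Let Φ = (φ_n) be a Riesz basis for a complex Hilbert space H, let Ψ = (ψ_n) be an overcomplete frame for H (a frame which is not a Riesz basis), and let m : ℕ → ℂ be semi-normalized. Then the bounded operator M_{m,Φ,Ψ} : f ↦ ∑_n m_n ⟨f, ψ_n⟩ φ_n (the series converging unconditionally for every f ∈ H) is injective but not surjective. -/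
/-- Frame for H with some bounds A, B > 0. -/
def IsFrame {H : Type*} [NormedAddCommGroup H] [InnerProductSpace ℂ H] (φ : ℕ → H) : Prop :=
  ∃ A B : ℝ, 0 < A ∧ 0 < B ∧ ∀ h : H,
    Summable (fun n => ‖(inner ℂ (φ n) h : ℂ)‖ ^ 2) ∧
    A * ‖h‖ ^ 2 ≤ ∑' n, ‖(inner ℂ (φ n) h : ℂ)‖ ^ 2 ∧
    ∑' n, ‖(inner ℂ (φ n) h : ℂ)‖ ^ 2 ≤ B * ‖h‖ ^ 2

section Aux

variable {H : Type*} [NormedAddCommGroup H] [InnerProductSpace ℂ H] [CompleteSpace H]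

local notation "⟪" x ", " y "⟫" => @inner ℂ _ _ x y

/-- Finite Bessel-type bound from the frame upper inequality. -/
lemma bessel_finset (ψ : ℕ → H) (B : ℝ) (hB : 0 < B)
    (hub : ∀ h : H, Summable (fun n => ‖⟪ψ n, h⟫‖ ^ 2) ∧
      ∑' n, ‖⟪ψ n, h⟫‖ ^ 2 ≤ B * ‖h‖ ^ 2)
    (c : ℕ → ℂ) (F : Finset ℕ) :
    ‖∑ n ∈ F, c n • ψ n‖ ^ 2 ≤ B * ∑ n ∈ F, ‖c n‖ ^ 2 := by
  set v := ∑ n ∈ F, c n • ψ n with hv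
  have hBpos : 0 ≤ B * ‖v‖ ^ 2 := le_trans (tsum_nonneg fun n => sq_nonneg _) (hub v).2
  have h1 : (‖v‖ ^ 2 : ℝ) = ‖⟪v, v⟫‖ := by
    rw [inner_self_eq_norm_sq_to_K (𝕜 := ℂ) v, norm_pow, RCLike.norm_ofReal, abs_norm]
  have h2 : ⟪v, v⟫ = ∑ n ∈ F, (starRingEnd ℂ) (c n) * ⟪ψ n, v⟫ := by
    rw [hv, sum_inner]
    exact Finset.sum_congr rfl fun n _ => inner_smul_left _ _ _
  have h3 : ‖v‖ ^ 2 ≤ ∑ n ∈ F, ‖c n‖ * ‖⟪ψ n, v⟫‖ := by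
    rw [h1, h2]
    refine le_trans (norm_sum_le _ _) (le_of_eq (Finset.sum_congr rfl fun n _ => ?_))
    rw [norm_mul, RCLike.norm_conj]
  have h4 : (∑ n ∈ F, ‖c n‖ * ‖⟪ψ n, v⟫‖) ^ 2 ≤
      (∑ n ∈ F, ‖c n‖ ^ 2) * ∑ n ∈ F, ‖⟪ψ n, v⟫‖ ^ 2 :=
    Finset.sum_mul_sq_le_sq_mul_sq F _ _
  have h5 : ∑ n ∈ F, ‖⟪ψ n, v⟫‖ ^ 2 ≤ B * ‖v‖ ^ 2 :=
    le_trans (Summable.sum_le_tsum F (fun n _ => sq_nonneg _) (hub v).1) (hub v).2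
  have hS : 0 ≤ ∑ n ∈ F, ‖c n‖ ^ 2 := Finset.sum_nonneg fun n _ => sq_nonneg _
  have key : (‖v‖ ^ 2) ^ 2 ≤ (∑ n ∈ F, ‖c n‖ ^ 2) * (B * ‖v‖ ^ 2) := by
    calc (‖v‖ ^ 2) ^ 2 ≤ (∑ n ∈ F, ‖c n‖ * ‖⟪ψ n, v⟫‖) ^ 2 := by
          apply pow_le_pow_left₀ (sq_nonneg _) h3
      _ ≤ (∑ n ∈ F, ‖c n‖ ^ 2) * ∑ n ∈ F, ‖⟪ψ n, v⟫‖ ^ 2 := h4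
      _ ≤ (∑ n ∈ F, ‖c n‖ ^ 2) * (B * ‖v‖ ^ 2) := by
          exact mul_le_mul_of_nonneg_left h5 hS
  rcases (sq_nonneg ‖v‖).eq_or_lt with h | h
  · rw [← h]
    exact mul_nonneg hB.le hS
  · nlinarith [key, h, hS]

/-- Summability of the synthesis series from ℓ² coefficients and frame upper bound. -/
lemma bessel_summable (ψ : ℕ → H) (B : ℝ) (hB : 0 < B)
    (hub : ∀ h : H, Summable (fun n => ‖⟪ψ n, h⟫‖ ^ 2) ∧
      ∑' n, ‖⟪ψ n, h⟫‖ ^ 2 ≤ B * ‖h‖ ^ 2)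
    (c : ℕ → ℂ) (hc : Summable (fun n => ‖c n‖ ^ 2)) :
    Summable (fun n => c n • ψ n) := by
  rw [summable_iff_vanishing_norm]
  intro ε hε
  have hε2 : 0 < ε ^ 2 / B := by positivity
  obtain ⟨s, hs⟩ := summable_iff_vanishing_norm.1 hc (ε ^ 2 / B) hε2
  refine ⟨s, fun t ht => ?_⟩
  have h1 : ‖∑ n ∈ t, c n • ψ n‖ ^ 2 ≤ B * ∑ n ∈ t, ‖c n‖ ^ 2 := bessel_finset ψ B hB hub c t
  have h2 : ∑ n ∈ t, ‖c n‖ ^ 2 < ε ^ 2 / B := by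
    have := hs t ht
    calc ∑ n ∈ t, ‖c n‖ ^ 2 ≤ ‖∑ n ∈ t, ‖c n‖ ^ 2‖ := le_abs_self _
      _ < ε ^ 2 / B := this
  have h3 : ‖∑ n ∈ t, c n • ψ n‖ ^ 2 < ε ^ 2 := by
    calc ‖∑ n ∈ t, c n • ψ n‖ ^ 2 ≤ B * ∑ n ∈ t, ‖c n‖ ^ 2 := h1
      _ < B * (ε ^ 2 / B) := by exact mul_lt_mul_of_pos_left h2 hB
      _ = ε ^ 2 := by field_simp
  exact lt_of_pow_lt_pow_left₀ 2 hε.le h3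

/-- Norm bound on the synthesis tsum. -/
lemma bessel_tsum_bound (ψ : ℕ → H) (B : ℝ) (hB : 0 < B)
    (hub : ∀ h : H, Summable (fun n => ‖⟪ψ n, h⟫‖ ^ 2) ∧
      ∑' n, ‖⟪ψ n, h⟫‖ ^ 2 ≤ B * ‖h‖ ^ 2)
    (c : ℕ → ℂ) (hc : Summable (fun n => ‖c n‖ ^ 2)) :
    ‖∑' n, c n • ψ n‖ ^ 2 ≤ B * ∑' n, ‖c n‖ ^ 2 := by
  have hsum := bessel_summable ψ B hB hub c hc
  have hhs := hsum.hasSum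
  have htend : Filter.Tendsto (fun F : Finset ℕ => ‖∑ n ∈ F, c n • ψ n‖ ^ 2)
      Filter.atTop (nhds (‖∑' n, c n • ψ n‖ ^ 2)) := (hhs.norm.pow 2 : _)
  refine le_of_tendsto htend (Filter.Eventually.of_forall fun F => ?_)
  calc ‖∑ n ∈ F, c n • ψ n‖ ^ 2 ≤ B * ∑ n ∈ F, ‖c n‖ ^ 2 := bessel_finset ψ B hB hub c F
    _ ≤ B * ∑' n, ‖c n‖ ^ 2 := by
        apply mul_le_mul_of_nonneg_left _ hB.le
        exact Summable.sum_le_tsum F (fun n _ => sq_nonneg _) hc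

/-- Coefficient injectivity of synthesis for a Riesz basis. -/
lemma riesz_coeff_inj (φ : ℕ → H) (A B : ℝ) (hA : 0 < A)
    (hP : ∀ c : ℕ → ℂ, Summable (fun n => ‖c n‖ ^ 2) →
      Summable (fun n => c n • φ n) ∧
      A * ∑' n, ‖c n‖ ^ 2 ≤ ‖∑' n, c n • φ n‖ ^ 2 ∧
      ‖∑' n, c n • φ n‖ ^ 2 ≤ B * ∑' n, ‖c n‖ ^ 2)
    (a b : ℕ → ℂ) (hca : Summable (fun n => ‖a n‖ ^ 2))
    (hcb : Summable (fun n => ‖b n‖ ^ 2))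
    (heq : ∑' n, a n • φ n = ∑' n, b n • φ n) : a = b := by
  have hcd : Summable (fun n => ‖a n - b n‖ ^ 2) := by
    apply Summable.of_nonneg_of_le (fun n => sq_nonneg _)
      (fun n => ?_) ((hca.add hcb).mul_left 2)
    have h1 : ‖a n - b n‖ ≤ ‖a n‖ + ‖b n‖ := norm_sub_le _ _
    have h2 : (0:ℝ) ≤ ‖a n - b n‖ := norm_nonneg _
    nlinarith [norm_nonneg (a n), norm_nonneg (b n), sq_nonneg (‖a n‖ - ‖b n‖),
      pow_le_pow_left₀ h2 h1 2]
  have hzero : ∑' n, (a n - b n) • φ n = 0 := by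
    have : (fun n => (a n - b n) • φ n) = fun n => a n • φ n - b n • φ n := by
      funext n; rw [sub_smul]
    rw [this, Summable.tsum_sub (hP a hca).1 (hP b hcb).1, heq, sub_self]
  have hlow := (hP _ hcd).2.1
  rw [hzero, norm_zero] at hlow
  have hS : ∑' n, ‖a n - b n‖ ^ 2 ≤ 0 := by nlinarith [hlow]
  funext n
  have hn : ‖a n - b n‖ ^ 2 ≤ 0 :=
    le_trans (Summable.le_tsum hcd n fun j _ => sq_nonneg _) hS
  have : ‖a n - b n‖ = 0 := by nlinarith [sq_nonneg ‖a n - b n‖, norm_nonneg (a n - b n)]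
  exact sub_eq_zero.mp (norm_eq_zero.mp this)

end Aux

/-- If Φ is a Riesz basis, Ψ is an overcomplete frame (a frame that is not a
Riesz basis) and m is semi-normalized, then M_{m,Φ,Ψ} (unconditionally convergent for every
f) is injective but not surjective. -/
theorem stmt_11
    {H : Type*} [NormedAddCommGroup H] [InnerProductSpace ℂ H] [CompleteSpace H]
    (φ ψ : ℕ → H) (m : ℕ → ℂ)
    (hΦ : IsRieszBasis φ)
    (hΨ : IsFrame ψ) (hΨ' : ¬ IsRieszBasis ψ)
    (hm : ∃ a b : ℝ, 0 < a ∧ (∀ n, a ≤ ‖m n‖) ∧ (∀ n, ‖m n‖ ≤ b)) :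
    (∀ f : H, Summable (fun n => (m n * (inner ℂ (ψ n) f : ℂ)) • φ n)) ∧
    Function.Injective (fun f : H => ∑' n, (m n * (inner ℂ (ψ n) f : ℂ)) • φ n) ∧
    ¬ Function.Surjective (fun f : H => ∑' n, (m n * (inner ℂ (ψ n) f : ℂ)) • φ n) := by
  obtain ⟨a, b, ha, ham, hbm⟩ := hm
  obtain ⟨hdense, AΦ, BΦ, hAΦ, hBΦ, hΦP⟩ := hΦ
  obtain ⟨AΨ, BΨ, hAΨ, hBΨ, hΨP⟩ := hΨ
  have hub : ∀ h : H, Summable (fun n => ‖(inner ℂ (ψ n) h : ℂ)‖ ^ 2) ∧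
      ∑' n, ‖(inner ℂ (ψ n) h : ℂ)‖ ^ 2 ≤ BΨ * ‖h‖ ^ 2 :=
    fun h => ⟨(hΨP h).1, (hΨP h).2.2⟩
  have hl2 : ∀ f : H, Summable (fun n => ‖m n * (inner ℂ (ψ n) f : ℂ)‖ ^ 2) := by
    intro f
    apply Summable.of_nonneg_of_le (fun n => sq_nonneg _) (fun n => ?_)
      (((hΨP f).1).mul_left (b ^ 2))
    rw [norm_mul, mul_pow]
    exact mul_le_mul_of_nonneg_right
      (pow_le_pow_left₀ (norm_nonneg _) (hbm n) 2) (sq_nonneg _)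
  have hsum : ∀ f : H, Summable (fun n => (m n * (inner ℂ (ψ n) f : ℂ)) • φ n) :=
    fun f => (hΦP _ (hl2 f)).1
  have hmne : ∀ n, m n ≠ 0 := by
    intro n hn
    have := ham n
    rw [hn, norm_zero] at this
    linarith
  have hvanish : ∀ f : H, (∀ n, (inner ℂ (ψ n) f : ℂ) = 0) → f = 0 := by
    intro f hf
    have h0 : (fun n => ‖(inner ℂ (ψ n) f : ℂ)‖ ^ 2) = fun _ => (0 : ℝ) := by
      funext n
      rw [hf n, norm_zero]
      ring
    have hlow := (hΨP f).2.1
    rw [h0, tsum_zero] at hlow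
    have h1 : ‖f‖ ^ 2 ≤ 0 := by nlinarith
    have h2 : ‖f‖ = 0 := by nlinarith [norm_nonneg f, sq_nonneg ‖f‖]
    exact norm_eq_zero.mp h2
  refine ⟨hsum, ?_, ?_⟩
  · intro f g hfg
    replace hfg : (∑' n, (m n * (inner ℂ (ψ n) f : ℂ)) • φ n) =
        ∑' n, (m n * (inner ℂ (ψ n) g : ℂ)) • φ n := hfg
    have heq := riesz_coeff_inj φ AΦ BΦ hAΦ hΦP _ _ (hl2 f) (hl2 g) hfg
    have hfg2 : ∀ n, (inner ℂ (ψ n) f : ℂ) = inner ℂ (ψ n) g := fun n =>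
      mul_left_cancel₀ (hmne n) (congrFun heq n)
    have hsub : f - g = 0 := by
      apply hvanish
      intro n
      rw [inner_sub_right, hfg2 n, sub_self]
    exact sub_eq_zero.mp hsub
  · intro hsurj
    apply hΨ'
    constructor
    · rw [Submodule.dense_iff_topologicalClosure_eq_top,
        Submodule.topologicalClosure_eq_top_iff, Submodule.eq_bot_iff]
      intro x hx
      apply hvanish
      intro n
      have hmem : ψ n ∈ Submodule.span ℂ (Set.range ψ) :=
        Submodule.subset_span (Set.mem_range_self n)
      exact (Submodule.mem_orthogonal _ x).mp hx (ψ n) hmem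
    · refine ⟨AΨ, BΨ, hAΨ, hBΨ, fun c hc => ?_⟩
      have hcsum := bessel_summable ψ BΨ hBΨ hub c hc
      refine ⟨hcsum, ?_, bessel_tsum_bound ψ BΨ hBΨ hub c hc⟩
      -- lower Riesz bound via surjectivity
      have hdl2 : Summable (fun n => ‖m n * c n‖ ^ 2) := by
        apply Summable.of_nonneg_of_le (fun n => sq_nonneg _) (fun n => ?_)
          (hc.mul_left (b ^ 2))
        rw [norm_mul, mul_pow]
        exact mul_le_mul_of_nonneg_right
          (pow_le_pow_left₀ (norm_nonneg _) (hbm n) 2) (sq_nonneg _)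
      obtain ⟨f, hf⟩ := hsurj (∑' n, (m n * c n) • φ n)
      replace hf : (∑' n, (m n * (inner ℂ (ψ n) f : ℂ)) • φ n) =
          ∑' n, (m n * c n) • φ n := hf
      have hcoeff := riesz_coeff_inj φ AΦ BΦ hAΦ hΦP _ _ (hl2 f) hdl2 hf
      have hcf : ∀ n, (inner ℂ (ψ n) f : ℂ) = c n := fun n =>
        mul_left_cancel₀ (hmne n) (congrFun hcoeff n)
      have hS0 : (0 : ℝ) ≤ ∑' n, ‖c n‖ ^ 2 := tsum_nonneg fun n => sq_nonneg _
      have hhs := hcsum.hasSum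
      have h1 : HasSum (fun n => ((innerSL ℂ f) (c n • ψ n) : ℂ))
          ((innerSL ℂ f) (∑' n, c n • ψ n)) := (innerSL ℂ f).hasSum hhs
      have h2 : (fun n => ((innerSL ℂ f) (c n • ψ n) : ℂ)) =
          fun n => ((‖c n‖ ^ 2 : ℝ) : ℂ) := by
        funext n
        rw [innerSL_apply_apply, inner_smul_right, ← inner_conj_symm, hcf n, RCLike.mul_conj,
          ← RCLike.ofReal_pow]
        norm_cast
      rw [h2] at h1
      have h3 : HasSum (fun n => ((‖c n‖ ^ 2 : ℝ) : ℂ))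
          (((∑' n, ‖c n‖ ^ 2 : ℝ) : ℂ)) := Complex.ofRealCLM.hasSum hc.hasSum
      have hinner : ((innerSL ℂ f) (∑' n, c n • ψ n) : ℂ) =
          ((∑' n, ‖c n‖ ^ 2 : ℝ) : ℂ) := h1.unique h3
      have h4 : (∑' n, ‖c n‖ ^ 2) ≤ ‖f‖ * ‖∑' n, c n • ψ n‖ := by
        calc (∑' n, ‖c n‖ ^ 2)
            = ‖((innerSL ℂ f) (∑' n, c n • ψ n) : ℂ)‖ := by
              rw [hinner, Complex.norm_real, Real.norm_of_nonneg hS0]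
          _ ≤ ‖f‖ * ‖∑' n, c n • ψ n‖ := by
              rw [innerSL_apply_apply]
              exact norm_inner_le_norm f _
      have h5 : AΨ * ‖f‖ ^ 2 ≤ ∑' n, ‖c n‖ ^ 2 := by
        have := (hΨP f).2.1
        have hre : (fun n => ‖(inner ℂ (ψ n) f : ℂ)‖ ^ 2) = fun n => ‖c n‖ ^ 2 := by
          funext n
          rw [hcf n]
        rwa [hre] at this
      rcases hS0.eq_or_lt with h | h
      · rw [← h, mul_zero]
        positivity
      · nlinarith [mul_self_le_mul_self hS0 h4, h5, h, hAΨ,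
          norm_nonneg f, norm_nonneg (∑' n, c n • ψ n), sq_nonneg ‖∑' n, c n • ψ n‖]
end

section
/- Let Φ = (φ_n) be a Bessel sequence for a complex Hilbert space H which is norm-bounded below (inf_n ‖φ_n‖ > 0) and which is not a frame for H. Then for every sequence Ψ = (ψ_n) in H and every m : ℕ → ℂ, the multiplier M_{m,Φ,Ψ} cannot be both unconditionally convergent on H and invertible on H: if for every f ∈ H the family (m_n ⟨f, ψ_n⟩ φ_n) is unconditionally summable, then the map f ↦ ∑_n m_n ⟨f, ψ_n⟩ φ_n is not a bijection of H onto H. The same conclusion holds for M_{m,Ψ,Φ} : f ↦ ∑_n m_n ⟨f, φ_n⟩ ψ_n. -/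
/-- Bessel sequence for H with some bound B > 0. -/
def IsBessel {H : Type*} [NormedAddCommGroup H] [InnerProductSpace ℂ H] (φ : ℕ → H) : Prop :=
  ∃ B : ℝ, 0 < B ∧ ∀ h : H,
    Summable (fun n => ‖(inner ℂ (φ n) h : ℂ)‖ ^ 2) ∧
    ∑' n, ‖(inner ℂ (φ n) h : ℂ)‖ ^ 2 ≤ B * ‖h‖ ^ 2

set_option linter.unusedSectionVars false
set_option maxHeartbeats 1000000
open Finset
open scoped ComplexConjugate

section Aux

variable {H : Type*} [NormedAddCommGroup H] [InnerProductSpace ℂ H]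

local notation "⟪" x ", " y "⟫" => @inner ℂ _ _ x y

lemma bdd_subsums {x : ℕ → H} (hx : Summable x) :
    ∃ C : ℝ, 0 ≤ C ∧ ∀ F : Finset ℕ, ‖∑ n ∈ F, x n‖ ≤ C := by
  classical
  obtain ⟨s, hs⟩ := hx
  have h1 : ∀ᶠ F in Filter.atTop, ‖(∑ n ∈ F, x n) - s‖ < 1 := by
    have := Metric.tendsto_nhds.mp hs 1 one_pos
    simpa [dist_eq_norm] using this
  obtain ⟨F₀, hF₀⟩ := Filter.eventually_atTop.mp h1
  refine ⟨1 + ‖s‖ + ∑ n ∈ F₀, ‖x n‖, by positivity, fun F => ?_⟩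
  have hsplit : ∑ n ∈ F ∪ F₀, x n = ∑ n ∈ F, x n + ∑ n ∈ F₀ \ F, x n := by
    rw [← Finset.sum_union Finset.disjoint_sdiff, Finset.union_sdiff_self_eq_union]
  have h2 : ‖∑ n ∈ F ∪ F₀, x n‖ ≤ 1 + ‖s‖ := by
    have := hF₀ (F ∪ F₀) Finset.subset_union_right
    calc ‖∑ n ∈ F ∪ F₀, x n‖ ≤ ‖(∑ n ∈ F ∪ F₀, x n) - s‖ + ‖s‖ := by have := norm_add_le ((∑ n ∈ F ∪ F₀, x n) - s) s; simpa using this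
    _ ≤ 1 + ‖s‖ := by linarith
  have h3 : ‖∑ n ∈ F₀ \ F, x n‖ ≤ ∑ n ∈ F₀, ‖x n‖ :=
    (norm_sum_le _ _).trans (Finset.sum_le_sum_of_subset_of_nonneg (Finset.sdiff_subset)
      (fun _ _ _ => norm_nonneg _))
  have : ∑ n ∈ F, x n = ∑ n ∈ F ∪ F₀, x n - ∑ n ∈ F₀ \ F, x n := by
    rw [hsplit]; abel
  rw [this]
  calc ‖_ - _‖ ≤ ‖∑ n ∈ F ∪ F₀, x n‖ + ‖∑ n ∈ F₀ \ F, x n‖ := norm_sub_le _ _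
  _ ≤ 1 + ‖s‖ + ∑ n ∈ F₀, ‖x n‖ := by linarith

lemma sign_split (F : Finset ℕ) (x : ℕ → H) (σ : ℕ → ℝ)
    (hσ : ∀ n, σ n = 1 ∨ σ n = -1) :
    ∑ n ∈ F, σ n • x n
      = ∑ n ∈ F.filter (fun n => σ n = 1), x n - ∑ n ∈ F.filter (fun n => ¬ σ n = 1), x n := by
  classical
  rw [← Finset.sum_filter_add_sum_filter_not F (fun n => σ n = 1) (fun n => σ n • x n)]
  rw [sub_eq_add_neg, ← Finset.sum_neg_distrib]
  congr 1
  · exact Finset.sum_congr rfl (fun n hn => by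
      rw [(Finset.mem_filter.mp hn).2, one_smul])
  · exact Finset.sum_congr rfl (fun n hn => by
      have h2 := (Finset.mem_filter.mp hn).2
      rcases hσ n with h | h
      · exact absurd h h2
      · rw [h]; simp)

lemma norm_sign_sum_le {x : ℕ → H} {C : ℝ} (hC : ∀ F : Finset ℕ, ‖∑ n ∈ F, x n‖ ≤ C)
    (F : Finset ℕ) (σ : ℕ → ℝ) (hσ : ∀ n, σ n = 1 ∨ σ n = -1) :
    ‖∑ n ∈ F, σ n • x n‖ ≤ 2 * C := by
  classical
  rw [sign_split F x σ hσ]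
  calc ‖_ - _‖ ≤ ‖∑ n ∈ F.filter (fun n => σ n = 1), x n‖
        + ‖∑ n ∈ F.filter (fun n => ¬ σ n = 1), x n‖ := norm_sub_le _ _
  _ ≤ 2 * C := by have := hC (F.filter (fun n => σ n = 1));
                  have := hC (F.filter (fun n => ¬ σ n = 1)); linarith

lemma exists_signs_sq (F : Finset ℕ) (x : ℕ → H) :
    ∃ σ : ℕ → ℝ, (∀ n, σ n = 1 ∨ σ n = -1) ∧
      ∑ n ∈ F, ‖x n‖ ^ 2 ≤ ‖∑ n ∈ F, σ n • x n‖ ^ 2 := by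
  classical
  induction F using Finset.induction_on with
  | empty => exact ⟨fun _ => 1, fun _ => Or.inl rfl, by simp⟩
  | @insert a s ha ih =>
    obtain ⟨σ, hσ, hle⟩ := ih
    set w := ∑ n ∈ s, σ n • x n with hw
    have hpar : ‖x a + w‖ ^ 2 + ‖x a - w‖ ^ 2 = 2 * (‖x a‖ ^ 2 + ‖w‖ ^ 2) := by
      have := parallelogram_law_with_norm ℂ (x a) w
      nlinarith [this]
    have hmax : ‖x a‖ ^ 2 + ‖w‖ ^ 2 ≤ max (‖x a + w‖ ^ 2) (‖x a - w‖ ^ 2) := by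
      rcases le_total (‖x a + w‖ ^ 2) (‖x a - w‖ ^ 2) with h | h
      · rw [max_eq_right h]; nlinarith
      · rw [max_eq_left h]; nlinarith
    by_cases hcase : ‖x a + w‖ ^ 2 ≤ ‖x a - w‖ ^ 2
    · refine ⟨Function.update σ a (-1), fun n => ?_, ?_⟩
      · rcases eq_or_ne n a with rfl | hn
        · simp
        · simpa [Function.update_of_ne hn] using hσ n
      · rw [Finset.sum_insert ha, Finset.sum_insert ha]
        have hsum : ∑ n ∈ s, Function.update σ a (-1) n • x n = w := by
          refine Finset.sum_congr rfl (fun n hn => ?_)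
          rw [Function.update_of_ne (by rintro rfl; exact ha hn)]
        rw [hsum, Function.update_self]
        have : (-1 : ℝ) • x a + w = -(x a - w) := by
          rw [neg_one_smul]; abel
        rw [this, norm_neg]
        have := max_eq_right hcase ▸ hmax
        rw [max_eq_right hcase] at hmax
        linarith
    · push_neg at hcase
      refine ⟨Function.update σ a 1, fun n => ?_, ?_⟩
      · rcases eq_or_ne n a with rfl | hn
        · simp
        · simpa [Function.update_of_ne hn] using hσ n
      · rw [Finset.sum_insert ha, Finset.sum_insert ha]
        have hsum : ∑ n ∈ s, Function.update σ a 1 n • x n = w := by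
          refine Finset.sum_congr rfl (fun n hn => ?_)
          rw [Function.update_of_ne (by rintro rfl; exact ha hn)]
        rw [hsum, Function.update_self, one_smul]
        rw [max_eq_left hcase.le] at hmax
        linarith

lemma sq_sum_le {x : ℕ → H} {C : ℝ} (hC0 : 0 ≤ C)
    (hC : ∀ F : Finset ℕ, ‖∑ n ∈ F, x n‖ ≤ C) (F : Finset ℕ) :
    ∑ n ∈ F, ‖x n‖ ^ 2 ≤ 4 * C ^ 2 := by
  obtain ⟨σ, hσ, hle⟩ := exists_signs_sq F x
  have h2 := norm_sign_sum_le hC F σ hσ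
  calc ∑ n ∈ F, ‖x n‖ ^ 2 ≤ ‖∑ n ∈ F, σ n • x n‖ ^ 2 := hle
  _ ≤ (2 * C) ^ 2 := by
      have h0 : (0:ℝ) ≤ ‖∑ n ∈ F, σ n • x n‖ := norm_nonneg _
      nlinarith
  _ = 4 * C ^ 2 := by ring

lemma exists_signs_dom (F : Finset ℕ) (x : ℕ → H) (α : ℕ → ℝ) (hα : ∀ n, |α n| ≤ 1)
    (v : H) :
    ∃ σ : ℕ → ℝ, (∀ n, σ n = 1 ∨ σ n = -1) ∧
      ‖v + ∑ n ∈ F, α n • x n‖ ≤ ‖v + ∑ n ∈ F, σ n • x n‖ := by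
  classical
  induction F using Finset.induction_on generalizing v with
  | empty => exact ⟨fun _ => 1, fun _ => Or.inl rfl, le_refl _⟩
  | @insert a s ha ih =>
    obtain ⟨σ, hσ, hle⟩ := ih (v + α a • x a)
    set w := v + ∑ n ∈ s, σ n • x n with hw
    have key : ‖w + α a • x a‖ ≤ max (‖w + x a‖) (‖w - x a‖) := by
      have h1 : w + α a • x a
          = ((1 + α a)/2) • (w + x a) + ((1 - α a)/2) • (w - x a) := by
        module
      have ha1 : (0:ℝ) ≤ (1 + α a)/2 := by have := abs_le.mp (hα a); linarith [this.1]
      have ha2 : (0:ℝ) ≤ (1 - α a)/2 := by have := abs_le.mp (hα a); linarith [this.2]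
      calc ‖w + α a • x a‖ = ‖((1 + α a)/2) • (w + x a) + ((1 - α a)/2) • (w - x a)‖ := by
            rw [h1]
      _ ≤ ((1 + α a)/2) * ‖w + x a‖ + ((1 - α a)/2) * ‖w - x a‖ := by
            refine (norm_add_le _ _).trans ?_
            rw [norm_smul, norm_smul, Real.norm_eq_abs, Real.norm_eq_abs,
              abs_of_nonneg ha1, abs_of_nonneg ha2]
      _ ≤ ((1 + α a)/2) * max (‖w + x a‖) (‖w - x a‖)
            + ((1 - α a)/2) * max (‖w + x a‖) (‖w - x a‖) := by
            gcongr
            · exact le_max_left _ _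
            · exact le_max_right _ _
      _ = max (‖w + x a‖) (‖w - x a‖) := by ring_nf
    have hup : ∀ τ : ℝ, ∑ n ∈ s, Function.update σ a τ n • x n = ∑ n ∈ s, σ n • x n := by
      intro τ
      refine Finset.sum_congr rfl (fun n hn => ?_)
      rw [Function.update_of_ne (by rintro rfl; exact ha hn)]
    rcases le_total (‖w + x a‖) (‖w - x a‖) with h | h
    · refine ⟨Function.update σ a (-1), fun n => ?_, ?_⟩
      · rcases eq_or_ne n a with rfl | hn
        · simp
        · simpa [Function.update_of_ne hn] using hσ n
      · rw [Finset.sum_insert ha, Finset.sum_insert ha, hup, Function.update_self]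
        have e1 : v + ((-1:ℝ) • x a + ∑ n ∈ s, σ n • x n) = w - x a := by
          rw [neg_one_smul, hw]; abel
        have e2 : v + (α a • x a + ∑ n ∈ s, α n • x n)
            = (v + α a • x a) + ∑ n ∈ s, α n • x n := by abel
        have e3 : (v + α a • x a) + ∑ n ∈ s, σ n • x n = w + α a • x a := by
          rw [hw]; abel
        rw [e1, e2]
        refine hle.trans ?_
        rw [e3]
        exact key.trans (by rw [max_eq_right h])
    · refine ⟨Function.update σ a 1, fun n => ?_, ?_⟩
      · rcases eq_or_ne n a with rfl | hn
        · simp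
        · simpa [Function.update_of_ne hn] using hσ n
      · rw [Finset.sum_insert ha, Finset.sum_insert ha, hup, Function.update_self]
        have e1 : v + ((1:ℝ) • x a + ∑ n ∈ s, σ n • x n) = w + x a := by
          rw [one_smul, hw]; abel
        have e2 : v + (α a • x a + ∑ n ∈ s, α n • x n)
            = (v + α a • x a) + ∑ n ∈ s, α n • x n := by abel
        have e3 : (v + α a • x a) + ∑ n ∈ s, σ n • x n = w + α a • x a := by
          rw [hw]; abel
        rw [e1, e2]
        refine hle.trans ?_
        rw [e3]
        exact key.trans (by rw [max_eq_left h])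

lemma norm_real_coeff_sum_le {x : ℕ → H} {C : ℝ}
    (hC : ∀ F : Finset ℕ, ‖∑ n ∈ F, x n‖ ≤ C)
    (F : Finset ℕ) (α : ℕ → ℝ) (hα : ∀ n, |α n| ≤ 1) :
    ‖∑ n ∈ F, α n • x n‖ ≤ 2 * C := by
  obtain ⟨σ, hσ, hle⟩ := exists_signs_dom F x α hα 0
  simp only [zero_add] at hle
  exact hle.trans (norm_sign_sum_le hC F σ hσ)

lemma norm_complex_coeff_sum_le {x : ℕ → H} {C : ℝ}
    (hC : ∀ F : Finset ℕ, ‖∑ n ∈ F, x n‖ ≤ C)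
    (F : Finset ℕ) (lam : ℕ → ℂ) (hlam : ∀ n, ‖lam n‖ ≤ 1) :
    ‖∑ n ∈ F, lam n • x n‖ ≤ 4 * C := by
  have hsplit : ∀ n, lam n • x n
      = (lam n).re • x n + (lam n).im • (Complex.I • x n) := by
    intro n
    rw [← Complex.coe_smul ((lam n).re), ← Complex.coe_smul ((lam n).im), smul_smul,
      ← add_smul, Complex.re_add_im]
  have hre : ‖∑ n ∈ F, ((lam n).re : ℝ) • x n‖ ≤ 2 * C :=
    norm_real_coeff_sum_le hC F _ (fun n => (Complex.abs_re_le_norm (lam n)).trans (hlam n))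
  have hCI : ∀ G : Finset ℕ, ‖∑ n ∈ G, Complex.I • x n‖ ≤ C := by
    intro G
    rw [← Finset.smul_sum, norm_smul]
    simpa using hC G
  have him : ‖∑ n ∈ F, ((lam n).im : ℝ) • (Complex.I • x n)‖ ≤ 2 * C :=
    norm_real_coeff_sum_le hCI F _ (fun n => (Complex.abs_im_le_norm (lam n)).trans (hlam n))
  calc ‖∑ n ∈ F, lam n • x n‖
      = ‖∑ n ∈ F, ((lam n).re • x n + (lam n).im • (Complex.I • x n))‖ := by
        congr 1; exact Finset.sum_congr rfl (fun n _ => hsplit n)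
  _ = ‖(∑ n ∈ F, (lam n).re • x n) + ∑ n ∈ F, (lam n).im • (Complex.I • x n)‖ := by
        rw [Finset.sum_add_distrib]
  _ ≤ ‖∑ n ∈ F, (lam n).re • x n‖ + ‖∑ n ∈ F, (lam n).im • (Complex.I • x n)‖ := norm_add_le _ _
  _ ≤ 2 * C + 2 * C := add_le_add hre him
  _ = 4 * C := by ring

lemma mult_term_apply (μ : ℕ → ℂ) (χ ξ : ℕ → H) (n : ℕ) (f : H) :
    ((μ n • innerSL ℂ (χ n)).smulRight (ξ n)) f = (μ n * ⟪χ n, f⟫) • ξ n := by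
  simp [ContinuousLinearMap.smulRight_apply, smul_eq_mul]

lemma mult_uniform_bound [CompleteSpace H] (μ : ℕ → ℂ) (χ ξ : ℕ → H)
    (hsum : ∀ f : H, Summable (fun n => (μ n * ⟪χ n, f⟫) • ξ n)) :
    ∃ K : ℝ, 0 ≤ K ∧ ∀ (F : Finset ℕ) (f : H),
      ‖∑ n ∈ F, (μ n * ⟪χ n, f⟫) • ξ n‖ ≤ K * ‖f‖ := by
  classical
  set T : Finset ℕ → H →L[ℂ] H :=
    fun F => ∑ n ∈ F, (μ n • innerSL ℂ (χ n)).smulRight (ξ n) with hT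
  have hTapp : ∀ F f, T F f = ∑ n ∈ F, (μ n * ⟪χ n, f⟫) • ξ n := by
    intro F f
    rw [hT]
    simp only [ContinuousLinearMap.coe_sum', Finset.sum_apply]
    exact Finset.sum_congr rfl (fun n _ => mult_term_apply μ χ ξ n f)
  have hpt : ∀ f : H, ∃ C, ∀ F, ‖T F f‖ ≤ C := by
    intro f
    obtain ⟨C, _, hC⟩ := bdd_subsums (hsum f)
    exact ⟨C, fun F => by rw [hTapp]; exact hC F⟩
  obtain ⟨K, hK⟩ := banach_steinhaus hpt
  refine ⟨max K 0, le_max_right _ _, fun F f => ?_⟩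
  calc ‖∑ n ∈ F, (μ n * ⟪χ n, f⟫) • ξ n‖ = ‖T F f‖ := by rw [hTapp]
  _ ≤ ‖T F‖ * ‖f‖ := (T F).le_opNorm f
  _ ≤ max K 0 * ‖f‖ := by
      have := hK F
      have h0 : ‖T F‖ ≤ max K 0 := this.trans (le_max_left _ _)
      exact mul_le_mul_of_nonneg_right h0 (norm_nonneg f)

noncomputable def multFun (μ : ℕ → ℂ) (χ ξ : ℕ → H) : H → H :=
  fun f => ∑' n, (μ n * ⟪χ n, f⟫) • ξ n

lemma mult_CLM [CompleteSpace H] (μ : ℕ → ℂ) (χ ξ : ℕ → H)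
    (hsum : ∀ f : H, Summable (fun n => (μ n * ⟪χ n, f⟫) • ξ n)) :
    ∃ A : H →L[ℂ] H, ⇑A = multFun μ χ ξ := by
  obtain ⟨K, hK0, hK⟩ := mult_uniform_bound μ χ ξ hsum
  have hlin : IsLinearMap ℂ (multFun μ χ ξ) := by
    constructor
    · intro f g
      have h1 : ∀ n, (μ n * ⟪χ n, f + g⟫) • ξ n
          = (μ n * ⟪χ n, f⟫) • ξ n + (μ n * ⟪χ n, g⟫) • ξ n := by
        intro n
        rw [inner_add_right, mul_add, add_smul]
      unfold multFun
      rw [tsum_congr h1]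
      exact Summable.tsum_add (hsum f) (hsum g)
    · intro c f
      have h1 : ∀ n, (μ n * ⟪χ n, c • f⟫) • ξ n
          = c • ((μ n * ⟪χ n, f⟫) • ξ n) := by
        intro n
        rw [inner_smul_right, smul_smul]
        congr 1
        ring
      unfold multFun
      rw [tsum_congr h1]
      exact Summable.tsum_const_smul c (hsum f)
  refine ⟨(hlin.mk' _).mkContinuous K (fun f => ?_), rfl⟩
  have hhas := (hsum f).hasSum
  have hten : Filter.Tendsto (fun F : Finset ℕ => ‖∑ n ∈ F, (μ n * ⟪χ n, f⟫) • ξ n‖)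
      Filter.atTop (nhds ‖multFun μ χ ξ f‖) := hhas.norm
  have : ∀ F : Finset ℕ, ‖∑ n ∈ F, (μ n * ⟪χ n, f⟫) • ξ n‖ ≤ K * ‖f‖ := fun F => hK F f
  exact le_of_tendsto hten (Filter.Eventually.of_forall this)

lemma cs_tsum {q b : ℕ → ℝ} (hq0 : ∀ n, 0 ≤ q n) (hb0 : ∀ n, 0 ≤ b n)
    (hq : Summable (fun n => q n ^ 2)) (hb : Summable (fun n => b n ^ 2)) :
    Summable (fun n => q n * b n) ∧
      ∑' n, q n * b n ≤ Real.sqrt (∑' n, q n ^ 2) * Real.sqrt (∑' n, b n ^ 2) := by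
  have hkey : ∀ F : Finset ℕ, ∑ n ∈ F, q n * b n
      ≤ Real.sqrt (∑' n, q n ^ 2) * Real.sqrt (∑' n, b n ^ 2) := by
    intro F
    have h1 : (∑ n ∈ F, q n * b n) ^ 2 ≤ (∑ n ∈ F, q n ^ 2) * ∑ n ∈ F, b n ^ 2 :=
      Finset.sum_mul_sq_le_sq_mul_sq F q b
    have h2 : (∑ n ∈ F, q n ^ 2) ≤ ∑' n, q n ^ 2 :=
      Summable.sum_le_tsum F (fun n _ => sq_nonneg _) hq
    have h3 : (∑ n ∈ F, b n ^ 2) ≤ ∑' n, b n ^ 2 :=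
      Summable.sum_le_tsum F (fun n _ => sq_nonneg _) hb
    have h4 : (∑ n ∈ F, q n * b n) ^ 2 ≤ (∑' n, q n ^ 2) * ∑' n, b n ^ 2 := by
      refine h1.trans (mul_le_mul h2 h3 (Finset.sum_nonneg (fun n _ => sq_nonneg _))
        ((Finset.sum_nonneg (fun n _ => sq_nonneg _)).trans h2))
    have h5 : 0 ≤ ∑ n ∈ F, q n * b n :=
      Finset.sum_nonneg (fun n _ => mul_nonneg (hq0 n) (hb0 n))
    
    calc ∑ n ∈ F, q n * b n = Real.sqrt ((∑ n ∈ F, q n * b n) ^ 2) :=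
          (Real.sqrt_sq h5).symm
    _ ≤ Real.sqrt ((∑' n, q n ^ 2) * ∑' n, b n ^ 2) := Real.sqrt_le_sqrt h4
    _ = Real.sqrt (∑' n, q n ^ 2) * Real.sqrt (∑' n, b n ^ 2) :=
          Real.sqrt_mul (tsum_nonneg (fun n => sq_nonneg _)) _
  have hs : Summable (fun n => q n * b n) :=
    summable_of_sum_le (fun n => mul_nonneg (hq0 n) (hb0 n)) hkey
  exact ⟨hs, Summable.tsum_le_of_sum_le hs hkey⟩

lemma coeff_sq_bound [CompleteSpace H] (φ : ℕ → H) {a : ℝ} (ha : 0 < a)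
    (hNBB : ∀ n, a ≤ ‖φ n‖) (μ : ℕ → ℂ) (χ : ℕ → H)
    (hsum : ∀ f : H, Summable (fun n => (μ n * ⟪χ n, f⟫) • φ n)) :
    ∃ D : ℝ, 0 ≤ D ∧ ∀ f : H,
      Summable (fun n => ‖μ n * ⟪χ n, f⟫‖ ^ 2) ∧
      ∑' n, ‖μ n * ⟪χ n, f⟫‖ ^ 2 ≤ D * ‖f‖ ^ 2 := by
  obtain ⟨K, hK0, hK⟩ := mult_uniform_bound μ χ φ hsum
  refine ⟨4 * K ^ 2 / a ^ 2, by positivity, fun f => ?_⟩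
  have hFin : ∀ F : Finset ℕ, ∑ n ∈ F, ‖μ n * ⟪χ n, f⟫‖ ^ 2
      ≤ (4 * K ^ 2 / a ^ 2) * ‖f‖ ^ 2 := by
    intro F
    have h1 : ∀ n, a ^ 2 * ‖μ n * ⟪χ n, f⟫‖ ^ 2 ≤ ‖(μ n * ⟪χ n, f⟫) • φ n‖ ^ 2 := by
      intro n
      rw [norm_smul]
      have h2 : a ≤ ‖φ n‖ := hNBB n
      rw [mul_pow]
      have h5 : a ^ 2 ≤ ‖φ n‖ ^ 2 := by nlinarith
      nlinarith [sq_nonneg (‖μ n * ⟪χ n, f⟫‖)]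
    have h4 : ∑ n ∈ F, ‖(μ n * ⟪χ n, f⟫) • φ n‖ ^ 2 ≤ 4 * (K * ‖f‖) ^ 2 :=
      sq_sum_le (mul_nonneg hK0 (norm_nonneg f)) (fun G => hK G f) F
    have h5 : a ^ 2 * ∑ n ∈ F, ‖μ n * ⟪χ n, f⟫‖ ^ 2
        ≤ ∑ n ∈ F, ‖(μ n * ⟪χ n, f⟫) • φ n‖ ^ 2 := by
      rw [Finset.mul_sum]
      exact Finset.sum_le_sum (fun n _ => h1 n)
    have ha2 : (0:ℝ) < a ^ 2 := by positivity
    rw [div_mul_eq_mul_div, le_div_iff₀ ha2]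
    calc (∑ n ∈ F, ‖μ n * ⟪χ n, f⟫‖ ^ 2) * a ^ 2
        = a ^ 2 * ∑ n ∈ F, ‖μ n * ⟪χ n, f⟫‖ ^ 2 := by ring
    _ ≤ 4 * (K * ‖f‖) ^ 2 := h5.trans h4
    _ = 4 * K ^ 2 * ‖f‖ ^ 2 := by ring
  have hs : Summable (fun n => ‖μ n * ⟪χ n, f⟫‖ ^ 2) :=
    summable_of_sum_le (fun n => sq_nonneg _) hFin
  exact ⟨hs, Summable.tsum_le_of_sum_le hs hFin⟩

lemma core [CompleteSpace H] (φ : ℕ → H) (hΦ : IsBessel φ) {a : ℝ} (ha : 0 < a)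
    (hNBB : ∀ n, a ≤ ‖φ n‖) (μ : ℕ → ℂ) (χ : ℕ → H)
    (hsum : ∀ f : H, Summable (fun n => (μ n * ⟪χ n, f⟫) • φ n))
    (hbij : Function.Bijective (multFun μ χ φ)) : IsFrame φ := by
  obtain ⟨B, hB, hBes⟩ := hΦ
  obtain ⟨D, hD0, hD⟩ := coeff_sq_bound φ ha hNBB μ χ hsum
  obtain ⟨A, hA⟩ := mult_CLM μ χ φ hsum
  have hbijA : Function.Bijective A := by rw [hA]; exact hbij
  obtain ⟨C, hC0, hC⟩ := A.exists_preimage_norm_le hbijA.surjective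
  refine ⟨1 / (D * C ^ 2 + 1), B, by positivity, hB, fun h => ?_⟩
  obtain ⟨hSs, hSub⟩ := hBes h
  refine ⟨hSs, ?_, hSub⟩
  set Sh := ∑' n, ‖(⟪φ n, h⟫ : ℂ)‖ ^ 2 with hSh
  have hSh0 : 0 ≤ Sh := tsum_nonneg (fun n => sq_nonneg _)
  -- get preimage
  obtain ⟨f, hfA, hfn⟩ := hC h
  obtain ⟨hqs, hqb⟩ := hD f
  set q : ℕ → ℝ := fun n => ‖μ n * ⟪χ n, f⟫‖ with hqdef
  set b : ℕ → ℝ := fun n => ‖(⟪φ n, h⟫ : ℂ)‖ with hbdef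
  obtain ⟨hcs, hcsle⟩ := cs_tsum (q := q) (b := b) (fun n => norm_nonneg _)
    (fun n => norm_nonneg _) hqs hSs
  -- ‖h‖² ≤ ∑' q*b
  have hkey : ‖h‖ ^ 2 ≤ ∑' n, q n * b n := by
    have h1 : (⟪h, h⟫ : ℂ) = ∑' n, (μ n * ⟪χ n, f⟫) * ⟪h, φ n⟫ := by
      have h2 : h = ∑' n, (μ n * ⟪χ n, f⟫) • φ n := by
        rw [← hfA, hA]; rfl
      calc (⟪h, h⟫ : ℂ) = ⟪h, ∑' n, (μ n * ⟪χ n, f⟫) • φ n⟫ := by rw [← h2]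
      _ = ∑' n, ⟪h, (μ n * ⟪χ n, f⟫) • φ n⟫ := (innerSL ℂ h).map_tsum (hsum f)
      _ = ∑' n, (μ n * ⟪χ n, f⟫) * ⟪h, φ n⟫ := by
          exact tsum_congr (fun n => inner_smul_right _ _ _)
    have h3 : ∀ n, ‖(μ n * ⟪χ n, f⟫) * ⟪h, φ n⟫‖ = q n * b n := by
      intro n
      rw [norm_mul, hqdef, hbdef]
      simp only []
      congr 1
      exact norm_inner_symm h (φ n)
    have h4 : Summable (fun n => (μ n * ⟪χ n, f⟫) * ⟪h, φ n⟫) := by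
      have := (innerSL ℂ h).summable (hsum f)
      refine this.congr (fun n => ?_)
      simp [inner_smul_right]
    calc ‖h‖ ^ 2 = ‖(⟪h, h⟫ : ℂ)‖ := by
          rw [inner_self_eq_norm_sq_to_K]
          rw [norm_pow]
          simp
    _ = ‖∑' n, (μ n * ⟪χ n, f⟫) * ⟪h, φ n⟫‖ := by rw [h1]
    _ ≤ ∑' n, ‖(μ n * ⟪χ n, f⟫) * ⟪h, φ n⟫‖ := norm_tsum_le_tsum_norm (by
          refine hcs.congr (fun n => ?_)
          rw [h3 n])
    _ = ∑' n, q n * b n := tsum_congr h3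
  have hchain : ‖h‖ ^ 2 ≤ Real.sqrt D * (C * ‖h‖) * Real.sqrt Sh := by
    refine hkey.trans (hcsle.trans ?_)
    have hle1 : Real.sqrt (∑' n, q n ^ 2) ≤ Real.sqrt (D * ‖f‖ ^ 2) :=
      Real.sqrt_le_sqrt hqb
    have heq : Real.sqrt (D * ‖f‖ ^ 2) = Real.sqrt D * ‖f‖ := by
      rw [Real.sqrt_mul hD0, Real.sqrt_sq (norm_nonneg f)]
    have hle2 : Real.sqrt D * ‖f‖ ≤ Real.sqrt D * (C * ‖h‖) := by
      have := hfn
      have hsD : 0 ≤ Real.sqrt D := Real.sqrt_nonneg _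
      nlinarith
    calc Real.sqrt (∑' n, q n ^ 2) * Real.sqrt (∑' n, b n ^ 2)
        ≤ (Real.sqrt D * (C * ‖h‖)) * Real.sqrt (∑' n, b n ^ 2) := by
          refine mul_le_mul_of_nonneg_right ((hle1.trans_eq heq).trans hle2)
            (Real.sqrt_nonneg _)
    _ = Real.sqrt D * (C * ‖h‖) * Real.sqrt Sh := rfl
  -- conclude
  rcases eq_or_ne h 0 with rfl | hne
  · simp [hSh0]
  · have hh0 : 0 < ‖h‖ := norm_pos_iff.mpr hne
    have hsqD : Real.sqrt D ^ 2 = D := Real.sq_sqrt hD0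
    have hsqS : Real.sqrt Sh ^ 2 = Sh := Real.sq_sqrt hSh0
    have h4 : ‖h‖ ^ 4 ≤ D * C ^ 2 * ‖h‖ ^ 2 * Sh := by
      have hsq := mul_self_le_mul_self (sq_nonneg ‖h‖) hchain
      calc ‖h‖ ^ 4 = ‖h‖ ^ 2 * ‖h‖ ^ 2 := by ring
      _ ≤ (Real.sqrt D * (C * ‖h‖) * Real.sqrt Sh)
            * (Real.sqrt D * (C * ‖h‖) * Real.sqrt Sh) := hsq
      _ = (Real.sqrt D ^ 2) * C ^ 2 * ‖h‖ ^ 2 * (Real.sqrt Sh ^ 2) := by ring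
      _ = D * C ^ 2 * ‖h‖ ^ 2 * Sh := by rw [hsqD, hsqS]
    have hc : (0:ℝ) < ‖h‖ ^ 2 := by positivity
    have h4' : ‖h‖ ^ 2 * ‖h‖ ^ 2 ≤ (D * C ^ 2 * Sh) * ‖h‖ ^ 2 := by
      calc ‖h‖ ^ 2 * ‖h‖ ^ 2 = ‖h‖ ^ 4 := by ring
      _ ≤ D * C ^ 2 * ‖h‖ ^ 2 * Sh := h4
      _ = (D * C ^ 2 * Sh) * ‖h‖ ^ 2 := by ring
    have h5' : ‖h‖ ^ 2 ≤ D * C ^ 2 * Sh := le_of_mul_le_mul_right h4' hc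
    have h6 : (0:ℝ) < D * C ^ 2 + 1 := by positivity
    rw [div_mul_eq_mul_div, one_mul, div_le_iff₀ h6]
    nlinarith [hSh0]

lemma wuc_bound {m : ℕ → ℂ} {φ ψ : ℕ → H} {K : ℝ}
    (hK : ∀ (F : Finset ℕ) (f : H), ‖∑ n ∈ F, (m n * ⟪φ n, f⟫) • ψ n‖ ≤ K * ‖f‖)
    (F : Finset ℕ) (u g : H) :
    ∑ n ∈ F, ‖m n * ⟪φ n, u⟫‖ * ‖(⟪ψ n, g⟫ : ℂ)‖ ≤ 4 * (K * ‖u‖) * ‖g‖ := by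
  classical
  set x : ℕ → H := fun n => (m n * ⟪φ n, u⟫) • ψ n with hx
  set z : ℕ → ℂ := fun n => ⟪x n, g⟫ with hz
  have hznorm : ∀ n, ‖z n‖ = ‖m n * ⟪φ n, u⟫‖ * ‖(⟪ψ n, g⟫ : ℂ)‖ := by
    intro n
    rw [hz]
    simp only [hx]
    rw [inner_smul_left, norm_mul, RCLike.norm_conj]
  set lam : ℕ → ℂ := fun n => if z n = 0 then 1 else (‖z n‖ : ℂ) / z n with hlam
  have hlam1 : ∀ n, ‖lam n‖ ≤ 1 := by
    intro n
    rw [hlam]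
    by_cases h : z n = 0
    · simp [h]
    · simp only [h, if_false]
      rw [norm_div, Complex.norm_real, norm_norm, div_self (norm_ne_zero_iff.mpr h)]
  have hlamz : ∀ n, lam n * z n = (‖z n‖ : ℂ) := by
    intro n
    rw [hlam]
    by_cases h : z n = 0
    · simp [h]
    · simp only [h, if_false]
      field_simp
  set w : H := ∑ n ∈ F, (starRingEnd ℂ (lam n)) • x n with hw
  have hsum : ((∑ n ∈ F, ‖z n‖ : ℝ) : ℂ) = ⟪w, g⟫ := by
    rw [hw, sum_inner]
    push_cast
    refine Finset.sum_congr rfl (fun n _ => ?_)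
    rw [inner_smul_left, starRingEnd_self_apply]
    exact (hlamz n).symm
  have hwle : ‖w‖ ≤ 4 * (K * ‖u‖) :=
    norm_complex_coeff_sum_le (fun G => hK G u) F _
      (fun n => by rw [RCLike.norm_conj]; exact hlam1 n)
  calc ∑ n ∈ F, ‖m n * ⟪φ n, u⟫‖ * ‖(⟪ψ n, g⟫ : ℂ)‖
      = ∑ n ∈ F, ‖z n‖ := by
        exact (Finset.sum_congr rfl (fun n _ => (hznorm n).symm))
  _ = ‖((∑ n ∈ F, ‖z n‖ : ℝ) : ℂ)‖ := by
        rw [Complex.norm_real, Real.norm_eq_abs, abs_of_nonneg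
          (Finset.sum_nonneg (fun n _ => norm_nonneg _))]
  _ = ‖(⟪w, g⟫ : ℂ)‖ := by rw [hsum]
  _ ≤ ‖w‖ * ‖g‖ := norm_inner_le_norm _ _
  _ ≤ 4 * (K * ‖u‖) * ‖g‖ := mul_le_mul_of_nonneg_right hwle (norm_nonneg g)

noncomputable def yterm (m : ℕ → ℂ) (φ ψ : ℕ → H) (g : H) : ℕ → H :=
  fun n => ((starRingEnd ℂ) (m n) * ⟪ψ n, g⟫) • φ n

lemma yterm_inner {m : ℕ → ℂ} {φ ψ : ℕ → H} (g : H) (u : H) (n : ℕ) :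
    ‖(⟪yterm m φ ψ g n, u⟫ : ℂ)‖ = ‖m n * ⟪φ n, u⟫‖ * ‖(⟪ψ n, g⟫ : ℂ)‖ := by
  unfold yterm
  rw [inner_smul_left, norm_mul, RCLike.norm_conj, norm_mul, RCLike.norm_conj, norm_mul]
  ring

lemma yterm_subsum_le {m : ℕ → ℂ} {φ ψ : ℕ → H} {K : ℝ} (g : H) (hK0 : 0 ≤ K)
    (hK : ∀ (F : Finset ℕ) (f : H), ‖∑ n ∈ F, (m n * ⟪φ n, f⟫) • ψ n‖ ≤ K * ‖f‖)
    (G : Finset ℕ) : ‖∑ n ∈ G, yterm m φ ψ g n‖ ≤ 4 * K * ‖g‖ := by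
  set u : H := ∑ n ∈ G, yterm m φ ψ g n with hu
  rcases eq_or_ne u 0 with h0 | hne
  · rw [h0, norm_zero]; positivity
  · have h1 : ‖u‖ ^ 2 ≤ 4 * (K * ‖u‖) * ‖g‖ := by
      calc ‖u‖ ^ 2 = ‖(⟪u, u⟫ : ℂ)‖ := by
            rw [inner_self_eq_norm_sq_to_K, norm_pow]; simp
      _ = ‖∑ n ∈ G, (⟪yterm m φ ψ g n, u⟫ : ℂ)‖ := by rw [hu, sum_inner]
      _ ≤ ∑ n ∈ G, ‖(⟪yterm m φ ψ g n, u⟫ : ℂ)‖ := norm_sum_le _ _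
      _ = ∑ n ∈ G, ‖m n * ⟪φ n, u⟫‖ * ‖(⟪ψ n, g⟫ : ℂ)‖ :=
            Finset.sum_congr rfl (fun n _ => yterm_inner g u n)
      _ ≤ 4 * (K * ‖u‖) * ‖g‖ := wuc_bound hK G u g
    have hu0 : 0 < ‖u‖ := norm_pos_iff.mpr hne
    nlinarith

lemma yterm_summable [CompleteSpace H] {m : ℕ → ℂ} {φ ψ : ℕ → H} {K : ℝ} (hK0 : 0 ≤ K)
    (hK : ∀ (F : Finset ℕ) (f : H), ‖∑ n ∈ F, (m n * ⟪φ n, f⟫) • ψ n‖ ≤ K * ‖f‖)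
    (g : H) : Summable (yterm m φ ψ g) := by
  classical
  rw [summable_iff_vanishing_norm]
  by_contra hcon
  push_neg at hcon
  obtain ⟨ε, hε, hblk⟩ := hcon
  choose T hTdis hTnorm using hblk
  set S : ℕ → Finset ℕ := fun k => Nat.rec ∅ (fun _ Sk => Sk ∪ T Sk) k with hS
  have hS0 : S 0 = ∅ := rfl
  have hSsucc : ∀ k, S (k + 1) = S k ∪ T (S k) := fun k => rfl
  have hmono : ∀ j k, j ≤ k → S j ⊆ S k := by
    intro j k hjk
    induction k with
    | zero => simpa [Nat.le_zero.mp hjk] using Finset.Subset.refl _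
    | succ k ih =>
      rcases Nat.lt_or_ge j (k+1) with h | h
      · exact (ih (Nat.lt_succ_iff.mp h)).trans (by rw [hSsucc]; exact Finset.subset_union_left)
      · have : j = k + 1 := le_antisymm hjk h
        rw [this]
    
  have hTsub : ∀ k, T (S k) ⊆ S (k + 1) := by
    intro k; rw [hSsucc]; exact Finset.subset_union_right
  have hdisj : ∀ j k, j < k → Disjoint (T (S j)) (T (S k)) := by
    intro j k hjk
    have h1 : T (S j) ⊆ S k := (hTsub j).trans (hmono _ _ hjk)
    exact (Finset.disjoint_of_subset_right h1 (hTdis (S k))).symm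
  -- blocks
  set z : ℕ → H := fun k => ∑ n ∈ T (S k), yterm m φ ψ g n with hzdef
  have hz_lb : ∀ k, ε ≤ ‖z k‖ := fun k => hTnorm (S k)
  -- bounded signed sums of blocks
  have hblksub : ∀ P : Finset ℕ, ‖∑ k ∈ P, z k‖ ≤ 4 * K * ‖g‖ := by
    intro P
    have hdisjP : (↑P : Set ℕ).PairwiseDisjoint (fun k => T (S k)) := by
      intro i _ j _ hij
      rcases lt_or_gt_of_ne hij with h | h
      · exact hdisj i j h
      · exact (hdisj j i h).symm
    have : ∑ k ∈ P, z k = ∑ n ∈ P.biUnion (fun k => T (S k)), yterm m φ ψ g n :=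
      (Finset.sum_biUnion hdisjP).symm
    rw [this]
    exact yterm_subsum_le g hK0 hK _
  -- contradiction via Orlicz signs
  obtain ⟨N, hN⟩ := exists_nat_gt ((8 * K * ‖g‖) ^ 2 / ε ^ 2)
  obtain ⟨σ, hσ, hle⟩ := exists_signs_sq (Finset.range N) z
  have h1 : (N : ℝ) * ε ^ 2 ≤ ∑ k ∈ Finset.range N, ‖z k‖ ^ 2 := by
    calc (N : ℝ) * ε ^ 2 = ∑ _k ∈ Finset.range N, ε ^ 2 := by
          rw [Finset.sum_const, Finset.card_range, nsmul_eq_mul]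
    _ ≤ ∑ k ∈ Finset.range N, ‖z k‖ ^ 2 :=
          Finset.sum_le_sum (fun k _ => by nlinarith [hz_lb k, hε.le, norm_nonneg (z k)])
  have h2 : ‖∑ k ∈ Finset.range N, σ k • z k‖ ≤ 8 * K * ‖g‖ := by
    rw [sign_split _ _ _ hσ]
    calc ‖_ - _‖ ≤ ‖∑ k ∈ (Finset.range N).filter (fun k => σ k = 1), z k‖
          + ‖∑ k ∈ (Finset.range N).filter (fun k => ¬ σ k = 1), z k‖ := norm_sub_le _ _
    _ ≤ 4 * K * ‖g‖ + 4 * K * ‖g‖ := add_le_add (hblksub _) (hblksub _)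
    _ = 8 * K * ‖g‖ := by ring
  have h3 : (N : ℝ) * ε ^ 2 ≤ (8 * K * ‖g‖) ^ 2 := by
    refine (h1.trans hle).trans ?_
    have h0 : (0:ℝ) ≤ ‖∑ k ∈ Finset.range N, σ k • z k‖ := norm_nonneg _
    nlinarith [h2]
  have h4 : (N : ℝ) ≤ (8 * K * ‖g‖) ^ 2 / ε ^ 2 := by
    rw [le_div_iff₀ (by positivity)]
    exact h3
  linarith

lemma clm_bij_adjoint_bij [CompleteSpace H] (A : H →L[ℂ] H)
    (hbij : Function.Bijective ⇑A) :
    Function.Bijective ⇑(ContinuousLinearMap.adjoint A) := by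
  set e := ContinuousLinearEquiv.ofBijective A
    (LinearMap.ker_eq_bot.mpr hbij.injective)
    (LinearMap.range_eq_top.mpr hbij.surjective) with he
  have hecoe : ⇑e = ⇑A := ContinuousLinearEquiv.coeFn_ofBijective _ _ _
  set B : H →L[ℂ] H := (e.symm : H →L[ℂ] H) with hB
  have hAB : A.comp B = ContinuousLinearMap.id ℂ H := by
    ext x
    simp only [ContinuousLinearMap.coe_comp', Function.comp_apply,
      ContinuousLinearMap.coe_id', id_eq, hB]
    rw [← hecoe]
    exact e.apply_symm_apply x
  have hBA : B.comp A = ContinuousLinearMap.id ℂ H := by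
    ext x
    simp only [ContinuousLinearMap.coe_comp', Function.comp_apply,
      ContinuousLinearMap.coe_id', id_eq, hB]
    rw [show A x = e x from (congrFun hecoe x).symm]
    exact e.symm_apply_apply x
  have h1 : (ContinuousLinearMap.adjoint B).comp (ContinuousLinearMap.adjoint A)
      = ContinuousLinearMap.id ℂ H := by
    rw [← ContinuousLinearMap.adjoint_comp, hAB, ContinuousLinearMap.adjoint_id]
  have h2 : (ContinuousLinearMap.adjoint A).comp (ContinuousLinearMap.adjoint B)
      = ContinuousLinearMap.id ℂ H := by
    rw [← ContinuousLinearMap.adjoint_comp, hBA, ContinuousLinearMap.adjoint_id]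
  constructor
  · refine Function.LeftInverse.injective
      (g := ⇑(ContinuousLinearMap.adjoint B)) (fun x => ?_)
    have := ContinuousLinearMap.ext_iff.mp h1 x
    simpa using this
  · refine Function.RightInverse.surjective
      (g := ⇑(ContinuousLinearMap.adjoint B)) (fun x => ?_)
    have := ContinuousLinearMap.ext_iff.mp h2 x
    simpa using this

lemma adjoint_eq_multFun [CompleteSpace H] (m : ℕ → ℂ) (φ ψ : ℕ → H)
    (hsum : ∀ f : H, Summable (fun n => (m n * ⟪φ n, f⟫) • ψ n))
    (A : H →L[ℂ] H) (hA : ⇑A = multFun m φ ψ)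
    (hysum : ∀ g : H, Summable (fun n => ((starRingEnd ℂ) (m n) * ⟪ψ n, g⟫) • φ n)) :
    ⇑(ContinuousLinearMap.adjoint A) = multFun (fun n => (starRingEnd ℂ) (m n)) ψ φ := by
  have key : ∀ (v : H) (c : ℕ → ℂ) (w : ℕ → H), Summable (fun n => c n • w n) →
      (⟪v, ∑' n, c n • w n⟫ : ℂ) = ∑' n, c n * ⟪v, w n⟫ := by
    intro v c w hs
    rw [show (⟪v, ∑' n, c n • w n⟫ : ℂ) = innerSL ℂ v (∑' n, c n • w n) from rfl,
      (innerSL ℂ v).map_tsum hs]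
    exact tsum_congr (fun n => inner_smul_right _ _ _)
  funext g
  refine ext_inner_left ℂ (fun f => ?_)
  rw [ContinuousLinearMap.adjoint_inner_right]
  have hLHS : (⟪f, multFun (fun n => (starRingEnd ℂ) (m n)) ψ φ g⟫ : ℂ)
      = ∑' n, ((starRingEnd ℂ) (m n) * ⟪ψ n, g⟫) * ⟪f, φ n⟫ :=
    key f (fun n => (starRingEnd ℂ) (m n) * ⟪ψ n, g⟫) φ (hysum g)
  have h1 : (⟪g, A f⟫ : ℂ) = ∑' n, (m n * ⟪φ n, f⟫) * ⟪g, ψ n⟫ := by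
    rw [hA]
    exact key g (fun n => m n * ⟪φ n, f⟫) ψ (hsum f)
  have hRHS : (⟪A f, g⟫ : ℂ) = ∑' n, ((starRingEnd ℂ) (m n) * ⟪ψ n, g⟫) * ⟪f, φ n⟫ := by
    rw [← inner_conj_symm, h1,
      show (starRingEnd ℂ) (∑' n, (m n * ⟪φ n, f⟫) * ⟪g, ψ n⟫)
        = star (∑' n, (m n * ⟪φ n, f⟫) * ⟪g, ψ n⟫) from rfl, tsum_star]
    refine tsum_congr (fun n => ?_)
    have e1 : (star ((m n * ⟪φ n, f⟫) * ⟪g, ψ n⟫) : ℂ)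
        = (starRingEnd ℂ) ((m n * ⟪φ n, f⟫) * ⟪g, ψ n⟫) := rfl
    rw [e1, map_mul, map_mul, inner_conj_symm, inner_conj_symm]
    ring
  rw [hRHS, hLHS]

end Aux

local notation "⟪" x ", " y "⟫" => @inner ℂ _ _ x y

/-- If Φ is a norm-bounded-below Bessel sequence which is not a frame, then
for any Ψ and m, neither M_{m,Φ,Ψ} nor M_{m,Ψ,Φ} can be both unconditionally convergent
and invertible (a bijection of H onto H). -/
theorem stmt_13
    {H : Type*} [NormedAddCommGroup H] [InnerProductSpace ℂ H] [CompleteSpace H]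
    (φ : ℕ → H)
    (hΦ : IsBessel φ)
    (hNBB : ∃ a : ℝ, 0 < a ∧ ∀ n, a ≤ ‖φ n‖)
    (hnf : ¬ IsFrame φ) :
    ∀ (ψ : ℕ → H) (m : ℕ → ℂ),
      ((∀ f : H, Summable (fun n => (m n * (inner ℂ (ψ n) f : ℂ)) • φ n)) →
        ¬ Function.Bijective (fun f : H => ∑' n, (m n * (inner ℂ (ψ n) f : ℂ)) • φ n)) ∧
      ((∀ f : H, Summable (fun n => (m n * (inner ℂ (φ n) f : ℂ)) • ψ n)) →
        ¬ Function.Bijective (fun f : H => ∑' n, (m n * (inner ℂ (φ n) f : ℂ)) • ψ n)) := by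
  classical
  obtain ⟨a, ha, hNBBa⟩ := hNBB
  intro ψ m
  constructor
  · intro hsum hbij
    exact hnf (core φ hΦ ha hNBBa m ψ hsum hbij)
  · intro hsum hbij
    obtain ⟨K, hK0, hK⟩ := mult_uniform_bound m φ ψ hsum
    have hysum : ∀ g : H, Summable
        (fun n => ((starRingEnd ℂ) (m n) * (inner ℂ (ψ n) g : ℂ)) • φ n) :=
      fun g => yterm_summable hK0 hK g
    obtain ⟨A, hA⟩ := mult_CLM m φ ψ hsum
    have hbijA : Function.Bijective ⇑A := by rw [hA]; exact hbij
    have hadj := adjoint_eq_multFun m φ ψ hsum A hA hysum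
    have hbijN : Function.Bijective (multFun (fun n => (starRingEnd ℂ) (m n)) ψ φ) := by
      rw [← hadj]
      exact clm_bij_adjoint_bij A hbijA
    exact hnf (core φ hΦ ha hNBBa (fun n => (starRingEnd ℂ) (m n)) ψ hysum hbijN)
end

section
/- Let (e_n)_{n∈ℕ} be an orthonormal basis of a separable infinite-dimensional complex Hilbert space H. Define φ : ℕ → H by φ(2n) = φ(2n+1) = e_n, and m : ℕ → ℂ by m(2n) = 1/(n+2) and m(2n+1) = 1 − 1/(n+2). Then for every f ∈ H the family (m_j ⟨f, φ_j⟩ φ_j)_{j∈ℕ} is unconditionally summable with ∑_j m_j ⟨f, φ_j⟩ φ_j = f; that is, the multiplier M_{m,Φ,Φ} equals the identity operator on H (in particular it is unconditionally convergent and invertible on H, even though m is bounded but not semi-normalized). -/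
/-- With φ(2n) = φ(2n+1) = e_n and m(2n) = 1/(n+2), m(2n+1) = 1 − 1/(n+2),
the multiplier M_{m,Φ,Φ} is unconditionally convergent on H and equals the identity. -/
theorem stmt_18
    {H : Type*} [NormedAddCommGroup H] [InnerProductSpace ℂ H] [CompleteSpace H]
    (e : HilbertBasis ℕ ℂ H)
    (φ : ℕ → H) (m : ℕ → ℂ)
    (hφ : ∀ n : ℕ, φ (2 * n) = e n ∧ φ (2 * n + 1) = e n)
    (hm : ∀ n : ℕ, m (2 * n) = 1 / ((n : ℂ) + 2) ∧ m (2 * n + 1) = 1 - 1 / ((n : ℂ) + 2)) :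
    ∀ f : H,
      Summable (fun j : ℕ => (m j * (inner ℂ (φ j) f : ℂ)) • φ j) ∧
      (∑' j : ℕ, (m j * (inner ℂ (φ j) f : ℂ)) • φ j) = f := by
  intro f
  set c : ℕ → ℂ := fun n => inner ℂ (e n) f with hc
  -- coefficient sequences
  set w0 : ℕ → ℂ := fun n => (1 / ((n : ℂ) + 2)) * c n with hw0
  set w1 : ℕ → ℂ := fun n => (1 - 1 / ((n : ℂ) + 2)) * c n with hw1
  have hcrep : ∀ n, c n = e.repr f n := fun n => (e.repr_apply_apply f n).symm
  have hclp : Summable fun n => ‖e.repr f n‖ ^ (2 : ENNReal).toReal :=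
    (lp.memℓp (e.repr f)).summable (by norm_num)
  have hne : ∀ n : ℕ, ((n : ℂ) + 2) ≠ 0 := by
    intro n
    have : ((n : ℂ) + 2) = ((n + 2 : ℕ) : ℂ) := by push_cast; ring
    rw [this]
    exact Nat.cast_ne_zero.2 (by omega)
  have hnorm : ∀ n : ℕ, ‖(n : ℂ) + 2‖ = (n : ℝ) + 2 := by
    intro n
    have : ((n : ℂ) + 2) = ((n + 2 : ℕ) : ℂ) := by push_cast; ring
    rw [this, Complex.norm_natCast]; push_cast; ring
  have hb0 : ∀ n : ℕ, ‖(1 : ℂ) / ((n : ℂ) + 2)‖ ≤ 1 := by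
    intro n
    rw [norm_div, norm_one, hnorm]
    rw [div_le_one (by positivity)]
    linarith [Nat.cast_nonneg (α := ℝ) n]
  have hb1 : ∀ n : ℕ, ‖1 - (1 : ℂ) / ((n : ℂ) + 2)‖ ≤ 1 := by
    intro n
    have : (1 : ℂ) - 1 / ((n : ℂ) + 2) = ((n : ℂ) + 1) / ((n : ℂ) + 2) := by
      have h := hne n
      field_simp
      ring
    rw [this, norm_div, hnorm]
    rw [div_le_one (by positivity)]
    have : ‖(n : ℂ) + 1‖ = (n : ℝ) + 1 := by
      have : ((n : ℂ) + 1) = ((n + 1 : ℕ) : ℂ) := by push_cast; ring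
      rw [this, Complex.norm_natCast]; push_cast; ring
    rw [this]; linarith
  -- membership in ℓ²
  have hmem : ∀ (w : ℕ → ℂ), (∀ n, ‖w n‖ ≤ ‖c n‖) → Memℓp w 2 := by
    intro w hw
    apply memℓp_gen
    apply Summable.of_nonneg_of_le (fun n => by positivity) _ hclp
    intro n
    apply Real.rpow_le_rpow (norm_nonneg _) _ (by norm_num)
    rw [← hcrep]
    exact hw n
  have hm0 : Memℓp w0 2 := by
    refine hmem w0 fun n => ?_
    rw [hw0, norm_mul]
    calc ‖(1 : ℂ) / ((n : ℂ) + 2)‖ * ‖c n‖ ≤ 1 * ‖c n‖ :=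
          mul_le_mul_of_nonneg_right (hb0 n) (norm_nonneg _)
      _ = ‖c n‖ := one_mul _
  have hm1 : Memℓp w1 2 := by
    refine hmem w1 fun n => ?_
    rw [hw1, norm_mul]
    calc ‖1 - (1 : ℂ) / ((n : ℂ) + 2)‖ * ‖c n‖ ≤ 1 * ‖c n‖ :=
          mul_le_mul_of_nonneg_right (hb1 n) (norm_nonneg _)
      _ = ‖c n‖ := one_mul _
  -- HasSum for the even and odd parts
  have hs0 : HasSum (fun n => w0 n • e n) (e.repr.symm ⟨w0, hm0⟩) := by
    simpa using e.hasSum_repr_symm ⟨w0, hm0⟩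
  have hs1 : HasSum (fun n => w1 n • e n) (e.repr.symm ⟨w1, hm1⟩) := by
    simpa using e.hasSum_repr_symm ⟨w1, hm1⟩
  have hgE : (fun n : ℕ => (m (2 * n) * (inner ℂ (φ (2 * n)) f : ℂ)) • φ (2 * n))
      = fun n => w0 n • e n := by
    funext n
    rw [(hφ n).1, (hm n).1]
  have hgO : (fun n : ℕ => (m (2 * n + 1) * (inner ℂ (φ (2 * n + 1)) f : ℂ)) • φ (2 * n + 1))
      = fun n => w1 n • e n := by
    funext n
    rw [(hφ n).2, (hm n).2]
  have hsE : HasSum (fun n : ℕ => (m (2 * n) * (inner ℂ (φ (2 * n)) f : ℂ)) • φ (2 * n))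
      (e.repr.symm ⟨w0, hm0⟩) := by rw [hgE]; exact hs0
  have hsO : HasSum (fun n : ℕ => (m (2 * n + 1) * (inner ℂ (φ (2 * n + 1)) f : ℂ)) • φ (2 * n + 1))
      (e.repr.symm ⟨w1, hm1⟩) := by rw [hgO]; exact hs1
  have htot : HasSum (fun j : ℕ => (m j * (inner ℂ (φ j) f : ℂ)) • φ j)
      (e.repr.symm ⟨w0, hm0⟩ + e.repr.symm ⟨w1, hm1⟩) :=
    HasSum.even_add_odd hsE hsO
  -- the two halves add up to f
  have hsum : HasSum (fun n => w0 n • e n + w1 n • e n)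
      (e.repr.symm ⟨w0, hm0⟩ + e.repr.symm ⟨w1, hm1⟩) := hs0.add hs1
  have hkey : (fun n => w0 n • e n + w1 n • e n) = fun n => e.repr f n • e n := by
    funext n
    rw [← add_smul, hw0, hw1, ← add_mul, ← hcrep]
    ring_nf
  rw [hkey] at hsum
  have hf : HasSum (fun n => e.repr f n • e n) f := e.hasSum_repr f
  have heq : e.repr.symm ⟨w0, hm0⟩ + e.repr.symm ⟨w1, hm1⟩ = f := hsum.unique hf
  rw [heq] at htot
  exact ⟨htot.summable, htot.tsum_eq⟩
end
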